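/- arXiv:1703.06178 — 5 statements merged into one kernel-verified Lean document; each statement's English description precedes it below -/
import Mathlib

section
/- With Φ the fundamental solution as above, if the function x ↦ φ₁₂(a,x) is strictly positive on the interval (a,b), then the function x ↦ φ₁₂(x,b) is strictly positive on (a,b). -/
open MeasureTheory intervalIntegral Set

lemma prodRule_core {f g : ℝ → ℝ} {c y : ℝ} (hcy : c ≤ y)
    (hf : IntegrableOn f (Ioc c y)) (hg : IntegrableOn g (Ioc c y)) :
    (∫ s in c..y, f s) * (∫ s in c..y, g s)
      = ∫ t in c..y, ((∫ s in c..t, f s) * g t + (∫ s in c..t, g s) * f t) := by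
  set μ := volume.restrict (Ioc c y) with hμ
  haveI : SFinite μ := by rw [hμ]; infer_instance
  have hIic : ∀ t ∈ Ioc c y, Iic t ∩ Ioc c y = Ioc c t := by
    intro t ht; ext s; simp only [mem_inter_iff, mem_Iic, mem_Ioc]
    exact ⟨fun ⟨h1, h2, _⟩ => ⟨h2, h1⟩, fun ⟨h1, h2⟩ => ⟨h2, h1, h2.trans ht.2⟩⟩
  have hres : ∀ t ∈ Ioc c y, ∀ (h : ℝ → ℝ), (∫ s in c..t, h s) = ∫ s, (Iic t).indicator h s ∂μ := by
    intro t ht h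
    rw [MeasureTheory.integral_indicator measurableSet_Iic, hμ,
      Measure.restrict_restrict measurableSet_Iic, hIic t ht, integral_of_le ht.1.le]
  have hIio : ∀ t ∈ Ioc c y, Iio t ∩ Ioc c y = Ioo c t := by
    intro t ht; ext s; simp only [mem_inter_iff, mem_Iio, mem_Ioo, mem_Ioc]
    exact ⟨fun ⟨h1, h2, _⟩ => ⟨h2, h1⟩, fun ⟨h1, h2⟩ => ⟨h2, h1, h2.le.trans ht.2⟩⟩
  have hres' : ∀ t ∈ Ioc c y, ∀ (h : ℝ → ℝ), (∫ s in c..t, h s) = ∫ s, (Iio t).indicator h s ∂μ := by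
    intro t ht h
    rw [MeasureTheory.integral_indicator measurableSet_Iio, hμ,
      Measure.restrict_restrict measurableSet_Iio, hIio t ht, integral_of_le ht.1.le,
      integral_Ioc_eq_integral_Ioo]
  set k1 : ℝ × ℝ → ℝ := fun z => ({z : ℝ × ℝ | z.1 ≤ z.2}).indicator (fun z => f z.1 * g z.2) z with hk1
  set k2 : ℝ × ℝ → ℝ := fun z => ({z : ℝ × ℝ | z.2 < z.1}).indicator (fun z => f z.1 * g z.2) z with hk2
  have hfμ : Integrable f μ := hf
  have hgμ : Integrable g μ := hg
  have hprod : Integrable (fun z : ℝ × ℝ => f z.1 * g z.2) (μ.prod μ) := hfμ.mul_prod hgμ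
  have hk1i : Integrable k1 (μ.prod μ) :=
    hprod.indicator (measurableSet_le measurable_fst measurable_snd)
  have hk2i : Integrable k2 (μ.prod μ) :=
    hprod.indicator (measurableSet_lt measurable_snd measurable_fst)
  have hsum : ∀ z : ℝ × ℝ, k1 z + k2 z = f z.1 * g z.2 := by
    intro z
    by_cases h : z.1 ≤ z.2
    · simp [hk1, hk2, indicator_of_mem, indicator_of_notMem, h, not_lt.2 h]
    · simp [hk1, hk2, indicator_of_notMem, h, lt_of_not_ge h]
  have hμvol : ∀ h : ℝ → ℝ, (∫ t in c..y, h t) = ∫ t, h t ∂μ := by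
    intro h; rw [integral_of_le hcy, hμ]
  have step1 : (∫ t in c..y, ((∫ s in c..t, f s) * g t + (∫ s in c..t, g s) * f t))
      = ∫ t, (∫ s, (k1 (s, t) + k2 (t, s)) ∂μ) ∂μ := by
    rw [hμvol, hμ]
    refine setIntegral_congr_fun measurableSet_Ioc (fun t ht => ?_)
    rw [hres t ht f, hres' t ht g, ← MeasureTheory.integral_mul_const,
      ← MeasureTheory.integral_mul_const, ← integral_add
        ((hfμ.indicator measurableSet_Iic).mul_const (g t))
        ((hgμ.indicator measurableSet_Iio).mul_const (f t)), hμ]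
    refine setIntegral_congr_fun measurableSet_Ioc (fun s _ => ?_)
    have e1 : k1 (s, t) = (Iic t).indicator f s * g t := by
      by_cases h : s ≤ t
      · simp [hk1, indicator_of_mem, h]
      · simp [hk1, indicator_of_notMem, h]
    have e2 : k2 (t, s) = (Iio t).indicator g s * f t := by
      by_cases h : s < t
      · simp [hk2, indicator_of_mem, h, mul_comm]
      · simp [hk2, indicator_of_notMem, h]
    rw [e1, e2]
  have huncurry : Integrable (Function.uncurry fun t s => k1 (s, t) + k2 (t, s)) (μ.prod μ) := by
    have h1 : Integrable (k1 ∘ Prod.swap) (μ.prod μ) := hk1i.swap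
    have : (Function.uncurry fun t s => k1 (s, t) + k2 (t, s))
        = fun z : ℝ × ℝ => (k1 ∘ Prod.swap) z + k2 z := by
      funext z; rfl
    rw [this]; exact h1.add hk2i
  have step2 : (∫ t, (∫ s, (k1 (s, t) + k2 (t, s)) ∂μ) ∂μ)
      = ∫ z : ℝ × ℝ, (k1 z.swap + k2 z) ∂(μ.prod μ) :=
    integral_integral huncurry
  have step3 : (∫ z : ℝ × ℝ, (k1 z.swap + k2 z) ∂(μ.prod μ))
      = (∫ s, f s ∂μ) * (∫ s, g s ∂μ) := by
    have h3 : Integrable (fun z : ℝ × ℝ => k1 z.swap) (μ.prod μ) := hk1i.swap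
    rw [integral_add h3 hk2i]
    have h4 : (∫ z : ℝ × ℝ, k1 z.swap ∂(μ.prod μ)) = ∫ z : ℝ × ℝ, k1 z ∂(μ.prod μ) :=
      integral_prod_swap k1
    rw [h4, ← integral_add hk1i hk2i]
    have h5 : (∫ z : ℝ × ℝ, (k1 z + k2 z) ∂(μ.prod μ))
        = ∫ z : ℝ × ℝ, f z.1 * g z.2 ∂(μ.prod μ) := by
      congr 1; funext z; exact hsum z
    rw [h5, integral_prod_mul]
  rw [step1, step2, step3, hμvol f, hμvol g]

lemma integrableOn_of_bound {φ ψ : ℝ → ℝ} {s : Set ℝ} (hs : MeasurableSet s)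
    (hφ : AEStronglyMeasurable φ (volume.restrict s))
    (hψ : IntegrableOn ψ s) (h : ∀ t ∈ s, ‖φ t‖ ≤ ψ t) : IntegrableOn φ s :=
  Integrable.mono' hψ hφ ((ae_restrict_iff' hs).mpr (ae_of_all _ h))

lemma exists_bound_abs {F : ℝ → ℝ} {c y : ℝ} (hF : ContinuousOn F (Icc c y)) :
    ∃ M : ℝ, 0 ≤ M ∧ ∀ t ∈ Icc c y, ‖F t‖ ≤ M := by
  obtain ⟨M, hM⟩ := isCompact_Icc.exists_bound_of_continuousOn hF
  by_cases hcy : c ≤ y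
  · exact ⟨max M 0, le_max_right _ _,
      fun t ht => (hM t ht).trans (le_max_left _ _)⟩
  · exact ⟨0, le_rfl, fun t ht => absurd (ht.1.trans ht.2) hcy⟩

lemma primitive_continuousOn {f : ℝ → ℝ} {c y : ℝ} (hcy : c ≤ y)
    (hf : IntegrableOn f (Icc c y)) :
    ContinuousOn (fun t => ∫ s in c..t, f s) (Icc c y) := by
  have := intervalIntegral.continuousOn_primitive_interval (μ := volume) (a := c) (b := y)
    (by rwa [uIcc_of_le hcy])
  rwa [uIcc_of_le hcy] at this

lemma primitive_mul_integrableOn {f g : ℝ → ℝ} {c y : ℝ} (hcy : c ≤ y)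
    (hf : IntegrableOn f (Icc c y)) (hg : IntegrableOn g (Icc c y)) :
    IntegrableOn (fun t => (∫ s in c..t, f s) * g t) (Icc c y) := by
  have hFc := primitive_continuousOn hcy hf
  obtain ⟨M, hM0, hM⟩ := exists_bound_abs hFc
  refine integrableOn_of_bound measurableSet_Icc ?_ (hg.norm.const_mul M) ?_
  · exact ((hFc.aemeasurable measurableSet_Icc).aestronglyMeasurable).mul
      hg.aestronglyMeasurable
  · intro t ht
    rw [norm_mul]
    exact mul_le_mul (hM t ht) le_rfl (norm_nonneg _) hM0

lemma prodRule {f g F G : ℝ → ℝ} {c d F0 G0 : ℝ}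
    (hf : IntegrableOn f (Icc c d)) (hg : IntegrableOn g (Icc c d))
    (hF : ∀ y ∈ Icc c d, F y = F0 + ∫ s in c..y, f s)
    (hG : ∀ y ∈ Icc c d, G y = G0 + ∫ s in c..y, g s) :
    ∀ y ∈ Icc c d, F y * G y = F0 * G0 + ∫ t in c..y, (F t * g t + G t * f t) := by
  intro y hy
  have hcy : c ≤ y := hy.1
  have hsub : Icc c y ⊆ Icc c d := Icc_subset_Icc le_rfl hy.2
  have hf' : IntegrableOn f (Icc c y) := hf.mono_set hsub
  have hg' : IntegrableOn g (Icc c y) := hg.mono_set hsub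
  have hfI : IntervalIntegrable f volume c y := hf'|> (intervalIntegrable_iff_integrableOn_Icc_of_le hcy).mpr
  have hgI : IntervalIntegrable g volume c y := hg'|> (intervalIntegrable_iff_integrableOn_Icc_of_le hcy).mpr
  have hFgi : IntervalIntegrable (fun t => (∫ s in c..t, f s) * g t) volume c y :=
    (primitive_mul_integrableOn hcy hf' hg')|> (intervalIntegrable_iff_integrableOn_Icc_of_le hcy).mpr
  have hGfi : IntervalIntegrable (fun t => (∫ s in c..t, g s) * f t) volume c y :=
    (primitive_mul_integrableOn hcy hg' hf')|> (intervalIntegrable_iff_integrableOn_Icc_of_le hcy).mpr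
  have congrInt : (∫ t in c..y, (F t * g t + G t * f t))
      = (∫ t in c..y, (F0 * g t + G0 * f t))
        + ∫ t in c..y, ((∫ s in c..t, f s) * g t + (∫ s in c..t, g s) * f t) := by
    rw [← integral_add ((hgI.const_mul F0).add (hfI.const_mul G0)) (hFgi.add hGfi)]
    refine integral_congr (fun t ht => ?_)
    rw [uIcc_of_le hcy] at ht
    have hFt := hF t (hsub ht)
    have hGt := hG t (hsub ht)
    rw [hFt, hGt]; ring
  rw [hF y hy, hG y hy, congrInt,
    ← prodRule_core hcy (hf'.mono_set Ioc_subset_Icc_self) (hg'.mono_set Ioc_subset_Icc_self),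
    integral_add (hgI.const_mul F0) (hfI.const_mul G0),
    intervalIntegral.integral_const_mul, intervalIntegral.integral_const_mul]
  ring

lemma kernel_mul_cont_integrableOn {k G : ℝ → ℝ} {c d : ℝ}
    (hk : IntegrableOn k (Icc c d)) (hG : ContinuousOn G (Icc c d)) :
    IntegrableOn (fun t => k t * G t) (Icc c d) := by
  obtain ⟨M, hM0, hM⟩ := exists_bound_abs hG
  refine integrableOn_of_bound measurableSet_Icc
    (hk.aestronglyMeasurable.mul ((hG.aemeasurable measurableSet_Icc).aestronglyMeasurable))
    (hk.norm.mul_const M) (fun t ht => ?_)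
  rw [norm_mul]
  exact mul_le_mul le_rfl (hM t ht) (norm_nonneg _) (norm_nonneg _)

lemma kernel_pow {k : ℝ → ℝ} {c d : ℝ} (hcd : c ≤ d) (hk : IntegrableOn k (Icc c d)) :
    ∀ m : ℕ, ∀ y ∈ Icc c d,
      ((m : ℝ) + 1) * ∫ t in c..y, k t * (∫ s in c..t, k s) ^ m
        = (∫ s in c..y, k s) ^ (m + 1) := by
  have hKc : ContinuousOn (fun t => ∫ s in c..t, k s) (Icc c d) := primitive_continuousOn hcd hk
  intro m
  induction m with
  | zero =>
    intro y hy
    simp only [Nat.cast_zero, zero_add, one_mul, pow_zero, mul_one, pow_one]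
  | succ m ih =>
    intro y hy
    have hgi : IntegrableOn (fun t => ((m : ℝ) + 1) * (k t * (∫ s in c..t, k s) ^ m)) (Icc c d) :=
      (kernel_mul_cont_integrableOn hk (hKc.pow m)).const_mul _
    have hG : ∀ y ∈ Icc c d, (∫ s in c..y, k s) ^ (m + 1)
        = 0 + ∫ t in c..y, ((m : ℝ) + 1) * (k t * (∫ s in c..t, k s) ^ m) := by
      intro y hy
      rw [intervalIntegral.integral_const_mul, zero_add, ih y hy]
    have hF : ∀ y ∈ Icc c d, (∫ s in c..y, k s) = 0 + ∫ s in c..y, k s := by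
      intro y _; rw [zero_add]
    have := prodRule hk hgi hF hG y hy
    rw [zero_mul, zero_add] at this
    have hcongr : (∫ t in c..y, ((∫ s in c..t, k s) * (((m : ℝ) + 1) * (k t * (∫ s in c..t, k s) ^ m))
          + (∫ s in c..t, k s) ^ (m + 1) * k t))
        = ∫ t in c..y, ((m : ℝ) + 2) * (k t * (∫ s in c..t, k s) ^ (m + 1)) := by
      refine integral_congr (fun t _ => ?_)
      ring
    rw [hcongr, intervalIntegral.integral_const_mul] at this
    have hpow : (∫ s in c..y, k s) * (∫ s in c..y, k s) ^ (m + 1)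
        = (∫ s in c..y, k s) ^ (m + 2) := (pow_succ' _ _).symm
    rw [hpow] at this
    push_cast
    push_cast at this
    have h22 : ((m : ℝ) + 1 + 1) = (m : ℝ) + 2 := by ring
    rw [h22, show m + 1 + 1 = m + 2 from rfl]
    linarith [this]
lemma gronwall {k w : ℝ → ℝ} {c d B : ℝ} (hcd : c ≤ d)
    (hk : IntegrableOn k (Icc c d)) (hk0 : ∀ t, 0 ≤ k t)
    (hw : ContinuousOn w (Icc c d)) (hw0 : ∀ t ∈ Icc c d, 0 ≤ w t) (hB : 0 ≤ B)
    (h : ∀ y ∈ Icc c d, w y ≤ B + ∫ t in c..y, k t * w t) :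
    ∀ y ∈ Icc c d, w y ≤ B * Real.exp (∫ t in c..y, k t) := by
  set K : ℝ → ℝ := fun t => ∫ s in c..t, k s with hKdef
  have hKc : ContinuousOn K (Icc c d) := primitive_continuousOn hcd hk
  have hK0 : ∀ y ∈ Icc c d, 0 ≤ K y := fun y hy =>
    intervalIntegral.integral_nonneg hy.1 (fun t _ => hk0 t)
  obtain ⟨A, hA0, hA⟩ := exists_bound_abs hw
  have key : ∀ n : ℕ, ∀ y ∈ Icc c d,
      w y ≤ B * (∑ j ∈ Finset.range n, K y ^ j / (Nat.factorial j : ℝ))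
        + A * (K y ^ n / (Nat.factorial n : ℝ)) := by
    intro n
    induction n with
    | zero =>
      intro y hy
      simp only [Finset.range_zero, Finset.sum_empty, mul_zero, zero_add, pow_zero,
        Nat.factorial_zero, Nat.cast_one, div_one, mul_one]
      exact (le_abs_self _).trans (hA y hy)
    | succ n ih =>
      intro y hy
      have hcy : c ≤ y := hy.1
      have hsub : Icc c y ⊆ Icc c d := Icc_subset_Icc le_rfl hy.2
      -- integrability facts
      have hkwi : IntegrableOn (fun t => k t * w t) (Icc c d) :=
        kernel_mul_cont_integrableOn hk hw
      have hSc : ContinuousOn (fun t => B * (∑ j ∈ Finset.range n, K t ^ j / (Nat.factorial j : ℝ))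
          + A * (K t ^ n / (Nat.factorial n : ℝ))) (Icc c d) := by
        refine ContinuousOn.add (ContinuousOn.mul continuousOn_const ?_)
          (ContinuousOn.mul continuousOn_const ((hKc.pow n).div_const _))
        exact continuousOn_finset_sum _ (fun j _ => (hKc.pow j).div_const _)
      have hkSi : IntegrableOn (fun t => k t * (B * (∑ j ∈ Finset.range n, K t ^ j / (Nat.factorial j : ℝ))
          + A * (K t ^ n / (Nat.factorial n : ℝ)))) (Icc c d) :=
        kernel_mul_cont_integrableOn hk hSc
      have step1 : w y ≤ B + ∫ t in c..y, k t * (B * (∑ j ∈ Finset.range n, K t ^ j / (Nat.factorial j : ℝ))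
          + A * (K t ^ n / (Nat.factorial n : ℝ))) := by
        refine (h y hy).trans (add_le_add_right ?_ B)
        refine intervalIntegral.integral_mono_on hcy
          ((hkwi.mono_set hsub) |> (intervalIntegrable_iff_integrableOn_Icc_of_le hcy).mpr)
          ((hkSi.mono_set hsub) |> (intervalIntegrable_iff_integrableOn_Icc_of_le hcy).mpr)
          (fun t ht => ?_)
        exact mul_le_mul_of_nonneg_left (ih t (hsub ht)) (hk0 t)
      -- compute the integral
      have expand : ∀ t ∈ uIcc c y,
          k t * (B * (∑ j ∈ Finset.range n, K t ^ j / (Nat.factorial j : ℝ))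
            + A * (K t ^ n / (Nat.factorial n : ℝ)))
          = (∑ j ∈ Finset.range n, (B / (Nat.factorial j : ℝ)) * (k t * K t ^ j))
            + (A / (Nat.factorial n : ℝ)) * (k t * K t ^ n) := by
        intro t _
        rw [mul_add]
        refine congrArg₂ (· + ·) ?_ (by ring)
        rw [Finset.mul_sum, Finset.mul_sum]
        exact Finset.sum_congr rfl (fun j _ => by ring)
      have hterm : ∀ j : ℕ, IntervalIntegrable (fun t => (B / (Nat.factorial j : ℝ)) * (k t * K t ^ j)) volume c y := by
        intro j
        refine (intervalIntegrable_iff_integrableOn_Icc_of_le hcy).mpr ?_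
        exact ((kernel_mul_cont_integrableOn hk (hKc.pow j)).mono_set hsub).const_mul _
      have hterm' : ∀ j : ℕ, IntervalIntegrable (fun t => (A / (Nat.factorial j : ℝ)) * (k t * K t ^ j)) volume c y := by
        intro j
        refine (intervalIntegrable_iff_integrableOn_Icc_of_le hcy).mpr ?_
        exact ((kernel_mul_cont_integrableOn hk (hKc.pow j)).mono_set hsub).const_mul _
      have hsumI : IntervalIntegrable
          (fun t => ∑ j ∈ Finset.range n, (B / (Nat.factorial j : ℝ)) * (k t * K t ^ j)) volume c y := by
        refine (intervalIntegrable_iff_integrableOn_Icc_of_le hcy).mpr ?_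
        exact integrable_finset_sum _ (fun j _ =>
          ((kernel_mul_cont_integrableOn hk (hKc.pow j)).mono_set hsub).const_mul _)
      have hKpow : ∀ j : ℕ, (∫ t in c..y, k t * K t ^ j) = K y ^ (j + 1) / ((j : ℝ) + 1) := by
        intro j
        have := kernel_pow hcd hk j y hy
        have hj : ((j : ℝ) + 1) ≠ 0 := by positivity
        field_simp
        linarith [this]
      have step2 : (∫ t in c..y, k t * (B * (∑ j ∈ Finset.range n, K t ^ j / (Nat.factorial j : ℝ))
            + A * (K t ^ n / (Nat.factorial n : ℝ))))
          = (∑ j ∈ Finset.range n, (B / (Nat.factorial j : ℝ)) * (K y ^ (j + 1) / ((j : ℝ) + 1)))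
            + (A / (Nat.factorial n : ℝ)) * (K y ^ (n + 1) / ((n : ℝ) + 1)) := by
        rw [integral_congr expand, intervalIntegral.integral_add hsumI (hterm' n),
          intervalIntegral.integral_finset_sum (fun j _ => hterm j),
          intervalIntegral.integral_const_mul, hKpow n]
        congr 1
        refine Finset.sum_congr rfl (fun j _ => ?_)
        rw [intervalIntegral.integral_const_mul, hKpow j]
      have algebra : B + ((∑ j ∈ Finset.range n, (B / (Nat.factorial j : ℝ)) * (K y ^ (j + 1) / ((j : ℝ) + 1)))
            + (A / (Nat.factorial n : ℝ)) * (K y ^ (n + 1) / ((n : ℝ) + 1)))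
          = B * (∑ j ∈ Finset.range (n + 1), K y ^ j / (Nat.factorial j : ℝ))
            + A * (K y ^ (n + 1) / (Nat.factorial (n + 1) : ℝ)) := by
        rw [Finset.sum_range_succ' (fun j => K y ^ j / (Nat.factorial j : ℝ)) n]
        simp only [pow_zero, Nat.factorial_zero, Nat.cast_one, div_one]
        rw [mul_add, mul_one, Finset.mul_sum]
        have hfact : ∀ j : ℕ, (Nat.factorial (j + 1) : ℝ) = ((j : ℝ) + 1) * (Nat.factorial j : ℝ) := by
          intro j
          rw [Nat.factorial_succ]
          push_cast
          ring
        have e1 : ∀ j : ℕ, (B / (Nat.factorial j : ℝ)) * (K y ^ (j + 1) / ((j : ℝ) + 1))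
            = B * (K y ^ (j + 1) / (Nat.factorial (j + 1) : ℝ)) := by
          intro j
          rw [hfact j]
          have h1 : (Nat.factorial j : ℝ) ≠ 0 := Nat.cast_ne_zero.mpr (Nat.factorial_ne_zero j)
          have h2 : ((j : ℝ) + 1) ≠ 0 := by positivity
          field_simp
        have e2 : (A / (Nat.factorial n : ℝ)) * (K y ^ (n + 1) / ((n : ℝ) + 1))
            = A * (K y ^ (n + 1) / (Nat.factorial (n + 1) : ℝ)) := by
          rw [hfact n]
          have h1 : (Nat.factorial n : ℝ) ≠ 0 := Nat.cast_ne_zero.mpr (Nat.factorial_ne_zero n)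
          have h2 : ((n : ℝ) + 1) ≠ 0 := by positivity
          field_simp
        rw [Finset.sum_congr rfl (fun j _ => e1 j), e2]
        ring
      calc w y ≤ B + ∫ t in c..y, k t * (B * (∑ j ∈ Finset.range n, K t ^ j / (Nat.factorial j : ℝ))
          + A * (K t ^ n / (Nat.factorial n : ℝ))) := step1
        _ = B * (∑ j ∈ Finset.range (n + 1), K y ^ j / (Nat.factorial j : ℝ))
            + A * (K y ^ (n + 1) / (Nat.factorial (n + 1) : ℝ)) := by rw [step2]; exact algebra
  intro y hy
  have hlim : Filter.Tendsto (fun n : ℕ => B * Real.exp (K y) + A * (K y ^ n / (Nat.factorial n : ℝ)))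
      Filter.atTop (nhds (B * Real.exp (K y))) := by
    have h0 : Filter.Tendsto (fun n : ℕ => K y ^ n / (Nat.factorial n : ℝ)) Filter.atTop (nhds 0) :=
      FloorSemiring.tendsto_pow_div_factorial_atTop (K y)
    have := (h0.const_mul A)
    rw [mul_zero] at this
    simpa using Filter.Tendsto.const_add (B * Real.exp (K y)) this
  refine ge_of_tendsto' hlim (fun n => ?_)
  refine (key n y hy).trans (add_le_add_left ?_ _)
  refine mul_le_mul_of_nonneg_left ?_ hB
  exact Real.sum_le_exp_of_nonneg (hK0 y hy) n

lemma regularity {p q u v : ℝ → ℝ} {c b : ℝ} (hcb : c ≤ b)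
    (hpm : Measurable p) (hqm : Measurable q)
    (hpi : IntegrableOn p (Icc c b)) (hqi : IntegrableOn q (Icc c b))
    (hu : ∀ y ∈ Icc c b, u y = ∫ z in c..y, v z)
    (hv : ∀ y ∈ Icc c b, v y = 1 + ∫ z in c..y, (q z * u z - p z * v z)) :
    ContinuousOn u (Icc c b) ∧ ContinuousOn v (Icc c b) ∧
      IntegrableOn v (Icc c b) ∧ IntegrableOn (fun z => q z * u z - p z * v z) (Icc c b) := by
  set g : ℝ → ℝ := fun z => q z * u z - p z * v z with hgdef
  set k : ℝ → ℝ := fun z => 1 + |p z| + |q z| with hkdef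
  have hk0 : ∀ t, 0 ≤ k t := fun t => by positivity
  have hki : IntegrableOn k (Icc c b) := by
    refine ((integrableOn_const_iff enorm_ne_top).mpr (Or.inr ?_)).add hpi.norm |>.add hqi.norm
    exact measure_Icc_lt_top
  set w : ℝ → ℝ := fun t => |u t| + |v t| with hwdef
  set M : ℝ := Real.exp (∫ t in c..b, k t) with hMdef
  have hM0 : 0 ≤ M := Real.exp_nonneg _
  -- the set of good endpoints
  set T : Set ℝ := {d | d ∈ Icc c b ∧ IntervalIntegrable g volume c d} with hTdef
  have hTc : c ∈ T := ⟨⟨le_rfl, hcb⟩, IntervalIntegrable.refl⟩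
  have hTbdd : BddAbove T := ⟨b, fun t ht => ht.1.2⟩
  have hTdown : ∀ d ∈ T, ∀ e ∈ Icc c d, e ∈ T := by
    intro d hd e he
    refine ⟨⟨he.1, he.2.trans hd.1.2⟩, hd.2.mono_set ?_⟩
    rw [uIcc_of_le he.1, uIcc_of_le (he.1.trans he.2)]
    exact Icc_subset_Icc le_rfl he.2
  set y' : ℝ := sSup T with hy'def
  have hy'1 : c ≤ y' := le_csSup hTbdd hTc
  have hy'2 : y' ≤ b := csSup_le ⟨c, hTc⟩ (fun t ht => ht.1.2)
  -- continuity on good intervals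
  have contOn : ∀ d ∈ T, ContinuousOn v (Icc c d) ∧ ContinuousOn u (Icc c d) := by
    intro d hd
    have hcd : c ≤ d := hd.1.1
    have hsub : Icc c d ⊆ Icc c b := Icc_subset_Icc le_rfl hd.1.2
    have hgprim : ContinuousOn (fun y => ∫ z in c..y, g z) (Icc c d) := by
      have := intervalIntegral.continuousOn_primitive_interval' hd.2 left_mem_uIcc
      rwa [uIcc_of_le hcd] at this
    have hvc : ContinuousOn v (Icc c d) := by
      refine ContinuousOn.congr (f := fun y => (1:ℝ) + ∫ z in c..y, g z)
        (continuousOn_const.add hgprim) ?_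
      intro y hy; exact hv y (hsub hy)
    have hvint : IntegrableOn v (Icc c d) := hvc.integrableOn_Icc
    have huc : ContinuousOn u (Icc c d) := by
      refine (primitive_continuousOn hcd hvint).congr ?_
      intro y hy; exact hu y (hsub hy)
    exact ⟨hvc, huc⟩
  -- uniform bound on good intervals
  have bound : ∀ d ∈ T, ∀ y ∈ Icc c d, w y ≤ M := by
    intro d hd y hy
    have hcd : c ≤ d := hd.1.1
    have hsub : Icc c d ⊆ Icc c b := Icc_subset_Icc le_rfl hd.1.2
    obtain ⟨hvc, huc⟩ := contOn d hd
    have hwc : ContinuousOn w (Icc c d) := (huc.abs).add (hvc.abs)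
    have hkid : IntegrableOn k (Icc c d) := hki.mono_set hsub
    have hvint : IntegrableOn v (Icc c d) := hvc.integrableOn_Icc
    have hkw : IntegrableOn (fun t => k t * w t) (Icc c d) :=
      kernel_mul_cont_integrableOn hkid hwc
    have key : ∀ y2 ∈ Icc c d, w y2 ≤ 1 + ∫ t in c..y2, k t * w t := by
      clear hy y
      intro y hy
      have hcy : c ≤ y := hy.1
      have hsub2 : Icc c y ⊆ Icc c d := Icc_subset_Icc le_rfl hy.2
      have hvI : IntervalIntegrable v volume c y :=
        (intervalIntegrable_iff_integrableOn_Icc_of_le hcy).mpr (hvint.mono_set hsub2)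
      have hgI : IntervalIntegrable g volume c y := hd.2.mono_set (by
        rw [uIcc_of_le hcy, uIcc_of_le hcd]; exact hsub2)
      have hkwI : IntervalIntegrable (fun t => k t * w t) volume c y :=
        (intervalIntegrable_iff_integrableOn_Icc_of_le hcy).mpr (hkw.mono_set hsub2)
      have habsvg : IntervalIntegrable (fun t => |v t| + |g t|) volume c y :=
        hvI.abs.add hgI.abs
      have h1 : |u y| ≤ ∫ t in c..y, |v t| := by
        rw [hu y (hsub hy)]
        exact intervalIntegral.abs_integral_le_integral_abs hcy
      have h2 : |v y| ≤ 1 + ∫ t in c..y, |g t| := by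
        rw [hv y (hsub hy)]
        refine (abs_add_le _ _).trans ?_
        rw [abs_one]
        exact add_le_add_right (intervalIntegral.abs_integral_le_integral_abs hcy) 1
      have h3 : (∫ t in c..y, |v t|) + (∫ t in c..y, |g t|) ≤ ∫ t in c..y, k t * w t := by
        rw [← intervalIntegral.integral_add hvI.abs hgI.abs]
        refine intervalIntegral.integral_mono_on hcy habsvg hkwI (fun t _ => ?_)
        have e1 : |g t| ≤ |q t| * |u t| + |p t| * |v t| := by
          calc |g t| ≤ |q t * u t| + |p t * v t| := abs_sub _ _
            _ = |q t| * |u t| + |p t| * |v t| := by rw [abs_mul, abs_mul]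
        have e2 : 0 ≤ |u t| := abs_nonneg _
        have e3 : 0 ≤ |v t| := abs_nonneg _
        have e4 : 0 ≤ |p t| := abs_nonneg _
        have e5 : 0 ≤ |q t| := abs_nonneg _
        simp only [hkdef, hwdef]
        nlinarith
      calc w y = |u y| + |v y| := rfl
        _ ≤ (∫ t in c..y, |v t|) + (1 + ∫ t in c..y, |g t|) := add_le_add h1 h2
        _ = 1 + ((∫ t in c..y, |v t|) + (∫ t in c..y, |g t|)) := by ring
        _ ≤ 1 + ∫ t in c..y, k t * w t := add_le_add_right h3 1
    have := gronwall hcd hkid hk0 hwc (fun t _ => by positivity) zero_le_one key y hy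
    rw [one_mul] at this
    refine this.trans ?_
    rw [hMdef]
    refine Real.exp_le_exp.mpr ?_
    refine intervalIntegral.integral_mono_interval le_rfl hy.1 (hy.2.trans hd.1.2) ?_ ?_
    · exact Filter.Eventually.of_forall (fun t => hk0 t)
    · exact (intervalIntegrable_iff_integrableOn_Icc_of_le hcb).mpr hki
  -- everything below the sup is good
  have hIcoT : ∀ y ∈ Ico c y', y ∈ T := by
    intro y hy
    obtain ⟨t, htT, hyt⟩ := exists_lt_of_lt_csSup ⟨c, hTc⟩ hy.2
    exact hTdown t htT y ⟨hy.1, hyt.le⟩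
  -- continuity of u, v on [c, y')
  have hcont_Ico : ContinuousOn u (Ico c y') ∧ ContinuousOn v (Ico c y') := by
    constructor <;>
    · intro z hz
      obtain ⟨t, htT, hzt⟩ := exists_lt_of_lt_csSup ⟨c, hTc⟩ hz.2
      have htT' := hTdown t htT
      have hIccmem : Icc c t ∈ nhdsWithin z (Ico c y') := by
        refine mem_nhdsWithin.mpr ⟨Iio t, isOpen_Iio, hzt, ?_⟩
        rintro s ⟨hs1, hs2⟩
        exact ⟨hs2.1, le_of_lt hs1⟩
      first
      | exact ((contOn t htT).2.continuousWithinAt ⟨hz.1, hzt.le⟩).mono_of_mem_nhdsWithin hIccmem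
      | exact ((contOn t htT).1.continuousWithinAt ⟨hz.1, hzt.le⟩).mono_of_mem_nhdsWithin hIccmem
  -- y' is good
  have hstar : y' ∈ T := by
    refine ⟨⟨hy'1, hy'2⟩, (intervalIntegrable_iff_integrableOn_Ioc_of_le hy'1).mpr ?_⟩
    have hres : volume.restrict (Ioc c y') = volume.restrict (Ico c y') :=
      Measure.restrict_congr_set Ico_ae_eq_Ioc |>.symm
    have haem : AEStronglyMeasurable g (volume.restrict (Ico c y')) := by
      have hum : AEMeasurable u (volume.restrict (Ico c y')) :=
        hcont_Ico.1.aemeasurable measurableSet_Ico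
      have hvm : AEMeasurable v (volume.restrict (Ico c y')) :=
        hcont_Ico.2.aemeasurable measurableSet_Ico
      exact (((hqm.aemeasurable.mul hum).sub (hpm.aemeasurable.mul hvm)).aestronglyMeasurable)
    have hbd : ∀ t ∈ Ico c y', ‖g t‖ ≤ k t * M := by
      intro t ht
      obtain ⟨s, hsT, hts⟩ := exists_lt_of_lt_csSup ⟨c, hTc⟩ ht.2
      have htT : t ∈ T := hTdown s hsT t ⟨ht.1, hts.le⟩
      have hwb : w t ≤ M := bound t htT t ⟨ht.1, le_rfl⟩
      have e1 : ‖g t‖ ≤ |q t| * |u t| + |p t| * |v t| := by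
        calc ‖g t‖ ≤ |q t * u t| + |p t * v t| := abs_sub _ _
          _ = |q t| * |u t| + |p t| * |v t| := by rw [abs_mul, abs_mul]
      refine e1.trans ?_
      have e2 : 0 ≤ |u t| := abs_nonneg _
      have e3 : 0 ≤ |v t| := abs_nonneg _
      have e4 : 0 ≤ |p t| := abs_nonneg _
      have e5 : 0 ≤ |q t| := abs_nonneg _
      have hwt : |u t| + |v t| ≤ M := hwb
      simp only [hkdef]
      nlinarith
    have : IntegrableOn g (Ico c y') := by
      refine integrableOn_of_bound measurableSet_Ico haem ?_ hbd
      exact (kernel_mul_cont_integrableOn (hki.mono_set (Icc_subset_Icc le_rfl hy'2))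
        continuousOn_const).mono_set Ico_subset_Icc_self
    rw [IntegrableOn, hres]
    exact this
  -- the sup must be b
  have hyb : y' = b := by
    by_contra hne
    have hlt : y' < b := lt_of_le_of_ne hy'2 hne
    have hv1 : ∀ z ∈ Ioc y' b, v z = 1 := by
      intro z hz
      have hzT : z ∉ T := by
        intro hzT
        exact absurd (le_csSup hTbdd hzT) (not_le.mpr hz.1)
      have : ¬IntervalIntegrable g volume c z := fun h => hzT ⟨⟨hy'1.trans hz.1.le, hz.2⟩, h⟩
      rw [hv z ⟨hy'1.trans hz.1.le, hz.2⟩, intervalIntegral.integral_undef this, add_zero]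
    obtain ⟨hvcI, hucI⟩ := contOn y' hstar
    -- v is a.e. strongly measurable on [c,b]
    have hvmeas : AEStronglyMeasurable v (volume.restrict (Icc c b)) := by
      have hsplit : Icc c b = Icc c y' ∪ Ioc y' b := (Icc_union_Ioc_eq_Icc hy'1 hy'2).symm
      have h1 : AEStronglyMeasurable v (volume.restrict (Icc c y')) :=
        (hvcI.aemeasurable measurableSet_Icc).aestronglyMeasurable
      have h2 : AEStronglyMeasurable v (volume.restrict (Ioc y' b)) := by
        refine (aestronglyMeasurable_const (b := (1:ℝ))).congr ?_
        refine (ae_restrict_iff' measurableSet_Ioc).mpr (Filter.Eventually.of_forall ?_)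
        intro z hz; exact (hv1 z hz).symm
      rw [hsplit]
      refine AEStronglyMeasurable.mono_measure ?_ (Measure.restrict_union_le _ _)
      exact aestronglyMeasurable_add_measure_iff.mpr ⟨h1, h2⟩
    obtain ⟨Mv, hMv0, hMv⟩ := exists_bound_abs hvcI
    have hvbd : ∀ t ∈ Icc c b, ‖v t‖ ≤ max Mv 1 := by
      intro t ht
      by_cases h : t ≤ y'
      · exact (hMv t ⟨ht.1, h⟩).trans (le_max_left _ _)
      · rw [hv1 t ⟨not_le.mp h, ht.2⟩, norm_one]
        exact le_max_right _ _
    have hvint : IntegrableOn v (Icc c b) := by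
      refine integrableOn_of_bound measurableSet_Icc hvmeas ?_ hvbd
      exact (integrableOn_const_iff enorm_ne_top).mpr (Or.inr measure_Icc_lt_top)
    have hucb : ContinuousOn u (Icc c b) := by
      refine (primitive_continuousOn hcb hvint).congr ?_
      intro y hy; exact hu y hy
    obtain ⟨Mu, hMu0, hMu⟩ := exists_bound_abs hucb
    have hgint : IntegrableOn g (Icc c b) := by
      refine integrableOn_of_bound measurableSet_Icc ?_
        ((hqi.norm.mul_const Mu).add (hpi.norm.mul_const (max Mv 1))) ?_
      · have hum : AEMeasurable u (volume.restrict (Icc c b)) :=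
          hucb.aemeasurable measurableSet_Icc
        exact ((hqm.aemeasurable.mul hum).sub
          (hpm.aemeasurable.mul hvmeas.aemeasurable)).aestronglyMeasurable
      · intro t ht
        have e1 : ‖g t‖ ≤ |q t| * |u t| + |p t| * |v t| := by
          calc ‖g t‖ ≤ |q t * u t| + |p t * v t| := abs_sub _ _
            _ = |q t| * |u t| + |p t| * |v t| := by rw [abs_mul, abs_mul]
        refine e1.trans (add_le_add ?_ ?_)
        · exact mul_le_mul le_rfl (hMu t ht) (abs_nonneg _) (abs_nonneg _)
        · exact mul_le_mul le_rfl (hvbd t ht) (abs_nonneg _) (abs_nonneg _)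
    have hbT : b ∈ T := ⟨⟨hcb, le_rfl⟩,
      (intervalIntegrable_iff_integrableOn_Icc_of_le hcb).mpr hgint⟩
    exact absurd (le_csSup hTbdd hbT) (not_le.mpr hlt)
  rw [hyb] at hstar
  obtain ⟨hvcb, hucb⟩ := contOn b hstar
  refine ⟨hucb, hvcb, hvcb.integrableOn_Icc, ?_⟩
  rw [integrableOn_Icc_iff_integrableOn_Ioc]
  exact (intervalIntegrable_iff_integrableOn_Ioc_of_le hcb).mp hstar.2

lemma nonneg_of_left_limit {F : ℝ → ℝ} {x y0 : ℝ} (hxy : x < y0)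
    (hF : ContinuousWithinAt F (Ioo x y0) y0) (hpos : ∀ z ∈ Ioo x y0, 0 ≤ F z) : 0 ≤ F y0 := by
  haveI : (nhdsWithin y0 (Ioo x y0)).NeBot := by
    rw [← mem_closure_iff_nhdsWithin_neBot, closure_Ioo hxy.ne]
    exact right_mem_Icc.mpr hxy.le
  exact ge_of_tendsto hF (eventually_mem_nhdsWithin.mono hpos)

lemma exists_good_left {F : ℝ → ℝ} {x y0 κ : ℝ} (hxy : x < y0)
    (hF : ContinuousOn F (Icc x y0)) (hκ : κ < F y0) :
    ∃ y1, x < y1 ∧ y1 < y0 ∧ ∀ z ∈ Icc y1 y0, κ < F z := by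
  have hev : ∀ᶠ t in nhdsWithin y0 (Icc x y0), κ < F t :=
    (hF.continuousWithinAt (right_mem_Icc.mpr hxy.le)).eventually (eventually_gt_nhds hκ)
  obtain ⟨U, hUopen, hy0U, hU⟩ := mem_nhdsWithin.mp hev
  obtain ⟨δ, hδ, hball⟩ := Metric.isOpen_iff.mp hUopen y0 hy0U
  refine ⟨max ((x + y0) / 2) (y0 - δ / 2), ?_, ?_, ?_⟩
  · exact lt_max_of_lt_left (by linarith)
  · exact max_lt (by linarith) (by linarith)
  · intro z hz
    have hz1 : (x + y0) / 2 ≤ z := le_trans (le_max_left _ _) hz.1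
    have hz2 : y0 - δ / 2 ≤ z := le_trans (le_max_right _ _) hz.1
    refine hU ⟨hball ?_, ⟨by linarith, hz.2⟩⟩
    rw [Metric.mem_ball, Real.dist_eq, abs_lt]
    constructor <;> [linarith [hz.2]; linarith [hz.2]]

lemma exists_good_right {F : ℝ → ℝ} {x b' κ : ℝ} (hxb : x < b')
    (hF : ContinuousOn F (Icc x b')) (hκ : κ < F x) :
    ∃ x2, x < x2 ∧ x2 < b' ∧ ∀ z ∈ Icc x x2, κ < F z := by
  have hev : ∀ᶠ t in nhdsWithin x (Icc x b'), κ < F t :=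
    (hF.continuousWithinAt (left_mem_Icc.mpr hxb.le)).eventually (eventually_gt_nhds hκ)
  obtain ⟨U, hUopen, hxU, hU⟩ := mem_nhdsWithin.mp hev
  obtain ⟨δ, hδ, hball⟩ := Metric.isOpen_iff.mp hUopen x hxU
  refine ⟨min ((x + b') / 2) (x + δ / 2), ?_, ?_, ?_⟩
  · exact lt_min (by linarith) (by linarith)
  · exact min_lt_of_left_lt (by linarith)
  · intro z hz
    have hz1 : z ≤ (x + b') / 2 := le_trans hz.2 (min_le_left _ _)
    have hz2 : z ≤ x + δ / 2 := le_trans hz.2 (min_le_right _ _)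
    refine hU ⟨hball ?_, ⟨hz.1, by linarith⟩⟩
    rw [Metric.mem_ball, Real.dist_eq, abs_lt]
    constructor <;> [linarith [hz.1]; linarith [hz.1]]

lemma cont_mul_integrableOn {G k : ℝ → ℝ} {c d : ℝ}
    (hG : ContinuousOn G (Icc c d)) (hk : IntegrableOn k (Icc c d)) :
    IntegrableOn (fun t => G t * k t) (Icc c d) :=
  (kernel_mul_cont_integrableOn hk hG).congr
    (Filter.Eventually.of_forall (fun t => mul_comm (k t) (G t)))



/-- Lemma "sign φ₁₂" (c): if x ↦ φ₁₂(a,x) is strictly positive on (a,b),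
then x ↦ φ₁₂(x,b) is strictly positive on (a,b). -/
theorem stmt_2
    (I : Set ℝ) (hI : IsOpen I) (hIconn : I.OrdConnected)
    (α r σ : ℝ → ℝ)
    (hmα : Measurable α) (hmr : Measurable r) (hmσ : Measurable σ)
    (hσpos : ∀ x ∈ I, 0 < σ x)
    (hint1 : MeasureTheory.LocallyIntegrableOn (fun z => 1 / (σ z) ^ 2) I)
    (hint2 : MeasureTheory.LocallyIntegrableOn (fun z => α z / (σ z) ^ 2) I)
    (hint3 : MeasureTheory.LocallyIntegrableOn (fun z => r z / (σ z) ^ 2) I)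
    (φ11 φ12 φ21 φ22 : ℝ → ℝ → ℝ)
    (hφ11 : ∀ x ∈ I, ∀ y ∈ I, φ11 x y = 1 + ∫ z in x..y, φ21 x z)
    (hφ12 : ∀ x ∈ I, ∀ y ∈ I, φ12 x y = ∫ z in x..y, φ22 x z)
    (hφ21 : ∀ x ∈ I, ∀ y ∈ I, φ21 x y =
      ∫ z in x..y, (2 * r z / (σ z) ^ 2 * φ11 x z - 2 * α z / (σ z) ^ 2 * φ21 x z))
    (hφ22 : ∀ x ∈ I, ∀ y ∈ I, φ22 x y = 1 +
      ∫ z in x..y, (2 * r z / (σ z) ^ 2 * φ12 x z - 2 * α z / (σ z) ^ 2 * φ22 x z))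
    (a b : ℝ) (ha : a ∈ I) (hb : b ∈ I) (hab : a < b)
    (hpos : ∀ x ∈ Set.Ioo a b, 0 < φ12 a x) :
    ∀ x ∈ Set.Ioo a b, 0 < φ12 x b := by
  classical
  set p : ℝ → ℝ := fun z => 2 * α z / σ z ^ 2 with hpdef
  set q : ℝ → ℝ := fun z => 2 * r z / σ z ^ 2 with hqdef
  have hpm : Measurable p := (measurable_const.mul hmα).div (hmσ.pow_const 2)
  have hqm : Measurable q := (measurable_const.mul hmr).div (hmσ.pow_const 2)
  have hIcc : Icc a b ⊆ I := hIconn.out ha hb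
  have hpi : IntegrableOn p (Icc a b) := by
    have h2 : IntegrableOn (fun z => α z / σ z ^ 2) (Icc a b) :=
      hint2.integrableOn_compact_subset hIcc isCompact_Icc
    exact (h2.const_mul 2).congr
      (Filter.Eventually.of_forall (fun z => (mul_div_assoc 2 (α z) (σ z ^ 2)).symm))
  have hqi : IntegrableOn q (Icc a b) := by
    have h2 : IntegrableOn (fun z => r z / σ z ^ 2) (Icc a b) :=
      hint3.integrableOn_compact_subset hIcc isCompact_Icc
    exact (h2.const_mul 2).congr
      (Filter.Eventually.of_forall (fun z => (mul_div_assoc 2 (r z) (σ z ^ 2)).symm))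
  intro x hx
  have hax : a ≤ x := hx.1.le
  have hxb : x ≤ b := hx.2.le
  have hxI : x ∈ I := hIcc ⟨hax, hxb⟩
  have hIccxb : Icc x b ⊆ I := fun z hz => hIcc ⟨hax.trans hz.1, hz.2⟩
  have hsubab : Icc x b ⊆ Icc a b := Icc_subset_Icc hax le_rfl
  -- regularity of the two solution pairs
  obtain ⟨hua_c, hva_c, hva_i, hga_i⟩ :=
    regularity (p := p) (q := q) (u := φ12 a) (v := φ22 a) hab.le hpm hqm hpi hqi
      (fun y hy => hφ12 a ha y (hIcc hy)) (fun y hy => hφ22 a ha y (hIcc hy))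
  obtain ⟨hux_c, hvx_c, hvx_i, hgx_i⟩ :=
    regularity (p := p) (q := q) (u := φ12 x) (v := φ22 x) hxb hpm hqm
      (hpi.mono_set hsubab) (hqi.mono_set hsubab)
      (fun y hy => hφ12 x hxI y (hIccxb hy)) (fun y hy => hφ22 x hxI y (hIccxb hy))
  set ga : ℝ → ℝ := fun z => q z * φ12 a z - p z * φ22 a z with hgadef
  set gx : ℝ → ℝ := fun z => q z * φ12 x z - p z * φ22 x z with hgxdef
  set W : ℝ → ℝ := fun y => φ12 a y * φ22 x y - φ22 a y * φ12 x y with hWdef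
  have hua_c' : ContinuousOn (φ12 a) (Icc x b) := hua_c.mono hsubab
  have hva_c' : ContinuousOn (φ22 a) (Icc x b) := hva_c.mono hsubab
  have hva_i' : IntegrableOn (φ22 a) (Icc x b) := hva_i.mono_set hsubab
  have hga_i' : IntegrableOn ga (Icc x b) := hga_i.mono_set hsubab
  have hpi' : IntegrableOn p (Icc x b) := hpi.mono_set hsubab
  -- basic values at x
  have hux_x : φ12 x x = 0 := by rw [hφ12 x hxI x hxI, integral_same]
  have hvx_x : φ22 x x = 1 := by rw [hφ22 x hxI x hxI, integral_same, add_zero]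
  have hWx : W x = φ12 a x := by rw [hWdef]; simp [hux_x, hvx_x]
  have hWxpos : 0 < W x := by rw [hWx]; exact hpos x hx
  -- a generic coercion to interval integrability
  have Ii : ∀ {f : ℝ → ℝ} {u' v' : ℝ}, IntegrableOn f (Icc x b) → x ≤ u' → u' ≤ v' → v' ≤ b →
      IntervalIntegrable f volume u' v' := by
    intro f u' v' hf h1 h2 h3
    exact (intervalIntegrable_iff_integrableOn_Icc_of_le h2).mpr
      (hf.mono_set (Icc_subset_Icc h1 h3))
  -- rebal equations at base point x
  have hFua : ∀ y ∈ Icc x b, φ12 a y = φ12 a x + ∫ s in x..y, φ22 a s := by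
    intro y hy
    have h1 : IntervalIntegrable (φ22 a) volume a x :=
      (intervalIntegrable_iff_integrableOn_Icc_of_le hax).mpr
        (hva_i.mono_set (Icc_subset_Icc le_rfl hxb))
    have h2 : IntervalIntegrable (φ22 a) volume x y := Ii hva_i' le_rfl hy.1 hy.2
    rw [hφ12 a ha y (hIcc ⟨hax.trans hy.1, hy.2⟩), hφ12 a ha x hxI,
      ← integral_add_adjacent_intervals h1 h2]
  have hFva : ∀ y ∈ Icc x b, φ22 a y = φ22 a x + ∫ s in x..y, ga s := by
    intro y hy
    have h1 : IntervalIntegrable ga volume a x :=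
      (intervalIntegrable_iff_integrableOn_Icc_of_le hax).mpr
        (hga_i.mono_set (Icc_subset_Icc le_rfl hxb))
    have h2 : IntervalIntegrable ga volume x y := Ii hga_i' le_rfl hy.1 hy.2
    rw [hφ22 a ha y (hIcc ⟨hax.trans hy.1, hy.2⟩), hφ22 a ha x hxI]
    rw [← integral_add_adjacent_intervals h1 h2]
    ring
  have hGux : ∀ y ∈ Icc x b, φ12 x y = 0 + ∫ s in x..y, φ22 x s := by
    intro y hy
    rw [zero_add]
    exact hφ12 x hxI y (hIccxb hy)
  have hGvx : ∀ y ∈ Icc x b, φ22 x y = 1 + ∫ s in x..y, gx s := by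
    intro y hy
    exact hφ22 x hxI y (hIccxb hy)
  -- product rule applications
  have P1 := prodRule hva_i' hgx_i hFua hGvx
  have P2 := prodRule hga_i' hvx_i hFva hGux
  -- integrability of the integrands
  have hS1 : IntegrableOn (fun t => φ12 a t * gx t + φ22 x t * φ22 a t) (Icc x b) :=
    (cont_mul_integrableOn hua_c' hgx_i).add ((hvx_c.mul hva_c').integrableOn_Icc)
  have hS2 : IntegrableOn (fun t => φ22 a t * φ22 x t + φ12 x t * ga t) (Icc x b) :=
    ((hva_c'.mul hvx_c).integrableOn_Icc).add (cont_mul_integrableOn hux_c hga_i')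
  have hW_eq : ∀ y ∈ Icc x b, W y = W x - ∫ t in x..y, p t * W t := by
    intro y hy
    have h1 := P1 y hy
    have h2 := P2 y hy
    have hS1' := Ii hS1 le_rfl hy.1 hy.2
    have hS2' := Ii hS2 le_rfl hy.1 hy.2
    have hsub : (∫ t in x..y, (φ12 a t * gx t + φ22 x t * φ22 a t))
        - (∫ t in x..y, (φ22 a t * φ22 x t + φ12 x t * ga t))
        = ∫ t in x..y, -(p t * W t) := by
      rw [← intervalIntegral.integral_sub hS1' hS2']
      refine integral_congr (fun t _ => ?_)
      simp only [hgxdef, hgadef, hWdef]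
      ring
    rw [intervalIntegral.integral_neg] at hsub
    have : W y = (φ12 a x * 1 + ∫ t in x..y, (φ12 a t * gx t + φ22 x t * φ22 a t))
        - (φ22 a x * 0 + ∫ t in x..y, (φ22 a t * φ22 x t + φ12 x t * ga t)) := by
      rw [hWdef, ← h1, ← h2]
    rw [this, hWx]
    linarith [hsub]
  have hW_c : ContinuousOn W (Icc x b) := (hua_c'.mul hvx_c).sub (hva_c'.mul hux_c)
  have hpW_i : IntegrableOn (fun t => p t * W t) (Icc x b) :=
    kernel_mul_cont_integrableOn hpi' hW_c
  -- Part IV : W > 0 on [x,b]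
  have hWpos : ∀ y ∈ Icc x b, 0 < W y := by
    by_contra hcon
    push_neg at hcon
    obtain ⟨yc, hyc, hWyc⟩ := hcon
    set Z : Set ℝ := Icc x b ∩ W ⁻¹' Iic 0 with hZdef
    have hZne : Z.Nonempty := ⟨yc, hyc, hWyc⟩
    have hZclosed : IsClosed Z := hW_c.preimage_isClosed_of_isClosed isClosed_Icc isClosed_Iic
    have hZbdd : BddBelow Z := ⟨x, fun z hz => hz.1.1⟩
    set y0 : ℝ := sInf Z with hy0def
    have hy0Z : y0 ∈ Z := hZclosed.csInf_mem hZne hZbdd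
    have hy0mem : y0 ∈ Icc x b := hy0Z.1
    have hy0le : W y0 ≤ 0 := hy0Z.2
    have hxy0 : x < y0 := by
      rcases eq_or_lt_of_le hy0mem.1 with h | h
      · exfalso; rw [← h] at hy0le; linarith
      · exact h
    have hpre : ∀ z ∈ Ico x y0, 0 < W z := by
      intro z hz
      by_contra hle
      push_neg at hle
      have hzZ : z ∈ Z := ⟨⟨hz.1, hz.2.le.trans hy0mem.2⟩, hle⟩
      exact absurd (csInf_le hZbdd hzZ) (not_le.mpr hz.2)
    have hW0 : W y0 = 0 := by
      refine le_antisymm hy0le ?_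
      refine nonneg_of_left_limit hxy0 ?_ (fun z hz => (hpre z ⟨hz.1.le, hz.2⟩).le)
      exact (hW_c.continuousWithinAt hy0mem).mono
        (fun z hz => ⟨hz.1.le, hz.2.le.trans hy0mem.2⟩)
    have hback : ∀ z ∈ Icc x y0, W z = ∫ t in z..y0, p t * W t := by
      intro z hz
      have h1 := hW_eq z ⟨hz.1, hz.2.trans hy0mem.2⟩
      have h2 := hW_eq y0 hy0mem
      have hI1 : IntervalIntegrable (fun t => p t * W t) volume x z :=
        Ii hpW_i le_rfl hz.1 (hz.2.trans hy0mem.2)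
      have hI2 : IntervalIntegrable (fun t => p t * W t) volume z y0 :=
        Ii hpW_i hz.1 hz.2 hy0mem.2
      have hadd := integral_add_adjacent_intervals hI1 hI2
      rw [hW0] at h2
      linarith
    -- contraction near y0
    set P : ℝ → ℝ := fun t => ∫ s in x..t, |p s| with hPdef
    have habs : IntegrableOn (fun s => |p s|) (Icc x b) := hpi'.abs
    have hPc : ContinuousOn P (Icc x y0) :=
      (primitive_continuousOn hy0mem.1
        (habs.mono_set (Icc_subset_Icc le_rfl hy0mem.2))).congr (fun t _ => rfl)
    obtain ⟨y1, hxy1, hy1y0, hy1P⟩ := exists_good_left hxy0 hPc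
      (show P y0 - 1 < P y0 by linarith)
    have hPy1 : P y0 - P y1 < 1 := by
      have := hy1P y1 ⟨le_rfl, hy1y0.le⟩; linarith
    have hsub3 : Icc y1 y0 ⊆ Icc x b := Icc_subset_Icc hxy1.le hy0mem.2
    obtain ⟨t0, ht0mem, ht0max⟩ := isCompact_Icc.exists_isMaxOn
      (nonempty_Icc.mpr hy1y0.le) ((hW_c.mono hsub3).abs)
    set m : ℝ := |W t0| with hmdef
    have hm0 : 0 ≤ m := abs_nonneg _
    have ht0y0 : t0 ≤ y0 := ht0mem.2
    have hy1t0 : y1 ≤ t0 := ht0mem.1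
    have hIpw : IntervalIntegrable (fun s => |p s * W s|) volume t0 y0 :=
      Ii hpW_i.abs (hxy1.le.trans hy1t0) ht0y0 hy0mem.2
    have hIpm : IntervalIntegrable (fun s => |p s| * m) volume t0 y0 :=
      Ii (habs.mul_const m) (hxy1.le.trans hy1t0) ht0y0 hy0mem.2
    have est1 : m ≤ ∫ s in t0..y0, |p s * W s| := by
      rw [hmdef, hback t0 ⟨hxy1.le.trans hy1t0, ht0y0⟩]
      exact intervalIntegral.abs_integral_le_integral_abs ht0y0
    have est2 : (∫ s in t0..y0, |p s * W s|) ≤ ∫ s in t0..y0, |p s| * m := by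
      refine intervalIntegral.integral_mono_on ht0y0 hIpw hIpm (fun s hs => ?_)
      rw [abs_mul]
      exact mul_le_mul_of_nonneg_left (ht0max ⟨hy1t0.trans hs.1, hs.2⟩) (abs_nonneg _)
    have est3 : (∫ s in t0..y0, |p s| * m) = (∫ s in t0..y0, |p s|) * m :=
      intervalIntegral.integral_mul_const m _
    have est4 : (∫ s in t0..y0, |p s|) ≤ P y0 - P y1 := by
      have hI5 : IntervalIntegrable (fun s => |p s|) volume x y1 :=
        Ii habs le_rfl hxy1.le (hy1y0.le.trans hy0mem.2)
      have hI6 : IntervalIntegrable (fun s => |p s|) volume y1 y0 :=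
        Ii habs hxy1.le hy1y0.le hy0mem.2
      have hPdiff : P y0 - P y1 = ∫ s in y1..y0, |p s| := by
        simp only [hPdef]
        rw [eq_comm, ← integral_add_adjacent_intervals hI5 hI6]
        ring
      rw [hPdiff]
      refine intervalIntegral.integral_mono_interval hy1t0 ht0y0 le_rfl
        (Filter.Eventually.of_forall (fun s => abs_nonneg _)) hI6
    have hfinal : m ≤ m * (P y0 - P y1) := by
      calc m ≤ ∫ s in t0..y0, |p s * W s| := est1
        _ ≤ (∫ s in t0..y0, |p s|) * m := by rw [← est3]; exact est2
        _ ≤ (P y0 - P y1) * m := mul_le_mul_of_nonneg_right est4 hm0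
        _ = m * (P y0 - P y1) := mul_comm _ _
    have hm_le : m ≤ 0 := by nlinarith
    have hWy1 : 0 < W y1 := hpre y1 ⟨hxy1.le, hy1y0⟩
    have : W y1 ≤ m := (le_abs_self _).trans (ht0max ⟨le_rfl, hy1y0.le⟩)
    linarith
  -- Part V : conclude
  by_contra hconb
  push_neg at hconb
  obtain ⟨x2, hxx2, hx2b, hx2⟩ := exists_good_right hx.2 hvx_c
    (show (1:ℝ)/2 < φ22 x x by rw [hvx_x]; norm_num)
  have hux_pos : ∀ z ∈ Ioc x x2, 0 < φ12 x z := by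
    intro z hz
    have hz' : z ∈ Icc x b := ⟨hz.1.le, hz.2.trans hx2b.le⟩
    have hvxI : IntervalIntegrable (φ22 x) volume x z := Ii hvx_i le_rfl hz.1.le hz'.2
    rw [hφ12 x hxI z (hIccxb hz')]
    have hc : (0:ℝ) < (z - x) * (1/2) := by
      have := hz.1; nlinarith
    calc (0:ℝ) < (z - x) * (1/2) := hc
      _ = ∫ _ in x..z, (1/2 : ℝ) := by
        rw [intervalIntegral.integral_const, smul_eq_mul]
      _ ≤ ∫ s in x..z, φ22 x s := by
        refine intervalIntegral.integral_mono_on hz.1.le intervalIntegrable_const hvxI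
          (fun s hs => ?_)
        exact (hx2 s ⟨hs.1, hs.2.trans hz.2⟩).le
  set Z' : Set ℝ := Icc x2 b ∩ (φ12 x) ⁻¹' Iic 0 with hZ'def
  have hZ'ne : Z'.Nonempty := ⟨b, ⟨hx2b.le, le_rfl⟩, hconb⟩
  have hZ'closed : IsClosed Z' :=
    (hux_c.mono (Icc_subset_Icc hxx2.le le_rfl)).preimage_isClosed_of_isClosed
      isClosed_Icc isClosed_Iic
  have hZ'bdd : BddBelow Z' := ⟨x2, fun z hz => hz.1.1⟩
  set y0 : ℝ := sInf Z' with hy0def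
  have hy0Z : y0 ∈ Z' := hZ'closed.csInf_mem hZ'ne hZ'bdd
  have hy0mem : y0 ∈ Icc x b := ⟨hxx2.le.trans hy0Z.1.1, hy0Z.1.2⟩
  have hxy0 : x < y0 := hxx2.trans_le hy0Z.1.1
  have hupre : ∀ z ∈ Ioo x y0, 0 < φ12 x z := by
    intro z hz
    by_cases hzx2 : z ≤ x2
    · exact hux_pos z ⟨hz.1, hzx2⟩
    · push_neg at hzx2
      by_contra hle
      push_neg at hle
      have hzZ : z ∈ Z' := ⟨⟨hzx2.le, hz.2.le.trans hy0mem.2⟩, hle⟩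
      exact absurd (csInf_le hZ'bdd hzZ) (not_le.mpr hz.2)
  have hu0 : φ12 x y0 = 0 := by
    refine le_antisymm hy0Z.2 ?_
    refine nonneg_of_left_limit hxy0 ?_ (fun z hz => (hupre z hz).le)
    exact (hux_c.continuousWithinAt hy0mem).mono
      (fun z hz => ⟨hz.1.le, hz.2.le.trans hy0mem.2⟩)
  have hWy0pos : 0 < W y0 := hWpos y0 hy0mem
  have hprod : 0 < φ12 a y0 * φ22 x y0 := by
    have : W y0 = φ12 a y0 * φ22 x y0 := by
      rw [hWdef]; simp [hu0]
    linarith [hWy0pos, this.symm.le]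
  have hua0 : 0 ≤ φ12 a y0 := by
    rcases eq_or_lt_of_le hy0mem.2 with heq | hlt
    · rw [heq]
      refine nonneg_of_left_limit hab ?_ (fun z hz => (hpos z hz).le)
      exact (hua_c.continuousWithinAt (right_mem_Icc.mpr hab.le)).mono
        (fun z hz => ⟨hz.1.le, hz.2.le⟩)
    · exact (hpos y0 ⟨hx.1.trans hxy0, hlt⟩).le
  have hvx_y0 : 0 < φ22 x y0 := by nlinarith
  obtain ⟨y1, hxy1, hy1y0, hy1v⟩ := exists_good_left hxy0
    (hvx_c.mono (Icc_subset_Icc le_rfl hy0mem.2)) (half_lt_self hvx_y0)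
  have hI7 : IntervalIntegrable (φ22 x) volume x y1 :=
    Ii hvx_i le_rfl hxy1.le (hy1y0.le.trans hy0mem.2)
  have hI8 : IntervalIntegrable (φ22 x) volume y1 y0 :=
    Ii hvx_i hxy1.le hy1y0.le hy0mem.2
  have hadd : φ12 x y0 = φ12 x y1 + ∫ s in y1..y0, φ22 x s := by
    rw [hφ12 x hxI y0 (hIccxb hy0mem),
      hφ12 x hxI y1 (hIccxb ⟨hxy1.le, hy1y0.le.trans hy0mem.2⟩),
      ← integral_add_adjacent_intervals hI7 hI8]
  have hIv : (y0 - y1) * (φ22 x y0 / 2) ≤ ∫ s in y1..y0, φ22 x s := by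
    calc (y0 - y1) * (φ22 x y0 / 2) = ∫ _ in y1..y0, (φ22 x y0 / 2) := by
          rw [intervalIntegral.integral_const, smul_eq_mul]
      _ ≤ ∫ s in y1..y0, φ22 x s := by
        refine intervalIntegral.integral_mono_on hy1y0.le intervalIntegrable_const hI8
          (fun s hs => (hy1v s hs).le)
  have hy1pos : 0 < φ12 x y1 := hupre y1 ⟨hxy1, hy1y0⟩
  have : 0 < φ12 x y0 := by nlinarith
  rw [hu0] at this
  exact lt_irrefl 0 this
end

section
/- In the geometric Brownian motion case with distinct real exponents d₁ < d₂, for a ∈ (0,∞) define v_{a,0}(x) = (−2/(σ²(d₂−d₁))) ∫ₐˣ ((x/z)^{d₂} − (x/z)^{d₁}) Π(z)/z dz. Then v_{a,0} is a Carathéodory solution of r v − αx v' − (σ²/2)x² v'' − Π = 0 on (0,∞) with v_{a,0}(a) = 0 and v'_{a,0}(a) = 0, where α = (σ²/2)(1−d₁−d₂), r = −(σ²/2)d₁d₂. -/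
open MeasureTheory Set intervalIntegral

lemma parts_le (h φ φ' : ℝ → ℝ) {c d : ℝ} (hcd : c ≤ d)
    (hh : IntegrableOn h (Set.Icc c d))
    (hφ : ∀ t ∈ Set.Icc c d, HasDerivAt φ (φ' t) t)
    (hφ' : ContinuousOn φ' (Set.Icc c d)) :
    ∫ t in c..d, φ' t * ∫ z in c..t, h z
      = φ d * (∫ z in c..d, h z) - ∫ z in c..d, φ z * h z := by
  have hφc : ContinuousOn φ (Set.Icc c d) :=
    fun t ht => (hφ t ht).continuousAt.continuousWithinAt
  have hhIoc : IntegrableOn h (Ioc c d) := hh.mono_set Ioc_subset_Icc_self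
  have hφ'int : IntegrableOn φ' (Ioc c d) :=
    (hφ'.integrableOn_compact isCompact_Icc).mono_set Ioc_subset_Icc_self
  -- the two-variable function
  set f : ℝ → ℝ → ℝ := fun t z => if z ≤ t then φ' t * h z else 0 with hf
  have hfint : Integrable (Function.uncurry f)
      ((volume.restrict (Ioc c d)).prod (volume.restrict (Ioc c d))) := by
    have hbig : Integrable (fun p : ℝ × ℝ => φ' p.1 * h p.2)
        ((volume.restrict (Ioc c d)).prod (volume.restrict (Ioc c d))) :=
      Integrable.mul_prod hφ'int hhIoc
    have hs : MeasurableSet {p : ℝ × ℝ | p.2 ≤ p.1} :=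
      measurableSet_le measurable_snd measurable_fst
    have : Function.uncurry f =
        ({p : ℝ × ℝ | p.2 ≤ p.1}).indicator (fun p => φ' p.1 * h p.2) := by
      ext p; simp [Function.uncurry, hf, Set.indicator_apply, Set.mem_setOf_eq]
    rw [this]
    exact hbig.indicator hs
  have key := MeasureTheory.integral_integral_swap hfint
  -- identify LHS
  have hL : ∫ t in Ioc c d, ∫ z in Ioc c d, f t z
      = ∫ t in c..d, φ' t * ∫ z in c..t, h z := by
    rw [intervalIntegral.integral_of_le hcd]
    refine setIntegral_congr_fun measurableSet_Ioc (fun t ht => ?_)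
    have : ∀ z, f t z = (Iic t).indicator (fun z => φ' t * h z) z := by
      intro z; simp [hf, Set.indicator_apply]
    simp_rw [this]
    rw [setIntegral_indicator measurableSet_Iic]
    have : Ioc c d ∩ Iic t = Ioc c t := by
      rw [Set.Ioc_inter_Iic, min_eq_right ht.2]
    rw [this, MeasureTheory.integral_const_mul, intervalIntegral.integral_of_le ht.1.le]
  -- identify RHS
  have hR : ∫ z in Ioc c d, ∫ t in Ioc c d, f t z
      = ∫ z in Ioc c d, (φ d - φ z) * h z := by
    refine setIntegral_congr_fun measurableSet_Ioc (fun z hz => ?_)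
    have : ∀ t, f t z = (Ici z).indicator (fun t => φ' t * h z) t := by
      intro t; simp [hf, Set.indicator_apply]
    simp_rw [this]
    rw [setIntegral_indicator measurableSet_Ici]
    have hset : Ioc c d ∩ Ici z = Icc z d := by
      ext u
      simp only [mem_inter_iff, mem_Ioc, mem_Ici, mem_Icc]
      exact ⟨fun ⟨⟨_, h2⟩, h3⟩ => ⟨h3, h2⟩,
        fun ⟨h1, h2⟩ => ⟨⟨lt_of_lt_of_le hz.1 h1, h2⟩, h1⟩⟩
    rw [hset, MeasureTheory.integral_mul_const, MeasureTheory.integral_Icc_eq_integral_Ioc,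
      ← intervalIntegral.integral_of_le hz.2]
    have hsub : Set.uIcc z d ⊆ Set.Icc c d := by
      rw [Set.uIcc_of_le hz.2]
      exact Set.Icc_subset_Icc hz.1.le le_rfl
    rw [intervalIntegral.integral_eq_sub_of_hasDerivAt
      (fun t ht => hφ t (hsub ht)) ((hφ'.mono hsub).intervalIntegrable)]
  rw [hL, hR] at key
  rw [key]
  have hφh : IntegrableOn (fun z => φ z * h z) (Ioc c d) :=
    (IntegrableOn.continuousOn_mul hφc hh isCompact_Icc).mono_set Ioc_subset_Icc_self
  rw [intervalIntegral.integral_of_le hcd, intervalIntegral.integral_of_le hcd]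
  rw [show (fun z => (φ d - φ z) * h z) = fun z => φ d * h z - φ z * h z by ext z; ring]
  rw [MeasureTheory.integral_sub (hhIoc.const_mul _) hφh, MeasureTheory.integral_const_mul]

lemma parts_gen (h φ φ' : ℝ → ℝ) (c d : ℝ)
    (hh : IntegrableOn h (Set.uIcc c d))
    (hφ : ∀ t ∈ Set.uIcc c d, HasDerivAt φ (φ' t) t)
    (hφ' : ContinuousOn φ' (Set.uIcc c d)) :
    ∫ t in c..d, φ' t * ∫ z in c..t, h z
      = φ d * (∫ z in c..d, h z) - ∫ z in c..d, φ z * h z := by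
  rcases le_total c d with hcd | hcd
  · rw [Set.uIcc_of_le hcd] at hh hφ hφ'
    exact parts_le h φ φ' hcd hh hφ hφ'
  · rw [Set.uIcc_of_ge hcd] at hh hφ hφ'
    have base := parts_le h φ φ' hcd hh hφ hφ'
    -- now relate ∫ z in c..t to ∫ z in d..t
    set K : ℝ := ∫ z in d..c, h z with hK
    have hhint : ∀ t ∈ Set.Icc d c, IntervalIntegrable h volume d t := by
      intro t ht
      apply (hh.mono_set _).intervalIntegrable
      rw [Set.uIcc_of_le ht.1]
      exact Set.Icc_subset_Icc le_rfl ht.2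
    have hhdc : IntervalIntegrable h volume d c := hhint c ⟨hcd, le_rfl⟩
    have step : ∀ t ∈ Set.uIcc c d, φ' t * ∫ z in c..t, h z
        = φ' t * (∫ z in d..t, h z) - K * φ' t := by
      intro t ht
      rw [Set.uIcc_of_ge hcd] at ht
      have h1 : ∫ z in c..t, h z = (∫ z in c..d, h z) + ∫ z in d..t, h z :=
        (intervalIntegral.integral_add_adjacent_intervals hhdc.symm (hhint t ht)).symm
      have h2 : ∫ z in c..d, h z = -K := intervalIntegral.integral_symm d c
      rw [h1, h2]
      ring
    rw [intervalIntegral.integral_congr step]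
    have hFcont : ContinuousOn (fun t => ∫ z in d..t, h z) (Set.Icc d c) := by
      have := intervalIntegral.continuousOn_primitive_interval (a := d) (b := c)
        (μ := volume) (f := h) (by rwa [Set.uIcc_of_le hcd])
      rwa [Set.uIcc_of_le hcd] at this
    have i1 : IntervalIntegrable (fun t => φ' t * (∫ z in d..t, h z)) volume c d := by
      apply ContinuousOn.intervalIntegrable
      rw [Set.uIcc_comm, Set.uIcc_of_le hcd]
      exact hφ'.mul hFcont
    have i2 : IntervalIntegrable (fun t => K * φ' t) volume c d := by
      apply ContinuousOn.intervalIntegrable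
      rw [Set.uIcc_comm, Set.uIcc_of_le hcd]
      exact continuousOn_const.mul hφ'
    rw [intervalIntegral.integral_sub i1 i2]
    have e1 : (∫ x in c..d, φ' x * ∫ z in d..x, h z)
        = -∫ t in d..c, φ' t * ∫ z in d..t, h z := intervalIntegral.integral_symm d c
    have e2 : ∫ x in c..d, K * φ' x = K * (φ d - φ c) := by
      rw [intervalIntegral.integral_const_mul,
        intervalIntegral.integral_eq_sub_of_hasDerivAt
          (fun t ht => hφ t (by rwa [Set.uIcc_comm, Set.uIcc_of_le hcd] at ht))
          (by apply ContinuousOn.intervalIntegrable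
              rwa [Set.uIcc_comm, Set.uIcc_of_le hcd])]
    have e3 : ∫ z in c..d, h z = -K := intervalIntegral.integral_symm d c
    have e4 : ∫ z in c..d, φ z * h z = -∫ z in d..c, φ z * h z :=
      intervalIntegral.integral_symm d c
    rw [e1, e2, e3, e4, base]
    ring

lemma prof_int {Prof : ℝ → ℝ}
    (hPint : MeasureTheory.LocallyIntegrableOn (fun z => Prof z / z ^ 2) (Set.Ioi 0))
    {a x : ℝ} (ha : 0 < a) (hx : 0 < x) (e : ℝ) :
    IntegrableOn (fun z => Prof z * z ^ e) (Set.uIcc a x) := by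
  have hsub : Set.uIcc a x ⊆ Set.Ioi 0 := fun z hz => lt_of_lt_of_le (lt_min ha hx) hz.1
  have h1 : IntegrableOn (fun z => Prof z / z ^ 2) (Set.uIcc a x) :=
    hPint.integrableOn_compact_subset hsub isCompact_uIcc
  have h2 : ContinuousOn (fun z : ℝ => z ^ (e + 2)) (Set.uIcc a x) :=
    ContinuousOn.rpow_const continuousOn_id
      (fun z hz => Or.inl (ne_of_gt (hsub hz)))
  have h3 := h1.mul_continuousOn h2 isCompact_uIcc
  refine h3.congr_fun (fun z hz => ?_) measurableSet_uIcc
  have hz0 : (0:ℝ) < z := hsub hz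
  have hz2 : z ^ (2:ℕ) ≠ 0 := pow_ne_zero _ (ne_of_gt hz0)
  have : z ^ (e + 2) = z ^ e * z ^ (2:ℕ) := by
    rw [Real.rpow_add hz0, Real.rpow_two]
  show Prof z / z ^ 2 * z ^ (e + 2) = Prof z * z ^ e
  rw [this]
  field_simp

lemma pt_eq (x z d P : ℝ) (hx : 0 < x) (hz : 0 < z) :
    ((x / z) ^ d) * P / z = x ^ d * (P * z ^ (-d - 1)) := by
  rw [Real.div_rpow hx.le hz.le, show (-d - 1 : ℝ) = -d + -1 by ring, Real.rpow_add hz,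
    Real.rpow_neg hz.le, Real.rpow_neg_one, div_eq_mul_inv, div_eq_mul_inv]
  have h0 : z ^ d ≠ 0 := ne_of_gt (Real.rpow_pos_of_pos hz _)
  ring

/-- GBM case with d₁ < d₂: v_{a,0}(x) = (−2/(σ²(d₂−d₁))) ∫ₐˣ ((x/z)^{d₂} −
(x/z)^{d₁}) Π(z)/z dz is a Carathéodory solution of
r v − αx v' − (σ²/2)x² v'' − Π = 0 on (0,∞) with v(a) = v'(a) = 0, where
α = (σ²/2)(1−d₁−d₂), r = −(σ²/2)d₁d₂. -/
theorem stmt_10 (d1 d2 σ a : ℝ) (hd : d1 < d2) (hσ : 0 < σ) (ha : 0 < a)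
    (Prof : ℝ → ℝ) (hmP : Measurable Prof)
    (hPint : MeasureTheory.LocallyIntegrableOn (fun z => Prof z / z ^ 2) (Set.Ioi 0))
    (v : ℝ → ℝ)
    (hv : ∀ x : ℝ, v x =
      -2 / (σ ^ 2 * (d2 - d1)) *
        ∫ z in a..x, ((x / z) ^ d2 - (x / z) ^ d1) * Prof z / z) :
    v a = 0 ∧
    ∃ w : ℝ → ℝ, w a = 0 ∧
      (∀ x ∈ Set.Ioi (0 : ℝ), v x = ∫ t in a..x, w t) ∧
      (∀ x ∈ Set.Ioi (0 : ℝ), w x =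
        ∫ t in a..x, 2 / (σ ^ 2 * t ^ 2) *
          (-(σ ^ 2 / 2) * (d1 * d2) * v t
            - σ ^ 2 / 2 * (1 - d1 - d2) * t * w t - Prof t)) := by
  have hd' : d2 - d1 ≠ 0 := ne_of_gt (sub_pos.mpr hd)
  have hσ2 : σ ^ 2 ≠ 0 := pow_ne_zero _ (ne_of_gt hσ)
  set C : ℝ := -2 / (σ ^ 2 * (d2 - d1)) with hC
  set F : ℝ → ℝ → ℝ := fun p y => ∫ z in a..y, Prof z * z ^ (-p - 1) with hF
  set w : ℝ → ℝ :=
    fun y => C * (d2 * y ^ (d2 - 1) * F d2 y - d1 * y ^ (d1 - 1) * F d1 y) with hw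
  -- basic positivity of intervals
  have hsub : ∀ {x : ℝ}, 0 < x → Set.uIcc a x ⊆ Set.Ioi 0 := by
    intro x hx z hz
    exact lt_of_lt_of_le (lt_min ha hx) hz.1
  -- value of v as a combination of primitives
  have hB : ∀ x : ℝ, 0 < x → v x = C * (x ^ d2 * F d2 x - x ^ d1 * F d1 x) := by
    intro x hx
    rw [hv x]
    congr 1
    have hsame : Set.EqOn (fun z => ((x / z) ^ d2 - (x / z) ^ d1) * Prof z / z)
        (fun z => x ^ d2 * (Prof z * z ^ (-d2 - 1)) - x ^ d1 * (Prof z * z ^ (-d1 - 1)))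
        (Set.uIcc a x) := by
      intro z hz
      have hz0 : 0 < z := hsub hx hz
      have e2 := pt_eq x z d2 (Prof z) hx hz0
      have e1 := pt_eq x z d1 (Prof z) hx hz0
      simp only
      rw [← e2, ← e1]
      ring
    rw [intervalIntegral.integral_congr hsame,
      intervalIntegral.integral_sub
        (((prof_int hPint ha hx (-d2 - 1)).intervalIntegrable).const_mul _)
        (((prof_int hPint ha hx (-d1 - 1)).intervalIntegrable).const_mul _),
      intervalIntegral.integral_const_mul, intervalIntegral.integral_const_mul]
  refine ⟨by rw [hv a]; simp, w, ?_, ?_, ?_⟩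
  · have h2 : F d2 a = 0 := intervalIntegral.integral_same
    have h1 : F d1 a = 0 := intervalIntegral.integral_same
    simp only [hw, h1, h2]
    ring
  · -- first claim : v x = ∫ w
    intro x hx
    rw [Set.mem_Ioi] at hx
    have hders : ∀ (p : ℝ), ∀ t ∈ Set.uIcc a x,
        HasDerivAt (fun s => s ^ p) (p * t ^ (p - 1)) t := by
      intro p t ht
      exact Real.hasDerivAt_rpow_const (Or.inl (ne_of_gt (hsub hx ht)))
    have hcontpow : ∀ (q : ℝ), ContinuousOn (fun t : ℝ => t ^ q) (Set.uIcc a x) :=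
      fun q => ContinuousOn.rpow_const continuousOn_id
        (fun t ht => Or.inl (ne_of_gt (hsub hx ht)))
    have P2 : ∫ t in a..x, d2 * t ^ (d2 - 1) * ∫ z in a..t, Prof z * z ^ (-d2 - 1)
        = x ^ d2 * (∫ z in a..x, Prof z * z ^ (-d2 - 1))
          - ∫ z in a..x, z ^ d2 * (Prof z * z ^ (-d2 - 1)) :=
      parts_gen _ (fun t => t ^ d2) (fun t => d2 * t ^ (d2 - 1)) a x
        (prof_int hPint ha hx _) (hders d2) (continuousOn_const.mul (hcontpow (d2 - 1)))
    have P1 : ∫ t in a..x, d1 * t ^ (d1 - 1) * ∫ z in a..t, Prof z * z ^ (-d1 - 1)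
        = x ^ d1 * (∫ z in a..x, Prof z * z ^ (-d1 - 1))
          - ∫ z in a..x, z ^ d1 * (Prof z * z ^ (-d1 - 1)) :=
      parts_gen _ (fun t => t ^ d1) (fun t => d1 * t ^ (d1 - 1)) a x
        (prof_int hPint ha hx _) (hders d1) (continuousOn_const.mul (hcontpow (d1 - 1)))
    have hFcont : ∀ (p : ℝ), ContinuousOn (fun t => F p t) (Set.uIcc a x) := by
      intro p
      simp only [hF]
      exact intervalIntegral.continuousOn_primitive_interval (prof_int hPint ha hx _)
    have i2 : IntervalIntegrable (fun t => d2 * t ^ (d2 - 1) * F d2 t) volume a x :=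
      ContinuousOn.intervalIntegrable
        ((continuousOn_const.mul (hcontpow (d2 - 1))).mul (hFcont d2))
    have i1 : IntervalIntegrable (fun t => d1 * t ^ (d1 - 1) * F d1 t) volume a x :=
      ContinuousOn.intervalIntegrable
        ((continuousOn_const.mul (hcontpow (d1 - 1))).mul (hFcont d1))
    have hcan : ∀ (p : ℝ), ∫ z in a..x, z ^ p * (Prof z * z ^ (-p - 1))
        = ∫ z in a..x, Prof z * z ^ (-1 : ℝ) := by
      intro p
      refine intervalIntegral.integral_congr (fun z hz => ?_)
      have hz0 : 0 < z := hsub hx hz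
      have : z ^ p * z ^ (-p - 1) = z ^ (-1 : ℝ) := by
        rw [← Real.rpow_add hz0, show p + (-p - 1) = (-1 : ℝ) by ring]
      show z ^ p * (Prof z * z ^ (-p - 1)) = Prof z * z ^ (-1 : ℝ)
      rw [← this]; ring
    have expand : ∫ t in a..x, w t
        = C * ((x ^ d2 * F d2 x - ∫ z in a..x, z ^ d2 * (Prof z * z ^ (-d2 - 1)))
            - (x ^ d1 * F d1 x - ∫ z in a..x, z ^ d1 * (Prof z * z ^ (-d1 - 1)))) := by
      simp only [hw]
      rw [intervalIntegral.integral_const_mul, intervalIntegral.integral_sub i2 i1]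
      simp only [hF]
      rw [P2, P1]
    rw [hB x hx, expand, hcan d2, hcan d1]
    ring
  · -- second claim
    intro x hx
    rw [Set.mem_Ioi] at hx
    have hcontpow : ∀ (q : ℝ), ContinuousOn (fun t : ℝ => t ^ q) (Set.uIcc a x) :=
      fun q => ContinuousOn.rpow_const continuousOn_id
        (fun t ht => Or.inl (ne_of_gt (hsub hx ht)))
    have hders : ∀ (p : ℝ), ∀ t ∈ Set.uIcc a x,
        HasDerivAt (fun s => s ^ (p - 1)) ((p - 1) * t ^ (p - 2)) t := by
      intro p t ht
      have := Real.hasDerivAt_rpow_const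
        (x := t) (p := p - 1) (Or.inl (ne_of_gt (hsub hx ht)))
      simpa [show p - 1 - 1 = p - 2 by ring] using this
    have hFcont : ∀ (p : ℝ), ContinuousOn (fun t => F p t) (Set.uIcc a x) := by
      intro p
      simp only [hF]
      exact intervalIntegral.continuousOn_primitive_interval (prof_int hPint ha hx _)
    have hcongr : Set.EqOn
        (fun t => 2 / (σ ^ 2 * t ^ 2) *
          (-(σ ^ 2 / 2) * (d1 * d2) * v t
            - σ ^ 2 / 2 * (1 - d1 - d2) * t * w t - Prof t))
        (fun t => C * d2 * ((d2 - 1) * t ^ (d2 - 2) * F d2 t)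
            - C * d1 * ((d1 - 1) * t ^ (d1 - 2) * F d1 t)
            + C * (d2 - d1) * (Prof t * t ^ (-2 : ℝ))) (Set.uIcc a x) := by
      intro t ht
      have ht0 : 0 < t := hsub hx ht
      have ht2 : (t : ℝ) ^ 2 ≠ 0 := pow_ne_zero _ (ne_of_gt ht0)
      have htd2 : t ^ d2 = t ^ (d2 - 2) * t ^ 2 := by
        rw [← Real.rpow_two, ← Real.rpow_add ht0, show d2 - 2 + 2 = d2 by ring]
      have htd1 : t ^ d1 = t ^ (d1 - 2) * t ^ 2 := by
        rw [← Real.rpow_two, ← Real.rpow_add ht0, show d1 - 2 + 2 = d1 by ring]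
      have htd2' : t ^ (d2 - 1) = t ^ (d2 - 2) * t := by
        have h := Real.rpow_add ht0 (d2 - 2) 1
        rw [Real.rpow_one] at h
        rw [show d2 - 1 = d2 - 2 + 1 by ring, h]
      have htd1' : t ^ (d1 - 1) = t ^ (d1 - 2) * t := by
        have h := Real.rpow_add ht0 (d1 - 2) 1
        rw [Real.rpow_one] at h
        rw [show d1 - 1 = d1 - 2 + 1 by ring, h]
      have htm2 : t ^ (-2 : ℝ) = (t ^ 2)⁻¹ := by
        rw [show (-2 : ℝ) = -(2 : ℝ) by norm_num, Real.rpow_neg ht0.le, Real.rpow_two]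
      simp only [hw]
      rw [hB t ht0, htd2, htd1, htd2', htd1', htm2, hC]
      field_simp
      ring
    rw [intervalIntegral.integral_congr hcongr]
    have j2 : IntervalIntegrable
        (fun t => C * d2 * ((d2 - 1) * t ^ (d2 - 2) * F d2 t)) volume a x :=
      ContinuousOn.intervalIntegrable
        (continuousOn_const.mul
          ((continuousOn_const.mul (hcontpow (d2 - 2))).mul (hFcont d2)))
    have j1 : IntervalIntegrable
        (fun t => C * d1 * ((d1 - 1) * t ^ (d1 - 2) * F d1 t)) volume a x :=
      ContinuousOn.intervalIntegrable
        (continuousOn_const.mul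
          ((continuousOn_const.mul (hcontpow (d1 - 2))).mul (hFcont d1)))
    have j3 : IntervalIntegrable
        (fun t => C * (d2 - d1) * (Prof t * t ^ (-2 : ℝ))) volume a x :=
      ((prof_int hPint ha hx (-2)).intervalIntegrable).const_mul _
    have Q2 : ∫ t in a..x, (d2 - 1) * t ^ (d2 - 2) * ∫ z in a..t, Prof z * z ^ (-d2 - 1)
        = x ^ (d2 - 1) * (∫ z in a..x, Prof z * z ^ (-d2 - 1))
          - ∫ z in a..x, z ^ (d2 - 1) * (Prof z * z ^ (-d2 - 1)) :=
      parts_gen _ (fun t => t ^ (d2 - 1)) (fun t => (d2 - 1) * t ^ (d2 - 2)) a x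
        (prof_int hPint ha hx _) (hders d2) (continuousOn_const.mul (hcontpow (d2 - 2)))
    have Q1 : ∫ t in a..x, (d1 - 1) * t ^ (d1 - 2) * ∫ z in a..t, Prof z * z ^ (-d1 - 1)
        = x ^ (d1 - 1) * (∫ z in a..x, Prof z * z ^ (-d1 - 1))
          - ∫ z in a..x, z ^ (d1 - 1) * (Prof z * z ^ (-d1 - 1)) :=
      parts_gen _ (fun t => t ^ (d1 - 1)) (fun t => (d1 - 1) * t ^ (d1 - 2)) a x
        (prof_int hPint ha hx _) (hders d1) (continuousOn_const.mul (hcontpow (d1 - 2)))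
    have hcan : ∀ (p : ℝ), ∫ z in a..x, z ^ (p - 1) * (Prof z * z ^ (-p - 1))
        = ∫ z in a..x, Prof z * z ^ (-2 : ℝ) := by
      intro p
      refine intervalIntegral.integral_congr (fun z hz => ?_)
      have hz0 : 0 < z := hsub hx hz
      have : z ^ (p - 1) * z ^ (-p - 1) = z ^ (-2 : ℝ) := by
        rw [← Real.rpow_add hz0, show p - 1 + (-p - 1) = (-2 : ℝ) by ring]
      show z ^ (p - 1) * (Prof z * z ^ (-p - 1)) = Prof z * z ^ (-2 : ℝ)
      rw [← this]; ring
    rw [intervalIntegral.integral_add (j2.sub j1) j3,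
      intervalIntegral.integral_sub j2 j1,
      intervalIntegral.integral_const_mul, intervalIntegral.integral_const_mul,
      intervalIntegral.integral_const_mul]
    simp only [hF]
    rw [Q2, Q1, hcan d2, hcan d1]
    simp only [hw, hF]
    ring
end

section
/- Let d₁ = −2, d₂ = −1, 0 < x₁ < x₂, and Π(x) = 2·𝟙_{[x₁,x₂]}(x) − 1 on (0,∞). The system ∫ₐᵇ z^{−d₂−1}Π(z)dz = 0, ∫ₐᵇ z^{−d₁−1}Π(z)dz = 0 with 0 < a < b < ∞ has a solution if and only if x₁ > x₂/3, in which case the unique solution is a = (3x₁ − x₂)/2, b = (3x₂ − x₁)/2. -/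
open MeasureTheory

lemma stmt12_piece_const (Prof : ℝ → ℝ) (p q s : ℝ) (hpq : p ≤ q)
    (h : ∀ z ∈ Set.Ioo p q, Prof z = s) :
    (∫ z in p..q, Prof z) = s * (q - p) ∧
    (∫ z in p..q, z * Prof z) = s * (q^2 - p^2) / 2 := by
  constructor
  · rw [intervalIntegral.integral_of_le hpq, MeasureTheory.integral_Ioc_eq_integral_Ioo,
      MeasureTheory.setIntegral_congr_fun measurableSet_Ioo (g := fun _ => s) (fun z hz => h z hz)]
    simp [Real.volume_Ioo, ENNReal.toReal_ofReal (sub_nonneg.2 hpq)]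
    rw [max_eq_left (sub_nonneg.2 hpq)]; ring
  · rw [intervalIntegral.integral_of_le hpq, MeasureTheory.integral_Ioc_eq_integral_Ioo,
      MeasureTheory.setIntegral_congr_fun measurableSet_Ioo (g := fun z => z * s)
        (fun z hz => by rw [h z hz]),
      ← MeasureTheory.integral_Ioc_eq_integral_Ioo, ← intervalIntegral.integral_of_le hpq,
      intervalIntegral.integral_mul_const, integral_id]
    ring

lemma stmt12_compute (x1 x2 : ℝ) (h12 : x1 ≤ x2) (Prof : ℝ → ℝ)
    (hP : ∀ x : ℝ, Prof x = 2 * Set.indicator (Set.Icc x1 x2) (fun _ => (1 : ℝ)) x - 1)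
    (a b : ℝ) (hab : a ≤ b) :
    (∫ z in a..b, Prof z)
      = 2 * (max a (min b x2) - max a (min b x1)) - (b - a) ∧
    (∫ z in a..b, z * Prof z)
      = ((max a (min b x2))^2 - (max a (min b x1))^2) - (b^2 - a^2) / 2 := by
  have hProf : Prof = fun x => 2 * Set.indicator (Set.Icc x1 x2) (fun _ => (1 : ℝ)) x - 1 :=
    funext hP
  have hI : ∀ p q : ℝ, IntervalIntegrable Prof volume p q := by
    intro p q
    rw [hProf]
    apply IntervalIntegrable.sub _ intervalIntegrable_const
    apply IntervalIntegrable.const_mul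
    rw [intervalIntegrable_iff]
    refine (MeasureTheory.integrable_indicator_iff measurableSet_Icc).2 ?_
    exact MeasureTheory.integrableOn_const
      (lt_of_le_of_lt (Measure.restrict_apply_le _ _) measure_Icc_lt_top).ne
  have hI2 : ∀ p q : ℝ, IntervalIntegrable (fun z => z * Prof z) volume p q := by
    intro p q
    exact (hI p q).continuousOn_mul continuous_id.continuousOn
  set c := max a (min b x1) with hc
  set d := max a (min b x2) with hd
  have hac : a ≤ c := le_max_left _ _
  have hcd : c ≤ d := max_le_max le_rfl (min_le_min le_rfl h12)
  have hdb : d ≤ b := max_le hab (min_le_left _ _)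
  -- pointwise values on the three open pieces
  have P1 : ∀ z ∈ Set.Ioo a c, Prof z = -1 := by
    intro z hz
    have hzx1 : z < x1 := by
      rcases lt_max_iff.1 hz.2 with h | h
      · exact absurd hz.1 (not_lt.2 h.le)
      · exact lt_of_lt_of_le h (min_le_right _ _)
    rw [hP, Set.indicator_of_notMem (fun hm => absurd hm.1 (not_le.2 hzx1))]
    ring
  have P2 : ∀ z ∈ Set.Ioo c d, Prof z = 1 := by
    intro z hz
    have hza : a < z := lt_of_le_of_lt hac hz.1
    have hzmin : z < min b x2 := by
      rcases lt_max_iff.1 hz.2 with h | h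
      · exact absurd hza (not_lt.2 h.le)
      · exact h
    have hzb : z < b := lt_of_lt_of_le hzmin (min_le_left _ _)
    have hzx2 : z < x2 := lt_of_lt_of_le hzmin (min_le_right _ _)
    have hzx1 : x1 < z := by
      have hmz : min b x1 < z := lt_of_le_of_lt (le_max_right a _) hz.1
      rcases le_total b x1 with h | h
      · rw [min_eq_left h] at hmz
        exact absurd hmz (not_lt.2 hzb.le)
      · rwa [min_eq_right h] at hmz
    rw [hP, Set.indicator_of_mem (Set.mem_Icc.mpr ⟨hzx1.le, hzx2.le⟩)]
    ring
  have P3 : ∀ z ∈ Set.Ioo d b, Prof z = -1 := by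
    intro z hz
    have hzx2 : x2 < z := by
      have hmz : min b x2 < z := lt_of_le_of_lt (le_max_right a _) hz.1
      rcases le_total b x2 with h | h
      · rw [min_eq_left h] at hmz
        exact absurd hmz (not_lt.2 hz.2.le)
      · rwa [min_eq_right h] at hmz
    rw [hP, Set.indicator_of_notMem (fun hm => absurd hm.2 (not_le.2 hzx2))]
    ring
  have Q1 := stmt12_piece_const Prof a c (-1) hac P1
  have Q2 := stmt12_piece_const Prof c d 1 hcd P2
  have Q3 := stmt12_piece_const Prof d b (-1) hdb P3
  have split1 : (∫ z in a..b, Prof z)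
      = (∫ z in a..c, Prof z) + (∫ z in c..d, Prof z) + (∫ z in d..b, Prof z) := by
    rw [intervalIntegral.integral_add_adjacent_intervals (hI a c) (hI c d),
      intervalIntegral.integral_add_adjacent_intervals (hI a d) (hI d b)]
  have split2 : (∫ z in a..b, z * Prof z)
      = (∫ z in a..c, z * Prof z) + (∫ z in c..d, z * Prof z) + (∫ z in d..b, z * Prof z) := by
    rw [intervalIntegral.integral_add_adjacent_intervals (hI2 a c) (hI2 c d),
      intervalIntegral.integral_add_adjacent_intervals (hI2 a d) (hI2 d b)]
  constructor
  · rw [split1, Q1.1, Q2.1, Q3.1]; ring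
  · rw [split2, Q1.2, Q2.2, Q3.2]; ring

lemma stmt12_core (x1 x2 : ℝ) (h1 : 0 < x1) (h12 : x1 < x2) (Prof : ℝ → ℝ)
    (hP : ∀ x : ℝ, Prof x = 2 * Set.indicator (Set.Icc x1 x2) (fun _ => (1 : ℝ)) x - 1)
    (a b : ℝ) (ha : 0 < a) (hab : a < b) :
    ((∫ z in a..b, Prof z) = 0 ∧ (∫ z in a..b, z * Prof z) = 0) ↔
      (a = (3 * x1 - x2) / 2 ∧ b = (3 * x2 - x1) / 2) := by
  obtain ⟨C1, C2⟩ := stmt12_compute x1 x2 h12.le Prof hP a b hab.le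
  set c := max a (min b x1) with hc
  set d := max a (min b x2) with hd
  constructor
  · rintro ⟨E1, E2⟩
    rw [C1] at E1
    rw [C2] at E2
    -- from E1 : 2*(d - c) = b - a, from E2 : d^2 - c^2 = (b^2-a^2)/2
    have hdc : d - c = (b - a) / 2 := by linarith
    have hdcpos : 0 < d - c := by linarith
    have hsum : d + c = a + b := by
      have h2 : (d - c) * (d + c) = (b - a) / 2 * (a + b) := by nlinarith
      rw [hdc] at h2
      have hba : (0:ℝ) < (b - a) / 2 := by linarith
      exact mul_left_cancel₀ (ne_of_gt hba) h2
    have hcval : c = (3 * a + b) / 4 := by linarith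
    have hdval : d = (a + 3 * b) / 4 := by linarith
    have hacs : a < c := by rw [hcval]; linarith
    have hcb : c < b := by rw [hcval]; linarith
    have had : a < d := by rw [hdval]; linarith
    have hdbs : d < b := by rw [hdval]; linarith
    have hcx1 : c = x1 := by
      have h1' : c = min b x1 := by
        rcases max_choice a (min b x1) with h | h <;> rw [← hc] at h
        · rw [h] at hacs; exact absurd hacs (lt_irrefl a)
        · exact h
      rcases min_choice b x1 with h | h
      · rw [h] at h1'; rw [h1'] at hcb; exact absurd hcb (lt_irrefl b)
      · rw [h] at h1'; exact h1'
    have hdx2 : d = x2 := by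
      have h1' : d = min b x2 := by
        rcases max_choice a (min b x2) with h | h <;> rw [← hd] at h
        · rw [h] at had; exact absurd had (lt_irrefl a)
        · exact h
      rcases min_choice b x2 with h | h
      · rw [h] at h1'; rw [h1'] at hdbs; exact absurd hdbs (lt_irrefl b)
      · rw [h] at h1'; exact h1' 
    have hx1v : x1 = (3 * a + b) / 4 := by rw [← hcx1, hcval]
    have hx2v : x2 = (a + 3 * b) / 4 := by rw [← hdx2, hdval]
    constructor
    · rw [hx1v, hx2v]; ring
    · rw [hx1v, hx2v]; ring
  · rintro ⟨ha', hb'⟩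
    have hax1 : a < x1 := by rw [ha']; linarith
    have hx1b : x1 < b := by rw [hb']; linarith
    have hx2b : x2 < b := by rw [hb']; linarith
    have hcx1 : c = x1 := by
      rw [hc, min_eq_right hx1b.le, max_eq_right hax1.le]
    have hdx2 : d = x2 := by
      rw [hd, min_eq_right hx2b.le, max_eq_right (le_of_lt (lt_trans hax1 h12))]
    constructor
    · rw [C1, hcx1, hdx2, ha', hb']; ring
    · rw [C2, hcx1, hdx2, ha', hb']; ring

/-- Example 1: with d₁ = −2, d₂ = −1 and Π = 2·𝟙_{[x₁,x₂]} − 1, the system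
∫ₐᵇ z^{−d₂−1}Π = 0, ∫ₐᵇ z^{−d₁−1}Π = 0, 0 < a < b, has a solution iff
x₁ > x₂/3, in which case the unique solution is a = (3x₁−x₂)/2, b = (3x₂−x₁)/2. -/
theorem stmt_12 (x1 x2 : ℝ) (h1 : 0 < x1) (h12 : x1 < x2)
    (d1 d2 : ℝ) (hd1 : d1 = -2) (hd2 : d2 = -1)
    (Prof : ℝ → ℝ)
    (hP : ∀ x : ℝ, Prof x = 2 * Set.indicator (Set.Icc x1 x2) (fun _ => (1 : ℝ)) x - 1) :
    ((∃ a b : ℝ, 0 < a ∧ a < b ∧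
        (∫ z in a..b, z ^ (-d2 - 1) * Prof z) = 0 ∧
        (∫ z in a..b, z ^ (-d1 - 1) * Prof z) = 0) ↔ x2 / 3 < x1) ∧
    (∀ a b : ℝ, 0 < a → a < b →
      (∫ z in a..b, z ^ (-d2 - 1) * Prof z) = 0 →
      (∫ z in a..b, z ^ (-d1 - 1) * Prof z) = 0 →
      a = (3 * x1 - x2) / 2 ∧ b = (3 * x2 - x1) / 2) := by
  subst hd1 hd2
  have e2 : (-(-1 : ℝ) - 1) = 0 := by norm_num
  have e1 : (-(-2 : ℝ) - 1) = 1 := by norm_num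
  simp only [e2, e1, Real.rpow_zero, Real.rpow_one, one_mul]
  constructor
  · constructor
    · rintro ⟨a, b, ha, hab, E1, E2⟩
      have := (stmt12_core x1 x2 h1 h12 Prof hP a b ha hab).1 ⟨E1, E2⟩
      have ha' : a = (3 * x1 - x2) / 2 := this.1
      rw [ha'] at ha
      linarith
    · intro hx
      refine ⟨(3 * x1 - x2) / 2, (3 * x2 - x1) / 2, by linarith, by linarith, ?_⟩
      have := (stmt12_core x1 x2 h1 h12 Prof hP ((3 * x1 - x2) / 2) ((3 * x2 - x1) / 2)
        (by linarith) (by linarith)).2 ⟨rfl, rfl⟩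
      exact this
  · intro a b ha hab E1 E2
    exact (stmt12_core x1 x2 h1 h12 Prof hP a b ha hab).1 ⟨E1, E2⟩
end

section
/- Let α, σ be as in the Engelbert–Schmidt setting and fix m < a < b < M. The function v(x) = (∫ₐˣ exp(−∫ₐ^{z₁} 2α(z₂)/σ(z₂)² dz₂) dz₁) / (∫ₐᵇ exp(−∫ₐ^{z₁} 2α(z₂)/σ(z₂)² dz₂) dz₁) is the unique C¹ function with absolutely continuous derivative solving α v' + (σ²/2) v'' = 0 a.e. on [a,b] with boundary conditions v(a) = 0, v(b) = 1; moreover 0 < v(x) < 1 for all x ∈ (a,b), and v is strictly increasing. -/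
open MeasureTheory Set intervalIntegral Filter Topology

lemma keyFTC (g : ℝ → ℝ) (hg : Integrable g (volume : Measure ℝ))
    (Φ Φ' : ℝ → ℝ) (hΦ : ∀ y, HasDerivAt Φ (Φ' y) y) (hΦ' : Continuous Φ')
    (a x : ℝ) (hax : a ≤ x) :
    ∫ t in a..x, g t * Φ' (∫ s in a..t, g s) = Φ (∫ s in a..x, g s) - Φ 0 := by
  choose φ hφsupp hφclose hφcont hφint using
    fun n : ℕ => hg.exists_hasCompactSupport_integral_sub_le
      (ε := 1/(n+1)) (by positivity)
  set G : ℝ → ℝ := fun t => ∫ s in a..t, g s with hG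
  set Gn : ℕ → ℝ → ℝ := fun n t => ∫ s in a..t, φ n s with hGn
  have hGcont : Continuous G := intervalIntegral.continuous_primitive
    (fun c d => hg.intervalIntegrable) a
  have hGncont : ∀ n, Continuous (Gn n) := fun n =>
    intervalIntegral.continuous_primitive (fun c d => (hφint n).intervalIntegrable) a
  -- closeness of primitives
  have hclose : ∀ n t, |Gn n t - G t| ≤ 1/(n+1) := by
    intro n t
    have h1 : Gn n t - G t = ∫ s in a..t, (φ n s - g s) := by
      rw [intervalIntegral.integral_sub (hφint n).intervalIntegrable hg.intervalIntegrable]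
    rw [h1]
    calc |∫ s in a..t, (φ n s - g s)| ≤ ∫ s in uIoc a t, |φ n s - g s| := by
          simpa [Real.norm_eq_abs] using
            intervalIntegral.norm_integral_le_integral_norm_uIoc
              (f := fun s => φ n s - g s) (a := a) (b := t) (μ := volume)
      _ ≤ 1/(n+1) := le_trans (by
          apply setIntegral_le_integral (((hφint n).sub hg).abs)
          filter_upwards with s using abs_nonneg _) (by
          simpa [abs_sub_comm] using hφclose n)
  have htend0 : Tendsto (fun n : ℕ => 1/((n:ℝ)+1)) atTop (nhds 0) :=
    tendsto_one_div_add_atTop_nhds_zero_nat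
  have hGnlim : ∀ t, Tendsto (fun n => Gn n t) atTop (nhds (G t)) := by
    intro t
    have h0 : Tendsto (fun n => Gn n t - G t) atTop (nhds 0) :=
      squeeze_zero_norm (fun n => by simpa [Real.norm_eq_abs] using hclose n t) htend0
    simpa using h0.add_const (G t)
  -- per-n FTC
  have hFTCn : ∀ n, ∫ t in a..x, φ n t * Φ' (Gn n t) = Φ (Gn n x) - Φ (Gn n a) := by
    intro n
    apply intervalIntegral.integral_eq_sub_of_hasDerivAt
    · intro t ht
      have hd : HasDerivAt (Gn n) (φ n t) t :=
        intervalIntegral.integral_hasDerivAt_right (hφint n).intervalIntegrable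
          ((hφcont n).stronglyMeasurableAtFilter _ _) (hφcont n).continuousAt
      simpa [mul_comm, Function.comp_def] using (hΦ (Gn n t)).comp t hd
    · exact ((hφcont n).mul (hΦ'.comp (hGncont n))).intervalIntegrable a x
  have hFTCn' : ∀ n, ∫ t in a..x, φ n t * Φ' (Gn n t) = Φ (Gn n x) - Φ 0 := by
    intro n
    rw [hFTCn n]
    congr 2
    simp [hGn]
  set R : ℝ := (∫ s, |g s|) + 1 with hRdef
  have hg0 : (0:ℝ) ≤ ∫ s, |g s| := integral_nonneg fun s => abs_nonneg _
  obtain ⟨M, hM⟩ := (isCompact_Icc (a := -R) (b := R)).exists_bound_of_continuousOn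
    hΦ'.continuousOn
  have hM0 : 0 ≤ M := le_trans (norm_nonneg (Φ' 0))
    (hM 0 ⟨by simp [hRdef]; linarith, by simp [hRdef]; linarith⟩)
  have habs : ∀ (h : ℝ → ℝ), Integrable h volume → ∀ t, |∫ s in a..t, h s| ≤ ∫ s, |h s| := by
    intro h hh t
    calc |∫ s in a..t, h s| ≤ ∫ s in uIoc a t, |h s| := by
          simpa [Real.norm_eq_abs] using
            intervalIntegral.norm_integral_le_integral_norm_uIoc (f := h) (a := a) (b := t)
              (μ := volume)
      _ ≤ ∫ s, |h s| := setIntegral_le_integral hh.abs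
          (by filter_upwards with s using abs_nonneg _)
  have hGR : ∀ t, G t ∈ Icc (-R) R := by
    intro t
    have h4 : |G t| ≤ R := le_trans (habs g hg t) (by rw [hRdef]; linarith)
    rw [mem_Icc]
    exact abs_le.mp h4
  have hφl1 : ∀ n, ∫ s, |φ n s - g s| ≤ 1/(n+1) := by
    intro n
    refine le_trans (le_of_eq ?_) (hφclose n)
    simp_rw [Real.norm_eq_abs, abs_sub_comm]
  have hGnR : ∀ n t, Gn n t ∈ Icc (-R) R := by
    intro n t
    have h1 := habs (φ n) (hφint n) t
    have h2 : ∫ s, |φ n s| ≤ (∫ s, |g s|) + 1/(n+1) := by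
      have : ∀ s, |φ n s| ≤ |g s| + |φ n s - g s| := fun s => by
        have := abs_sub_abs_le_abs_sub (φ n s) (g s); linarith [abs_nonneg (φ n s - g s)]
      calc ∫ s, |φ n s| ≤ ∫ s, (|g s| + |φ n s - g s|) :=
            integral_mono (hφint n).abs (hg.abs.add ((hφint n).sub hg).abs) this
        _ = (∫ s, |g s|) + ∫ s, |φ n s - g s| := integral_add hg.abs ((hφint n).sub hg).abs
        _ ≤ (∫ s, |g s|) + 1/(n+1) := by linarith [hφl1 n]
    have h3 : (1:ℝ)/(n+1) ≤ 1 := by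
      rw [div_le_one (by positivity)]; simp
    have h4 : |Gn n t| ≤ R := le_trans h1 (by rw [hRdef]; linarith)
    rw [mem_Icc]
    exact abs_le.mp h4
  have hMG : ∀ t, |Φ' (G t)| ≤ M := fun t => by
    simpa [Real.norm_eq_abs] using hM _ (hGR t)
  have hMGn : ∀ n t, |Φ' (Gn n t)| ≤ M := fun n t => by
    simpa [Real.norm_eq_abs] using hM _ (hGnR n t)
  -- integrability of pieces
  have hJint : IntervalIntegrable (fun t => g t * Φ' (G t)) volume a x :=
    hg.intervalIntegrable.mul_continuousOn (hΦ'.comp hGcont).continuousOn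
  have hAint : ∀ n, IntervalIntegrable (fun t => (φ n t - g t) * Φ' (Gn n t)) volume a x :=
    fun n => ((hφint n).sub hg).intervalIntegrable.mul_continuousOn
      (hΦ'.comp (hGncont n)).continuousOn
  have hBint : ∀ n, IntervalIntegrable (fun t => g t * (Φ' (Gn n t) - Φ' (G t))) volume a x :=
    fun n => hg.intervalIntegrable.mul_continuousOn
      ((hΦ'.comp (hGncont n)).sub (hΦ'.comp hGcont)).continuousOn
  set J : ℝ := ∫ t in a..x, g t * Φ' (G t) with hJdef
  set A : ℕ → ℝ := fun n => ∫ t in a..x, (φ n t - g t) * Φ' (Gn n t) with hAdef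
  set B : ℕ → ℝ := fun n => ∫ t in a..x, g t * (Φ' (Gn n t) - Φ' (G t)) with hBdef
  have hsplit : ∀ n, ∫ t in a..x, φ n t * Φ' (Gn n t) = J + A n + B n := by
    intro n
    have heq : (fun t => φ n t * Φ' (Gn n t)) = fun t =>
        g t * Φ' (G t) + ((φ n t - g t) * Φ' (Gn n t) + g t * (Φ' (Gn n t) - Φ' (G t))) := by
      funext t; ring
    rw [heq, intervalIntegral.integral_add hJint ((hAint n).add (hBint n)),
      intervalIntegral.integral_add (hAint n) (hBint n), hJdef]
    ring
  have hA : Tendsto A atTop (nhds 0) := by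
    refine squeeze_zero_norm (fun n => ?_) ((by simpa using htend0.const_mul M : Tendsto (fun n : ℕ => M * (1/((n:ℝ)+1))) atTop (nhds 0)))
    · have h1 : |A n| ≤ ∫ t in a..x, |(φ n t - g t) * Φ' (Gn n t)| := by
        exact intervalIntegral.abs_integral_le_integral_abs hax
      have h2 : ∫ t in a..x, |(φ n t - g t) * Φ' (Gn n t)| ≤
          ∫ t in a..x, |φ n t - g t| * M := by
        apply intervalIntegral.integral_mono_on hax (hAint n).abs
          (((hφint n).sub hg).abs.intervalIntegrable.mul_const M)
        intro t _
        rw [abs_mul]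
        exact mul_le_mul_of_nonneg_left (hMGn n t) (abs_nonneg _)
      have h3 : ∫ t in a..x, |φ n t - g t| ≤ 1/(n+1) := by
        refine le_trans ?_ (hφl1 n)
        rw [intervalIntegral.integral_of_le hax]
        exact setIntegral_le_integral ((hφint n).sub hg).abs
          (by filter_upwards with s using abs_nonneg _)
      have h4 : ∫ t in a..x, |φ n t - g t| * M = (∫ t in a..x, |φ n t - g t|) * M :=
        intervalIntegral.integral_mul_const M _
      rw [Real.norm_eq_abs]
      calc |A n| ≤ (∫ t in a..x, |φ n t - g t|) * M := by rw [← h4]; exact le_trans h1 h2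
        _ ≤ (1/(n+1)) * M := mul_le_mul_of_nonneg_right h3 hM0
        _ = M * (1/(n+1)) := mul_comm _ _
  have hB : Tendsto B atTop (nhds 0) := by
    have hBset : ∀ n, B n = ∫ t in Ioc a x, g t * (Φ' (Gn n t) - Φ' (G t)) := fun n =>
      intervalIntegral.integral_of_le hax
    rw [show B = fun n => ∫ t in Ioc a x, g t * (Φ' (Gn n t) - Φ' (G t)) from funext hBset]
    have h0 : (0:ℝ) = ∫ t in Ioc a x, (0:ℝ) := by simp
    rw [h0]
    apply MeasureTheory.tendsto_integral_filter_of_dominated_convergence (fun t => |g t| * (2*M))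
    · filter_upwards with n
      exact (hg.aestronglyMeasurable.restrict).mul
        (((hΦ'.comp (hGncont n)).sub (hΦ'.comp hGcont)).aestronglyMeasurable.restrict)
    · filter_upwards with n
      filter_upwards with t
      rw [Real.norm_eq_abs, abs_mul]
      apply mul_le_mul_of_nonneg_left _ (abs_nonneg _)
      calc |Φ' (Gn n t) - Φ' (G t)| ≤ |Φ' (Gn n t)| + |Φ' (G t)| := abs_sub _ _
        _ ≤ 2*M := by linarith [hMGn n t, hMG t]
    · exact (hg.abs.mul_const (2*M)).restrict
    · filter_upwards with t
      have h1 : Tendsto (fun n => Φ' (Gn n t)) atTop (nhds (Φ' (G t))) :=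
        (hΦ'.tendsto (G t)).comp (hGnlim t)
      simpa using (h1.sub_const (Φ' (G t))).const_mul (g t)
  have h1 : Tendsto (fun n => ∫ t in a..x, φ n t * Φ' (Gn n t)) atTop (nhds J) := by
    simp_rw [hsplit]
    simpa using (tendsto_const_nhds.add hA).add hB
  have h2 : Tendsto (fun n => ∫ t in a..x, φ n t * Φ' (Gn n t)) atTop
      (nhds (Φ (G x) - Φ 0)) := by
    simp_rw [hFTCn']
    exact (((hΦ (G x)).continuousAt.tendsto).comp (hGnlim x)).sub_const (Φ 0)
  exact tendsto_nhds_unique h1 h2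

lemma keyFTC_on (g : ℝ → ℝ) (a b : ℝ) (hab : a ≤ b)
    (hg : IntegrableOn g (Icc a b) volume)
    (Φ Φ' : ℝ → ℝ) (hΦ : ∀ y, HasDerivAt Φ (Φ' y) y) (hΦ' : Continuous Φ')
    (x : ℝ) (hx : x ∈ Icc a b) :
    ∫ t in a..x, g t * Φ' (∫ s in a..t, g s) = Φ (∫ s in a..x, g s) - Φ 0 := by
  set g1 := (Icc a b).indicator g with hg1
  have hg1int : Integrable g1 volume := (integrable_indicator_iff measurableSet_Icc).2 hg
  have hcongr : ∀ t ∈ Icc a b, (∫ s in a..t, g1 s) = ∫ s in a..t, g s := by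
    intro t ht
    apply intervalIntegral.integral_congr
    intro s hs
    rw [uIcc_of_le ht.1] at hs
    exact indicator_of_mem (show s ∈ Icc a b from ⟨hs.1, le_trans hs.2 ht.2⟩) g
  have h1 := keyFTC g1 hg1int Φ Φ' hΦ hΦ' a x hx.1
  rw [hcongr x hx] at h1
  rw [← h1]
  apply intervalIntegral.integral_congr
  intro t ht
  rw [uIcc_of_le hx.1] at ht
  have htm : t ∈ Icc a b := ⟨ht.1, le_trans ht.2 hx.2⟩
  simp only [hg1, indicator_of_mem htm, hcongr t htm]
  exact (congrArg (fun y => g t * Φ' y) (hcongr t htm)).symm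

lemma gronwall_zero (g h : ℝ → ℝ) (a b : ℝ) (hab : a ≤ b)
    (hg : IntegrableOn g (Icc a b) volume) (hh : ContinuousOn h (Icc a b))
    (hineq : ∀ x ∈ Icc a b, |h x| ≤ ∫ t in a..x, |g t| * |h t|) :
    ∀ x ∈ Icc a b, h x = 0 := by
  obtain ⟨t₀, ht₀, hmax⟩ := (isCompact_Icc (a := a) (b := b)).exists_isMaxOn
    (nonempty_Icc.2 hab) hh.abs
  set M := |h t₀| with hMdef
  have hM : ∀ t ∈ Icc a b, |h t| ≤ M := fun t ht => hmax ht
  have hM0 : 0 ≤ M := abs_nonneg _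
  set G : ℝ → ℝ := fun x => ∫ t in a..x, |g t| with hGdef
  have hgabs : IntegrableOn (fun t => |g t|) (Icc a b) volume := hg.abs
  have hGcont : ContinuousOn G (Icc a b) := by
    have := intervalIntegral.continuousOn_primitive_interval (a := a) (b := b)
      (f := fun t => |g t|) (μ := volume) (by rwa [uIcc_of_le hab])
    rwa [uIcc_of_le hab] at this
  have hhcont : ∀ x ∈ Icc a b, ContinuousOn (fun t => |h t|) (Icc a x) :=
    fun x hx => (hh.mono (Icc_subset_Icc le_rfl hx.2)).abs
  have key : ∀ n : ℕ, ∀ x ∈ Icc a b, |h x| ≤ M * G x ^ n / n.factorial := by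
    intro n
    induction n with
    | zero => intro x hx; simpa using hM x hx
    | succ n ih =>
      intro x hx
      have hsub : Icc a x ⊆ Icc a b := Icc_subset_Icc le_rfl hx.2
      have huIcc : uIcc a x = Icc a x := uIcc_of_le hx.1
      have hgix : IntegrableOn (fun t => |g t|) (uIcc a x) volume := by
        rw [huIcc]; exact hgabs.mono_set hsub
      have hhint : IntervalIntegrable (fun t => |g t| * |h t|) volume a x :=
        hgix.intervalIntegrable.mul_continuousOn (by rw [huIcc]; exact (hh.mono hsub).abs)
      have hGn : ContinuousOn (fun t => M * G t ^ n / n.factorial) (Icc a x) := by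
        apply ContinuousOn.div_const
        exact continuousOn_const.mul ((hGcont.mono hsub).pow n)
      have hint2 : IntervalIntegrable (fun t => |g t| * (M * G t ^ n / n.factorial))
          volume a x :=
        hgix.intervalIntegrable.mul_continuousOn (by rw [huIcc]; exact hGn)
      have hΦd : ∀ y : ℝ, HasDerivAt (fun y => y^(n+1)/((n:ℝ)+1)) (y^n) y := by
        intro y
        have h1 := (hasDerivAt_pow (n+1) y).div_const ((n:ℝ)+1)
        refine h1.congr_deriv ?_
        have : ((n:ℝ)+1) ≠ 0 := by positivity
        field_simp
        simp
      have hftc := keyFTC_on (fun t => |g t|) a x hx.1 (hgabs.mono_set hsub)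
        _ _ hΦd (continuous_pow n) x (right_mem_Icc.2 hx.1)
      calc |h x| ≤ ∫ t in a..x, |g t| * |h t| := hineq x hx
        _ ≤ ∫ t in a..x, |g t| * (M * G t ^ n / n.factorial) := by
            apply intervalIntegral.integral_mono_on hx.1 hhint hint2
            intro t ht
            exact mul_le_mul_of_nonneg_left (ih t ⟨ht.1, le_trans ht.2 hx.2⟩) (abs_nonneg _)
        _ = (M / n.factorial) * ∫ t in a..x, |g t| * (G t ^ n) := by
            rw [← intervalIntegral.integral_const_mul]
            congr 1; funext t; ring
        _ = (M / n.factorial) * (G x ^ (n+1) / ((n:ℝ)+1)) := by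
            rw [hftc]
            rw [zero_pow (Nat.succ_ne_zero n), zero_div, sub_zero]
        _ = M * G x ^ (n+1) / (n+1).factorial := by
            rw [Nat.factorial_succ, div_mul_div_comm]
            push_cast
            ring_nf
  intro x hx
  have h2 : Filter.Tendsto (fun n : ℕ => M * G x ^ n / n.factorial) atTop (nhds 0) := by
    have h3 := FloorSemiring.tendsto_pow_div_factorial_atTop (G x)
    have := h3.const_mul M
    simpa [mul_div_assoc] using this
  have h3 : |h x| ≤ 0 := ge_of_tendsto' h2 (fun n => key n x hx)
  exact abs_eq_zero.1 (le_antisymm h3 (abs_nonneg _))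

/-- Scale-function formula: v(x) = ∫ₐˣ e^{−∫ₐ^{z₁} 2α/σ²}dz₁ / ∫ₐᵇ e^{−∫ₐ^{z₁} 2α/σ²}dz₁
is the unique Carathéodory solution of α v' + (σ²/2) v'' = 0 on [a,b] with
v(a) = 0, v(b) = 1; moreover 0 < v < 1 on (a,b) and v is strictly increasing. -/
theorem stmt_14 (I : Set ℝ) (hI : IsOpen I) (hIconn : I.OrdConnected)
    (α σ : ℝ → ℝ) (hmα : Measurable α) (hmσ : Measurable σ)
    (hσpos : ∀ x ∈ I, 0 < σ x)
    (hint1 : MeasureTheory.LocallyIntegrableOn (fun z => 1 / (σ z) ^ 2) I)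
    (hint2 : MeasureTheory.LocallyIntegrableOn (fun z => α z / (σ z) ^ 2) I)
    (a b : ℝ) (ha : a ∈ I) (hb : b ∈ I) (hab : a < b)
    (v : ℝ → ℝ)
    (hv : ∀ x : ℝ, v x =
      (∫ z1 in a..x, Real.exp (-∫ z2 in a..z1, 2 * α z2 / (σ z2) ^ 2)) /
      (∫ z1 in a..b, Real.exp (-∫ z2 in a..z1, 2 * α z2 / (σ z2) ^ 2))) :
    (∃ w : ℝ → ℝ,
      (∀ x ∈ Set.Icc a b, v x = v a + ∫ t in a..x, w t) ∧
      (∀ x ∈ Set.Icc a b, w x = w a + ∫ t in a..x, -(2 * α t / (σ t) ^ 2) * w t)) ∧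
    v a = 0 ∧ v b = 1 ∧
    (∀ u : ℝ → ℝ,
      (∃ w : ℝ → ℝ,
        (∀ x ∈ Set.Icc a b, u x = u a + ∫ t in a..x, w t) ∧
        (∀ x ∈ Set.Icc a b, w x = w a + ∫ t in a..x, -(2 * α t / (σ t) ^ 2) * w t)) →
      u a = 0 → u b = 1 → ∀ x ∈ Set.Icc a b, u x = v x) ∧
    (∀ x ∈ Set.Ioo a b, 0 < v x ∧ v x < 1) ∧
    StrictMonoOn v (Set.Icc a b) := by
  have hIcc : Icc a b ⊆ I := hIconn.out ha hb
  set g : ℝ → ℝ := fun t => 2 * α t / σ t ^ 2 with hgdef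
  have hgint : IntegrableOn g (Icc a b) volume := by
    have h1 : IntegrableOn (fun z => α z / σ z ^ 2) (Icc a b) volume :=
      hint2.integrableOn_compact_subset hIcc isCompact_Icc
    have h2 : IntegrableOn (fun x => 2 * (α x / σ x ^ 2)) (Icc a b) volume :=
      h1.const_mul (2:ℝ)
    apply h2.congr_fun _ measurableSet_Icc
    intro t _
    simp [hgdef, mul_div_assoc]
  set F : ℝ → ℝ := fun x => ∫ s in a..x, g s with hFdef
  set ρ : ℝ → ℝ := fun x => Real.exp (-F x) with hρdef
  have hFcont : ContinuousOn F (Icc a b) := by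
    have := intervalIntegral.continuousOn_primitive_interval (a := a) (b := b)
      (f := g) (μ := volume) (by rwa [uIcc_of_le hab.le])
    rwa [uIcc_of_le hab.le] at this
  have hρcont : ContinuousOn ρ (Icc a b) :=
    Real.continuous_exp.comp_continuousOn hFcont.neg
  have hρpos : ∀ x, 0 < ρ x := fun x => Real.exp_pos _
  have hρint : IntegrableOn ρ (Icc a b) volume :=
    hρcont.integrableOn_compact isCompact_Icc
  have hρa : ρ a = 1 := by simp [hρdef, hFdef]
  have hρii : ∀ c d : ℝ, c ∈ Icc a b → d ∈ Icc a b → IntervalIntegrable ρ volume c d := by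
    intro c d hc hd
    have h1 : IntegrableOn ρ (uIcc c d) volume := by
      apply hρint.mono_set
      rw [← uIcc_of_le hab.le]
      exact uIcc_subset_uIcc (by rwa [uIcc_of_le hab.le]) (by rwa [uIcc_of_le hab.le])
    exact h1.intervalIntegrable
  set D : ℝ := ∫ t in a..b, ρ t with hDdef
  have hDpos : 0 < D :=
    intervalIntegral.intervalIntegral_pos_of_pos_on
      (hρii a b (left_mem_Icc.2 hab.le) (right_mem_Icc.2 hab.le))
      (fun t _ => hρpos t) hab
  -- key identity
  have key1 : ∀ x ∈ Icc a b, (∫ t in a..x, g t * ρ t) = 1 - ρ x := by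
    intro x hx
    have hd : ∀ y : ℝ, HasDerivAt (fun y : ℝ => -Real.exp (-y)) (Real.exp (-y)) y := by
      intro y
      have h1 : HasDerivAt (fun y : ℝ => -y) (-1) y := (hasDerivAt_id y).neg
      have h2 := (Real.hasDerivAt_exp (-y)).comp y h1
      have h3 := h2.neg
      refine h3.congr_deriv ?_
      ring
    have h4 := keyFTC_on g a b hab.le hgint _ _ hd
      (Real.continuous_exp.comp continuous_neg) x hx
    simp only [neg_zero, Real.exp_zero] at h4
    rw [h4]
    show -Real.exp (-F x) - -1 = 1 - ρ x
    show -Real.exp (-F x) - -1 = 1 - Real.exp (-F x)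
    ring
  -- value facts
  have hva : v a = 0 := by rw [hv a]; simp
  have hvb : v b = 1 := by rw [hv b]; exact div_self hDpos.ne'
  have hmono : StrictMonoOn v (Icc a b) := by
    intro x hx y hy hxy
    rw [hv x, hv y]
    apply div_lt_div_of_pos_right _ hDpos
    have h1 : IntervalIntegrable ρ volume a x := hρii a x (left_mem_Icc.2 hab.le) hx
    have h2 : IntervalIntegrable ρ volume x y := hρii x y hx hy
    have h3 : (0:ℝ) < ∫ t in x..y, ρ t :=
      intervalIntegral.intervalIntegral_pos_of_pos_on h2 (fun t _ => hρpos t) hxy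
    have h4 : (∫ t in a..x, ρ t) + ∫ t in x..y, ρ t = ∫ t in a..y, ρ t :=
      intervalIntegral.integral_add_adjacent_intervals h1 h2
    show (∫ t in a..x, ρ t) < ∫ t in a..y, ρ t
    linarith
  have hIoo : ∀ x ∈ Ioo a b, 0 < v x ∧ v x < 1 := by
    intro x hx
    constructor
    · rw [← hva]
      exact hmono (left_mem_Icc.2 hab.le) ⟨hx.1.le, hx.2.le⟩ hx.1
    · rw [← hvb]
      exact hmono ⟨hx.1.le, hx.2.le⟩ (right_mem_Icc.2 hab.le) hx.2
  refine ⟨⟨fun t => ρ t / D, ?_, ?_⟩, hva, hvb, ?_, hIoo, hmono⟩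
  · intro x hx
    rw [hv x, hva, zero_add, intervalIntegral.integral_div]
  · intro x hx
    have heq : (fun t => -(2 * α t / σ t ^ 2) * (ρ t / D)) =
        fun t => (-(1/D)) * (g t * ρ t) := by
      funext t
      rw [hgdef]
      ring
    rw [heq, intervalIntegral.integral_const_mul, key1 x hx]
    show ρ x / D = ρ a / D + -(1 / D) * (1 - ρ x)
    rw [hρa]
    field_simp
    ring
  · rintro u ⟨w, hu1, hu2⟩ hua hub x hx
    have hgρ : ∀ t ∈ Icc a b, IntervalIntegrable (fun s => g s * ρ s) volume a t := by
      intro t ht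
      have h1 : IntegrableOn (fun s => g s * ρ s) (Icc a b) volume :=
        hgint.mul_continuousOn hρcont isCompact_Icc
      have h2 : IntegrableOn (fun s => g s * ρ s) (uIcc a t) volume := by
        rw [uIcc_of_le ht.1]; exact h1.mono_set (Icc_subset_Icc le_rfl ht.2)
      exact h2.intervalIntegrable
    set T : Set ℝ := {y | y ∈ Icc a b ∧
      IntervalIntegrable (fun t => -(2 * α t / σ t ^ 2) * w t) volume a y} with hTdef
    have haT : a ∈ T := ⟨left_mem_Icc.2 hab.le, IntervalIntegrable.refl⟩
    have hTne : T.Nonempty := ⟨a, haT⟩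
    have hTbdd : BddAbove T := ⟨b, fun y hy => hy.1.2⟩
    have hTdown : ∀ y ∈ T, ∀ z ∈ Icc a y, z ∈ T := by
      intro y hy z hz
      refine ⟨⟨hz.1, le_trans hz.2 hy.1.2⟩, ?_⟩
      apply hy.2.mono_set
      rw [uIcc_of_le hz.1, uIcc_of_le (le_trans hz.1 hz.2)]
      exact Icc_subset_Icc le_rfl hz.2
    set c := sSup T with hcdef
    have hac : a ≤ c := le_csSup hTbdd haT
    have hcb : c ≤ b := csSup_le hTne (fun y hy => hy.1.2)
    have hIcoT : Ico a c ⊆ T := by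
      intro y hy
      obtain ⟨t, htT, hyt⟩ := exists_lt_of_lt_csSup hTne hy.2
      exact hTdown t htT y ⟨hy.1, hyt.le⟩
    have hwT : ∀ x₀, x₀ ∈ T → ∀ t ∈ Icc a x₀, w t = w a * ρ t := by
      intro x₀ hx₀
      have hax₀ : a ≤ x₀ := hx₀.1.1
      have hx₀b : x₀ ≤ b := hx₀.1.2
      have hsub : Icc a x₀ ⊆ Icc a b := Icc_subset_Icc le_rfl hx₀b
      have hwii : ∀ t ∈ Icc a x₀,
          IntervalIntegrable (fun s => -(2 * α s / σ s ^ 2) * w s) volume a t :=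
        fun t ht => (hTdown x₀ hx₀ t ht).2
      have hwcont : ContinuousOn w (Icc a x₀) := by
        have hwi2 : IntegrableOn (fun t => -(2 * α t / σ t ^ 2) * w t)
            (uIcc a x₀) volume := by
          rw [uIcc_of_le hax₀, integrableOn_Icc_iff_integrableOn_Ioc]
          exact (intervalIntegrable_iff_integrableOn_Ioc_of_le hax₀).1 hx₀.2
        have hc1 : ContinuousOn
            (fun t => w a + ∫ s in a..t, -(2 * α s / σ s ^ 2) * w s) (Icc a x₀) := by
          apply continuousOn_const.add
          have := intervalIntegral.continuousOn_primitive_interval (a := a) (b := x₀)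
            (μ := volume) hwi2
          rwa [uIcc_of_le hax₀] at this
        apply ContinuousOn.congr hc1
        intro t ht
        exact hu2 t (hsub ht)
      have hh : ∀ t ∈ Icc a x₀, w t - w a * ρ t =
          ∫ s in a..t, -(g s) * (w s - w a * ρ s) := by
        intro t ht
        have e1 : w t = w a + ∫ s in a..t, -(2 * α s / σ s ^ 2) * w s := hu2 t (hsub ht)
        have e2 : (∫ s in a..t, g s * ρ s) = 1 - ρ t := key1 t (hsub ht)
        have e3 : (fun s => -(g s) * (w s - w a * ρ s)) =
            fun s => (-(2 * α s / σ s ^ 2) * w s) + w a * (g s * ρ s) := by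
          funext s; rw [hgdef]; ring
        rw [e3, intervalIntegral.integral_add (hwii t ht)
          ((hgρ t (hsub ht)).const_mul (w a)),
          intervalIntegral.integral_const_mul, e2]
        have e4 : (∫ s in a..t, -(2 * α s / σ s ^ 2) * w s) = w t - w a := by
          rw [e1]; ring
        rw [e4]; ring
      have hineq : ∀ t ∈ Icc a x₀, |w t - w a * ρ t| ≤
          ∫ s in a..t, |g s| * |w s - w a * ρ s| := by
        intro t ht
        rw [hh t ht]
        calc |∫ s in a..t, -(g s) * (w s - w a * ρ s)|
            ≤ ∫ s in a..t, |(-(g s)) * (w s - w a * ρ s)| :=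
              intervalIntegral.abs_integral_le_integral_abs ht.1
          _ = ∫ s in a..t, |g s| * |w s - w a * ρ s| := by
              apply intervalIntegral.integral_congr
              intro s _
              show |(-(g s)) * (w s - w a * ρ s)| = |g s| * |w s - w a * ρ s|
              rw [abs_mul, abs_neg]
      have hzero := gronwall_zero g (fun t => w t - w a * ρ t) a x₀ hax₀
        (hgint.mono_set hsub)
        (hwcont.sub (continuousOn_const.mul (hρcont.mono hsub))) hineq
      intro t ht
      have := hzero t ht
      linarith
    have hexpl : IntegrableOn (fun t => -(g t) * (w a * ρ t)) (Icc a b) volume := by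
      have h2 : IntegrableOn (fun t => g t * (-(w a) * ρ t)) (Icc a b) volume :=
        hgint.mul_continuousOn (continuousOn_const.mul hρcont) isCompact_Icc
      apply h2.congr_fun _ measurableSet_Icc
      intro t _; ring
    have hcT : c ∈ T := by
      by_cases hc : c ∈ T
      · exact hc
      have hacne : a ≠ c := fun h => hc (h ▸ haT)
      have haclt : a < c := lt_of_le_of_ne hac hacne
      have hwIco : ∀ t ∈ Ico a c, w t = w a * ρ t := fun t ht =>
        hwT t (hIcoT ht) t (right_mem_Icc.2 ht.1)
      have hae : (fun t => -(g t) * (w a * ρ t)) =ᵐ[volume.restrict (Icc a c)]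
          (fun t => -(2 * α t / σ t ^ 2) * w t) := by
        have hne : ∀ᵐ t : ℝ ∂volume, t ≠ c := by
          rw [MeasureTheory.ae_iff]
          simp only [not_not, setOf_eq_eq_singleton]
          exact Real.volume_singleton
        filter_upwards [ae_restrict_of_ae hne, ae_restrict_mem measurableSet_Icc]
          with t htne htmem
        have htI : t ∈ Ico a c := ⟨htmem.1, lt_of_le_of_ne htmem.2 htne⟩
        rw [hwIco t htI, hgdef]
      have h1 : IntegrableOn (fun t => -(2 * α t / σ t ^ 2) * w t) (Icc a c) volume :=
        ((hexpl.mono_set (Icc_subset_Icc le_rfl hcb)).congr_fun_ae hae)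
      refine ⟨⟨hac, hcb⟩, ?_⟩
      rw [intervalIntegrable_iff_integrableOn_Ioc_of_le hac]
      exact h1.mono_set Ioc_subset_Icc_self
    have hceqb : c = b := by
      by_contra hne
      have hclt : c < b := lt_of_le_of_ne hcb hne
      have hwconst : ∀ t ∈ Ioc c b, w t = w a := by
        intro t ht
        have htT : t ∉ T := fun hTt => absurd (le_csSup hTbdd hTt) (not_le.2 ht.1)
        have hni : ¬ IntervalIntegrable (fun s => -(2 * α s / σ s ^ 2) * w s)
            volume a t := fun hint => htT ⟨⟨le_trans hac ht.1.le, ht.2⟩, hint⟩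
        rw [hu2 t ⟨le_trans hac ht.1.le, ht.2⟩, intervalIntegral.integral_undef hni,
          add_zero]
      have hbT : b ∈ T := by
        refine ⟨right_mem_Icc.2 hab.le, ?_⟩
        rw [intervalIntegrable_iff_integrableOn_Ioc_of_le hab.le]
        apply IntegrableOn.mono_set _ Ioc_subset_Icc_self
        rw [← Icc_union_Ioc_eq_Icc hac hcb]
        apply MeasureTheory.IntegrableOn.union
        · apply (hexpl.mono_set (Icc_subset_Icc le_rfl hcb)).congr_fun _ measurableSet_Icc
          intro t ht
          show -(g t) * (w a * ρ t) = -(2 * α t / σ t ^ 2) * w t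
          rw [hwT c hcT t ht]
        · have h3 : IntegrableOn (fun t => -(g t) * w a) (Ioc c b) volume := by
            have h4 : IntegrableOn (fun t => g t * (-(w a))) (Ioc c b) volume :=
              (hgint.mono_set (fun t ht => ⟨le_trans hac ht.1.le, ht.2⟩)).mul_const _
            apply h4.congr_fun _ measurableSet_Ioc
            intro t _; ring
          apply h3.congr_fun _ measurableSet_Ioc
          intro t ht
          show -(g t) * w a = -(2 * α t / σ t ^ 2) * w t
          rw [hwconst t ht]
      exact absurd (le_csSup hTbdd hbT) (not_le.2 hclt)
    have hbT : b ∈ T := hceqb ▸ hcT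
    have hwall : ∀ t ∈ Icc a b, w t = w a * ρ t := hwT b hbT
    have hux : ∀ y, y ∈ Icc a b → u y = w a * ∫ t in a..y, ρ t := by
      intro y hy
      rw [hu1 y hy, hua, zero_add]
      rw [show (∫ t in a..y, w t) = ∫ t in a..y, w a * ρ t from
        intervalIntegral.integral_congr (fun t ht => by
          rw [uIcc_of_le hy.1] at ht
          exact hwall t ⟨ht.1, le_trans ht.2 hy.2⟩)]
      rw [intervalIntegral.integral_const_mul]
    have hwaD : w a * D = 1 := by
      have h5 := hux b (right_mem_Icc.2 hab.le)
      rw [hub] at h5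
      exact h5.symm
    rw [hux x hx, hv x, eq_div_iff hDpos.ne']
    calc w a * (∫ t in a..x, ρ t) * D = (∫ t in a..x, ρ t) * (w a * D) := by ring
      _ = intervalIntegral ρ a x volume := by rw [hwaD]; ring
end

section
/- Let [a,b] and [a',b'] be compact subintervals of I with a < a' < b < b', and suppose both satisfy: the two-point boundary value problem r v − α v' − (σ²/2)v'' − Π = 0, v at endpoints zero, has solution strictly positive in the open interval (denote these solutions v^{[a,b]} and v^{[a',b']}). Assume φ₁₂(x,y) > 0 for all x < y in I. Then the solution v^{[a,b']} with zero boundary values at a and b' satisfies v^{[a,b']}(x) > max(v^{[a,b]}(x), v^{[a',b']}(x)) for all x ∈ (a,b'); in particular v^{[a,b']} > 0 on (a,b'). -/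
open MeasureTheory Set intervalIntegral

namespace S16

lemma mul_int {k E : ℝ → ℝ} {c d : ℝ}
    (hk : IntegrableOn k (Icc c d)) (hE : ContinuousOn E (Icc c d)) :
    IntegrableOn (fun z => k z * E z) (Icc c d) := by
  by_cases hcd : c ≤ d
  · obtain ⟨C, hC⟩ := isCompact_Icc.exists_bound_of_continuousOn hE
    have hC0 : 0 ≤ C := le_trans (norm_nonneg _) (hC c (left_mem_Icc.2 hcd))
    have hmeas : AEStronglyMeasurable (fun z => k z * E z) (volume.restrict (Icc c d)) :=
      hk.aestronglyMeasurable.mul (hE.aestronglyMeasurable measurableSet_Icc)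
    refine Integrable.mono (hk.norm.const_mul C) hmeas ?_
    refine (ae_restrict_iff' measurableSet_Icc).2 (Filter.Eventually.of_forall fun z hz => ?_)
    have h1 := hC z hz
    simp only [Real.norm_eq_abs, abs_mul, norm_mul] at *
    have : |k z| * |E z| ≤ |k z| * C := by
      exact mul_le_mul_of_nonneg_left h1 (abs_nonneg _)
    calc |k z| * |E z| ≤ |k z| * C := this
      _ ≤ |C| * |(|k z|)| := by
          rw [abs_abs, abs_of_nonneg hC0]; ring_nf; exact le_refl _
  · rw [Icc_eq_empty hcd]; exact integrableOn_empty

lemma mul_int' {k E : ℝ → ℝ} {c d p q : ℝ} (hk : IntegrableOn k (Icc c d))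
    (hE : ContinuousOn E (Icc c d)) (hp : p ∈ Icc c d) (hq : q ∈ Icc c d) :
    IntervalIntegrable (fun z => k z * E z) volume p q :=
  ((mul_int hk hE).mono_set (uIcc_subset_Icc hp hq)).intervalIntegrable

lemma gron_core {p q K : ℝ} (hpq : p ≤ q) {h N : ℝ → ℝ}
    (hh : IntegrableOn h (Icc p q)) (hh0 : ∀ z ∈ Icc p q, 0 ≤ h z)
    (hN : ContinuousOn N (Icc p q)) (hN0 : ∀ z ∈ Icc p q, 0 ≤ N z)
    (key : ∀ y ∈ Icc p q, N y ≤ K + ∫ z in p..y, h z * N z) :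
    ∃ Q, 0 ≤ Q ∧ (∀ y ∈ Icc p q, N y ≤ Q) ∧ Q ≤ K + (∫ z in p..q, h z) * Q := by
  obtain ⟨y₀, hy₀, hmax⟩ := isCompact_Icc.exists_isMaxOn (nonempty_Icc.2 hpq) hN
  refine ⟨N y₀, hN0 y₀ hy₀, hmax, ?_⟩
  have hsub : Icc p y₀ ⊆ Icc p q := Icc_subset_Icc le_rfl hy₀.2
  have hint : IntervalIntegrable (fun z => h z * N z) volume p y₀ :=
    mul_int' hh hN (left_mem_Icc.2 hpq) hy₀
  have hint2 : IntervalIntegrable (fun z => h z * N y₀) volume p y₀ :=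
    mul_int' hh continuousOn_const (left_mem_Icc.2 hpq) hy₀
  have b1 : (∫ z in p..y₀, h z * N z) ≤ ∫ z in p..y₀, h z * N y₀ :=
    integral_mono_on hy₀.1 hint hint2 (fun z hz =>
      mul_le_mul_of_nonneg_left (hmax (hsub hz)) (hh0 z (hsub hz)))
  have b2 : (∫ z in p..y₀, h z * N y₀) = (∫ z in p..y₀, h z) * N y₀ :=
    integral_mul_const _ _
  have hhII : IntervalIntegrable h volume p q := by
    have := hh.mono_set (by rw [uIcc_of_le hpq] : uIcc p q ⊆ Icc p q)
    exact this.intervalIntegrable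
  have b3 : (∫ z in p..y₀, h z) ≤ ∫ z in p..q, h z := by
    refine integral_mono_interval le_rfl hy₀.1 hy₀.2 ?_ hhII
    exact (ae_restrict_iff' measurableSet_Ioc).2
      (Filter.Eventually.of_forall fun z hz => hh0 z (Ioc_subset_Icc_self hz))
  have := key y₀ hy₀
  have b4 : (∫ z in p..y₀, h z) * N y₀ ≤ (∫ z in p..q, h z) * N y₀ :=
    mul_le_mul_of_nonneg_right b3 (hN0 y₀ hy₀)
  linarith

lemma gron_piece {p q K : ℝ} (hpq : p ≤ q) (hK : 0 ≤ K) {h N : ℝ → ℝ}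
    (hh : IntegrableOn h (Icc p q)) (hh0 : ∀ z ∈ Icc p q, 0 ≤ h z)
    (hN : ContinuousOn N (Icc p q)) (hN0 : ∀ z ∈ Icc p q, 0 ≤ N z)
    (hsmall : (∫ z in p..q, h z) ≤ 1 / 2)
    (key : ∀ y ∈ Icc p q, N y ≤ K + ∫ z in p..y, h z * N z) :
    ∀ y ∈ Icc p q, N y ≤ 2 * K := by
  obtain ⟨Q, hQ0, hQb, hQe⟩ := gron_core hpq hh hh0 hN hN0 key
  have : (∫ z in p..q, h z) * Q ≤ (1/2) * Q := mul_le_mul_of_nonneg_right hsmall hQ0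
  intro y hy
  have := hQb y hy
  linarith


lemma gron_bound (n : ℕ) : ∀ {p K : ℝ} {q : ℝ}, p ≤ q → 0 ≤ K → ∀ {h N : ℝ → ℝ},
    IntegrableOn h (Icc p q) → (∀ z ∈ Icc p q, 0 ≤ h z) →
    ContinuousOn N (Icc p q) → (∀ z ∈ Icc p q, 0 ≤ N z) →
    (∫ z in p..q, h z) ≤ n / 2 →
    (∀ y ∈ Icc p q, N y ≤ K + ∫ z in p..y, h z * N z) →
    ∀ y ∈ Icc p q, N y ≤ 2 ^ n * K := by
  induction n with
  | zero =>
    intro p K q hpq hK h N hh hh0 hN hN0 hsmall key y hy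
    obtain ⟨Q, hQ0, hQb, hQe⟩ := gron_core hpq hh hh0 hN hN0 key
    have h2 : (∫ z in p..q, h z) * Q ≤ 0 := by
      have : (∫ z in p..q, h z) ≤ 0 := by simpa using hsmall
      exact mul_nonpos_of_nonpos_of_nonneg this hQ0
    have := hQb y hy
    simp only [pow_zero, one_mul]
    linarith
  | succ n IH =>
    intro p K q hpq hK h N hh hh0 hN hN0 hsmall key
    have hhII : IntervalIntegrable h volume p q :=
      (hh.mono_set (by rw [uIcc_of_le hpq])).intervalIntegrable
    set G : ℝ → ℝ := fun y => ∫ z in p..y, h z with hG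
    have hGc : ContinuousOn G (Icc p q) := by
      have := continuousOn_primitive_interval' hhII (by rw [uIcc_of_le hpq]; exact left_mem_Icc.2 hpq)
      rwa [uIcc_of_le hpq] at this
    have hH0 : 0 ≤ G q := integral_nonneg hpq (fun u hu => hh0 u hu)
    have hGp : G p = 0 := integral_same
    have htmem : min (1/2) (G q) ∈ Icc (G p) (G q) := by
      constructor
      · rw [hGp]; exact le_min (by norm_num) hH0
      · exact min_le_right _ _
    obtain ⟨m, hm, hGm⟩ := intermediate_value_Icc hpq hGc htmem
    have hpm : p ≤ m := hm.1
    have hmq : m ≤ q := hm.2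
    have hsub1 : Icc p m ⊆ Icc p q := Icc_subset_Icc le_rfl hmq
    have hsub2 : Icc m q ⊆ Icc p q := Icc_subset_Icc hpm le_rfl
    -- piece on [p,m]
    have piece : ∀ y ∈ Icc p m, N y ≤ 2 * K := by
      refine gron_piece hpm hK (hh.mono_set hsub1) (fun z hz => hh0 z (hsub1 hz))
        (hN.mono hsub1) (fun z hz => hN0 z (hsub1 hz)) ?_ (fun y hy => key y (hsub1 hy))
      have hh' : G m ≤ 1/2 := by rw [hGm]; exact min_le_left _ _
      exact hh'
    -- key on [m,q]
    have hNint : ∀ y₁ y₂, y₁ ∈ Icc p q → y₂ ∈ Icc p q →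
        IntervalIntegrable (fun z => h z * N z) volume y₁ y₂ :=
      fun y₁ y₂ h₁ h₂ => mul_int' hh hN h₁ h₂
    have key2 : ∀ y ∈ Icc m q, N y ≤ 2 * K + ∫ z in m..y, h z * N z := by
      intro y hy
      have hyq : y ∈ Icc p q := hsub2 hy
      have split : (∫ z in p..y, h z * N z)
          = (∫ z in p..m, h z * N z) + ∫ z in m..y, h z * N z :=
        (integral_add_adjacent_intervals (hNint p m (left_mem_Icc.2 hpq) hm)
          (hNint m y hm hyq)).symm
      have bnd : (∫ z in p..m, h z * N z) ≤ ∫ z in p..m, h z * (2*K) := by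
        refine integral_mono_on hpm (hNint p m (left_mem_Icc.2 hpq) hm)
          (mul_int' (hh.mono_set hsub1) continuousOn_const (left_mem_Icc.2 hpm)
            (right_mem_Icc.2 hpm)) (fun z hz => ?_)
        exact mul_le_mul_of_nonneg_left (piece z hz) (hh0 z (hsub1 hz))
      have bnd2 : (∫ z in p..m, h z * (2*K)) = G m * (2*K) := integral_mul_const _ _
      have bnd3 : G m * (2*K) ≤ K := by
        rw [hGm]
        have : min (1/2) (G q) ≤ 1/2 := min_le_left _ _
        nlinarith [le_min (by norm_num : (0:ℝ) ≤ 1/2) hH0, hGm]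
      have := key y hyq
      rw [split] at this
      linarith
    -- IH on [m,q]
    have hsplit : G q = G m + ∫ z in m..q, h z :=
      (integral_add_adjacent_intervals (hhII.mono_set ?_) (hhII.mono_set ?_)).symm
    rotate_left
    · rw [uIcc_of_le hpm, uIcc_of_le hpq]; exact hsub1
    · rw [uIcc_of_le hmq, uIcc_of_le hpq]; exact hsub2
    have hsmall2 : (∫ z in m..q, h z) ≤ n / 2 := by
      rcases le_total (G q) (1/2) with h'|h'
      · rw [hGm, min_eq_right h'] at hsplit
        have : (∫ z in m..q, h z) = 0 := by linarith
        rw [this]; positivity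
      · rw [hGm, min_eq_left h'] at hsplit
        push_cast at hsmall ⊢
        linarith
    have IH2 := IH hmq (by linarith : (0:ℝ) ≤ 2*K) (hh.mono_set hsub2)
      (fun z hz => hh0 z (hsub2 hz)) (hN.mono hsub2) (fun z hz => hN0 z (hsub2 hz))
      hsmall2 key2
    intro y hy
    have h2n : (1:ℝ) ≤ 2 ^ n := one_le_pow₀ (by norm_num)
    rcases le_total y m with h'|h'
    · have := piece y ⟨hy.1, h'⟩
      calc N y ≤ 2*K := this
        _ ≤ 2^(n+1)*K := by
            have hps : (2:ℝ)^(n+1) = 2^n * 2 := pow_succ 2 n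
            nlinarith [mul_nonneg (by linarith : (0:ℝ) ≤ 2^n - 1) hK]
    · have := IH2 y ⟨h', hy.2⟩
      calc N y ≤ 2^n*(2*K) := this
        _ = 2^(n+1)*K := by ring

lemma gron_zero {p q : ℝ} (hpq : p ≤ q) {h N : ℝ → ℝ}
    (hh : IntegrableOn h (Icc p q)) (hh0 : ∀ z ∈ Icc p q, 0 ≤ h z)
    (hN : ContinuousOn N (Icc p q)) (hN0 : ∀ z ∈ Icc p q, 0 ≤ N z)
    (key : ∀ y ∈ Icc p q, N y ≤ ∫ z in p..y, h z * N z) :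
    ∀ y ∈ Icc p q, N y = 0 := by
  obtain ⟨n, hn⟩ := exists_nat_ge (2 * ∫ z in p..q, h z)
  have hb := gron_bound n hpq le_rfl hh hh0 hN hN0 (by linarith)
    (fun y hy => by simpa using key y hy)
  intro y hy
  have h1 := hb y hy
  have h2 := hN0 y hy
  simp only [mul_zero] at h1
  linarith

lemma habs' : ∀ u v : ℝ, |u - v| ≤ |u| + |v| := fun u v => by
  rw [sub_eq_add_neg]
  exact (abs_add_le u (-v)).trans (by rw [abs_neg])

lemma bootstrap_right {x d e0 f0 : ℝ} (hxd : x ≤ d) {k1 k2 E F : ℝ → ℝ}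
    (hk1 : IntegrableOn k1 (Icc x d)) (hk2 : IntegrableOn k2 (Icc x d))
    (hE : ∀ y ∈ Icc x d, E y = e0 + ∫ z in x..y, F z)
    (hF : ∀ y ∈ Icc x d, F y = f0 + ∫ z in x..y, (k1 z * E z - k2 z * F z)) :
    ContinuousOn E (Icc x d) ∧ ContinuousOn F (Icc x d) ∧
      IntegrableOn (fun z => k1 z * E z - k2 z * F z) (Icc x d) := by
  set G : ℝ → ℝ := fun z => k1 z * E z - k2 z * F z with hG
  set h : ℝ → ℝ := fun z => 2 * (1 + |k1 z| + |k2 z|) with hh_def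
  have hh : IntegrableOn h (Icc x d) := by
    have hconst : IntegrableOn (fun _ : ℝ => (1:ℝ)) (Icc x d) :=
      integrableOn_const measure_Icc_lt_top.ne
    have b2 := (hconst.add hk1.norm).add hk2.norm
    have b3 := b2.const_mul 2
    refine MeasureTheory.IntegrableOn.congr_fun b3 ?_ measurableSet_Icc
    intro z _
    simp [hh_def, Pi.add_apply, Real.norm_eq_abs]
  have hh0 : ∀ z, 0 ≤ h z := fun z => by rw [hh_def]; positivity
  set N : ℝ → ℝ := fun z => |E z| + |F z| with hN_def
  set N0 : ℝ := |e0| + |f0| with hN0_def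
  have hN00 : 0 ≤ N0 := by rw [hN0_def]; positivity
  have hGptw : ∀ z, |G z| ≤ h z / 2 * N z := by
    intro z
    have h1 : |G z| ≤ |k1 z| * |E z| + |k2 z| * |F z| := by
      calc |G z| ≤ |k1 z * E z| + |k2 z * F z| := habs' _ _
        _ = _ := by rw [abs_mul, abs_mul]
    show |G z| ≤ 2 * (1 + |k1 z| + |k2 z|) / 2 * (|E z| + |F z|)
    nlinarith [mul_nonneg (abs_nonneg (k1 z)) (abs_nonneg (F z)),
      mul_nonneg (abs_nonneg (k2 z)) (abs_nonneg (E z)),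
      abs_nonneg (E z), abs_nonneg (F z)]
  have hFptw : ∀ z, |F z| ≤ h z / 2 * N z := by
    intro z
    show |F z| ≤ 2 * (1 + |k1 z| + |k2 z|) / 2 * (|E z| + |F z|)
    nlinarith [mul_nonneg (abs_nonneg (k1 z)) (abs_nonneg (E z)),
      mul_nonneg (abs_nonneg (k1 z)) (abs_nonneg (F z)),
      mul_nonneg (abs_nonneg (k2 z)) (abs_nonneg (E z)),
      mul_nonneg (abs_nonneg (k2 z)) (abs_nonneg (F z)),
      abs_nonneg (E z), abs_nonneg (F z)]
  -- continuity given integrability up to t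
  have contOf : ∀ t ∈ Icc x d, IntegrableOn G (Ioc x t) →
      ContinuousOn E (Icc x t) ∧ ContinuousOn F (Icc x t) := by
    intro t ht hint
    have hGII : IntervalIntegrable G volume x t :=
      (intervalIntegrable_iff_integrableOn_Ioc_of_le ht.1).2 hint
    have hFc : ContinuousOn F (Icc x t) := by
      have hc := continuousOn_primitive_interval' hGII
        (by rw [uIcc_of_le ht.1]; exact left_mem_Icc.2 ht.1)
      rw [uIcc_of_le ht.1] at hc
      exact (continuousOn_const.add hc).congr (fun y hy => hF y ⟨hy.1, hy.2.trans ht.2⟩)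
    have hFII : IntervalIntegrable F volume x t :=
      (hFc.mono (by rw [uIcc_of_le ht.1])).intervalIntegrable
    have hEc : ContinuousOn E (Icc x t) := by
      have hc := continuousOn_primitive_interval' hFII
        (by rw [uIcc_of_le ht.1]; exact left_mem_Icc.2 ht.1)
      rw [uIcc_of_le ht.1] at hc
      exact (continuousOn_const.add hc).congr (fun y hy => hE y ⟨hy.1, hy.2.trans ht.2⟩)
    exact ⟨hEc, hFc⟩
  -- key bound given integrability up to t
  have keyOf : ∀ t ∈ Icc x d, IntegrableOn G (Ioc x t) →
      ∀ y ∈ Icc x t, N y ≤ N0 + ∫ z in x..y, h z * N z := by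
    intro t ht hint y hy
    obtain ⟨hEc, hFc⟩ := contOf t ht hint
    have hGII : IntervalIntegrable G volume x t :=
      (intervalIntegrable_iff_integrableOn_Ioc_of_le ht.1).2 hint
    have hNc : ContinuousOn N (Icc x t) := hEc.abs.add hFc.abs
    have hsubd : Icc x t ⊆ Icc x d := Icc_subset_Icc le_rfl ht.2
    have hxy : x ≤ y := hy.1
    have hsubt : Icc x y ⊆ Icc x t := Icc_subset_Icc le_rfl hy.2
    have huIcc : uIcc x y ⊆ Icc x t := by rw [uIcc_of_le hxy]; exact hsubt
    have ihalfN : IntervalIntegrable (fun z => h z / 2 * N z) volume x y :=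
      mul_int' ((hh.mono_set hsubd).div_const 2) hNc (left_mem_Icc.2 ht.1) hy
    have iF : IntervalIntegrable (fun z => |F z|) volume x y :=
      ((hFc.abs).mono huIcc).intervalIntegrable
    have iG : IntervalIntegrable (fun z => |G z|) volume x y :=
      (hGII.mono_set (by rw [uIcc_of_le hxy, uIcc_of_le ht.1]; exact hsubt)).abs
    have bA : |E y| ≤ |e0| + ∫ z in x..y, h z / 2 * N z := by
      rw [hE y (hsubd hy)]
      have h1 : |e0 + ∫ z in x..y, F z| ≤ |e0| + |∫ z in x..y, F z| := abs_add_le _ _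
      have h2 : |∫ z in x..y, F z| ≤ ∫ z in x..y, |F z| := abs_integral_le_integral_abs hxy
      have h3 : (∫ z in x..y, |F z|) ≤ ∫ z in x..y, h z / 2 * N z :=
        integral_mono_on hxy iF ihalfN (fun z _ => hFptw z)
      linarith
    have bB : |F y| ≤ |f0| + ∫ z in x..y, h z / 2 * N z := by
      rw [hF y (hsubd hy)]
      have h1 : |f0 + ∫ z in x..y, G z| ≤ |f0| + |∫ z in x..y, G z| := abs_add_le _ _
      have h2 : |∫ z in x..y, G z| ≤ ∫ z in x..y, |G z| := abs_integral_le_integral_abs hxy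
      have h3 : (∫ z in x..y, |G z|) ≤ ∫ z in x..y, h z / 2 * N z :=
        integral_mono_on hxy iG ihalfN (fun z _ => hGptw z)
      linarith
    have hsum : (∫ z in x..y, h z / 2 * N z) + (∫ z in x..y, h z / 2 * N z)
        = ∫ z in x..y, h z * N z := by
      rw [← integral_add ihalfN ihalfN]
      apply integral_congr
      intro z _; ring
    show |E y| + |F y| ≤ N0 + ∫ z in x..y, h z * N z
    rw [hN0_def]
    linarith
  have hhII : IntervalIntegrable h volume x d :=
    (hh.mono_set (by rw [uIcc_of_le hxd])).intervalIntegrable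
  obtain ⟨n, hn⟩ := exists_nat_ge (2 * ∫ z in x..d, h z)
  set M : ℝ := 2 ^ n * N0 with hM_def
  have hM0 : 0 ≤ M := by rw [hM_def]; positivity
  have boundAll : ∀ t ∈ Icc x d, IntegrableOn G (Ioc x t) → ∀ y ∈ Icc x t, N y ≤ M := by
    intro t ht hint
    obtain ⟨hEc, hFc⟩ := contOf t ht hint
    refine gron_bound n ht.1 hN00 (hh.mono_set (Icc_subset_Icc le_rfl ht.2))
      (fun z _ => hh0 z) (hEc.abs.add hFc.abs) (fun z _ => by positivity) ?_ (keyOf t ht hint)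
    have hmono : (∫ z in x..t, h z) ≤ ∫ z in x..d, h z := by
      refine integral_mono_interval le_rfl ht.1 ht.2 ?_ hhII
      exact (ae_restrict_iff' measurableSet_Ioc).2
        (Filter.Eventually.of_forall fun z _ => hh0 z)
    linarith
  set S : Set ℝ := {t | t ∈ Icc x d ∧ IntegrableOn G (Ioc x t)} with hS_def
  have hxS : x ∈ S := ⟨left_mem_Icc.2 hxd, by rw [Ioc_self]; exact integrableOn_empty⟩
  have hSb : BddAbove S := ⟨d, fun t ht => ht.1.2⟩
  set s : ℝ := sSup S with hs_def
  have hxs : x ≤ s := le_csSup hSb hxS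
  have hsd : s ≤ d := csSup_le ⟨x, hxS⟩ (fun t ht => ht.1.2)
  have hbel : ∀ t, x ≤ t → t < s → t ∈ S := by
    intro t h1 h2
    obtain ⟨t', ht', htt'⟩ := exists_lt_of_lt_csSup ⟨x, hxS⟩ h2
    exact ⟨⟨h1, le_trans htt'.le ht'.1.2⟩, ht'.2.mono_set (Ioc_subset_Ioc le_rfl htt'.le)⟩
  have hsS : s ∈ S := by
    rcases eq_or_lt_of_le hxs with heq|hlt
    · exact heq ▸ hxS
    refine ⟨⟨hxs, hsd⟩, ?_⟩
    have hcont : ∀ y ∈ Ico x s, ContinuousWithinAt E (Ico x s) y ∧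
        ContinuousWithinAt F (Ico x s) y ∧ N y ≤ M := by
      intro y hy
      have hyt : y < (y + s) / 2 := by linarith [hy.2]
      have hts : (y + s) / 2 < s := by linarith [hy.2]
      have hxt : x ≤ (y + s) / 2 := le_trans hy.1 hyt.le
      have htS := hbel _ hxt hts
      obtain ⟨hEc, hFc⟩ := contOf _ htS.1 htS.2
      have hmem : Icc x ((y + s) / 2) ∈ nhdsWithin y (Ico x s) :=
        mem_nhdsWithin.2 ⟨Iio ((y + s) / 2), isOpen_Iio, hyt,
          fun z hz => ⟨hz.2.1, hz.1.le⟩⟩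
      exact ⟨(hEc y ⟨hy.1, hyt.le⟩).mono_of_mem_nhdsWithin hmem,
        (hFc y ⟨hy.1, hyt.le⟩).mono_of_mem_nhdsWithin hmem,
        boundAll _ htS.1 htS.2 y ⟨hy.1, hyt.le⟩⟩
    have hEco : ContinuousOn E (Ico x s) := fun y hy => (hcont y hy).1
    have hFco : ContinuousOn F (Ico x s) := fun y hy => (hcont y hy).2.1
    have hsubIcc : Ioo x s ⊆ Icc x d := fun z hz => ⟨hz.1.le, hz.2.le.trans hsd⟩
    have hmeasG : AEStronglyMeasurable G (volume.restrict (Ioo x s)) :=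
      ((hk1.mono_set hsubIcc).aestronglyMeasurable.mul
          ((hEco.mono Ioo_subset_Ico_self).aestronglyMeasurable measurableSet_Ioo)).sub
        ((hk2.mono_set hsubIcc).aestronglyMeasurable.mul
          ((hFco.mono Ioo_subset_Ico_self).aestronglyMeasurable measurableSet_Ioo))
    have hdom : IntegrableOn G (Ioo x s) := by
      refine Integrable.mono ((hh.mono_set hsubIcc).mul_const M) hmeasG ?_
      refine (ae_restrict_iff' measurableSet_Ioo).2 (Filter.Eventually.of_forall fun z hz => ?_)
      have hNb := (hcont z ⟨hz.1.le, hz.2⟩).2.2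
      have h1 := hGptw z
      have h2 : 0 ≤ N z := by rw [hN_def]; positivity
      simp only [Real.norm_eq_abs]
      rw [abs_mul, abs_of_nonneg (hh0 z), abs_of_nonneg hM0]
      calc |G z| ≤ h z / 2 * N z := h1
        _ ≤ h z / 2 * M := mul_le_mul_of_nonneg_left hNb (by linarith [hh0 z])
        _ ≤ h z * M := by nlinarith [mul_nonneg (hh0 z) hM0]
    exact (integrableOn_Ioc_iff_integrableOn_Ioo (by simp)).2 hdom
  have hsd' : s = d := by
    by_contra hne
    have hlt : s < d := lt_of_le_of_ne hsd hne
    have hnot : ∀ t, s < t → t ≤ d → ¬ IntegrableOn G (Ioc x t) := by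
      intro t h1 h2 hint
      have htS : t ∈ S := ⟨⟨hxs.trans h1.le, h2⟩, hint⟩
      exact absurd (le_csSup hSb htS) (not_le.2 h1)
    have hF0 : ∀ t, s < t → t ≤ d → F t = f0 := by
      intro t h1 h2
      have hxt : x ≤ t := hxs.trans h1.le
      have hni : ¬ IntervalIntegrable G volume x t :=
        fun hc => hnot t h1 h2 ((intervalIntegrable_iff_integrableOn_Ioc_of_le hxt).1 hc)
      rw [hF t ⟨hxt, h2⟩, integral_undef hni, add_zero]
    obtain ⟨hEcs, hFcs⟩ := contOf s ⟨hxs, hsd⟩ hsS.2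
    have hFint : IntegrableOn F (Ioc x d) := by
      have h1 : IntegrableOn F (Ioc x s) :=
        (hFcs.integrableOn_Icc).mono_set Ioc_subset_Icc_self
      have h2 : IntegrableOn F (Ioc s d) := by
        have hc : IntegrableOn (fun _ : ℝ => f0) (Ioc s d) :=
          integrableOn_const measure_Ioc_lt_top.ne
        exact hc.congr_fun (fun t ht => (hF0 t ht.1 ht.2).symm) measurableSet_Ioc
      have h3 := h1.union h2
      rwa [Ioc_union_Ioc_eq_Ioc hxs hsd] at h3
    have hFII : IntervalIntegrable F volume x d :=
      (intervalIntegrable_iff_integrableOn_Ioc_of_le hxd).2 hFint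
    have hEc : ContinuousOn E (Icc x d) := by
      have hc := continuousOn_primitive_interval' hFII
        (by rw [uIcc_of_le hxd]; exact left_mem_Icc.2 hxd)
      rw [uIcc_of_le hxd] at hc
      exact (continuousOn_const.add hc).congr (fun y hy => hE y hy)
    obtain ⟨CE, hCE⟩ := isCompact_Icc.exists_bound_of_continuousOn hEc
    obtain ⟨CF, hCF⟩ := isCompact_Icc.exists_bound_of_continuousOn hFcs
    set B : ℝ := max CE (max CF |f0|) with hB_def
    have hFb : ∀ t ∈ Ioc x d, |F t| ≤ B := by
      intro t ht
      rcases le_or_gt t s with h'|h'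
      · exact le_trans (hCF t ⟨ht.1.le, h'⟩) (le_max_of_le_right (le_max_left _ _))
      · rw [hF0 t h' ht.2]; exact le_max_of_le_right (le_max_right _ _)
    have hEb : ∀ t ∈ Ioc x d, |E t| ≤ B := fun t ht =>
      le_trans (hCE t (Ioc_subset_Icc_self ht)) (le_max_left _ _)
    have hB0 : 0 ≤ B := le_trans (abs_nonneg f0) (le_max_of_le_right (le_max_right _ _))
    have hintd : IntegrableOn G (Ioc x d) := by
      have hmeas : AEStronglyMeasurable G (volume.restrict (Ioc x d)) :=
        ((hk1.mono_set Ioc_subset_Icc_self).aestronglyMeasurable.mul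
            ((hEc.mono Ioc_subset_Icc_self).aestronglyMeasurable measurableSet_Ioc)).sub
          ((hk2.mono_set Ioc_subset_Icc_self).aestronglyMeasurable.mul
            hFint.aestronglyMeasurable)
      refine Integrable.mono ((hh.mono_set Ioc_subset_Icc_self).mul_const B) hmeas ?_
      refine (ae_restrict_iff' measurableSet_Ioc).2 (Filter.Eventually.of_forall fun z hz => ?_)
      have h1 := hGptw z
      have h2 := hEb z hz
      have h3 := hFb z hz
      simp only [Real.norm_eq_abs]
      rw [abs_mul, abs_of_nonneg (hh0 z), abs_of_nonneg hB0]
      have h4 : N z ≤ 2 * B := by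
        show |E z| + |F z| ≤ 2 * B
        linarith
      calc |G z| ≤ h z / 2 * N z := h1
        _ ≤ h z / 2 * (2 * B) := mul_le_mul_of_nonneg_left h4 (by linarith [hh0 z])
        _ = h z * B := by ring
    exact hnot d hlt le_rfl hintd
  have hfin : IntegrableOn G (Ioc x d) := hsd' ▸ hsS.2
  obtain ⟨hEc, hFc⟩ := contOf d (right_mem_Icc.2 hxd) hfin
  exact ⟨hEc, hFc, (integrableOn_Icc_iff_integrableOn_Ioc (by simp)).2 hfin⟩

lemma ptwF (k1 k2 E F : ℝ → ℝ) (z : ℝ) :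
    |F z| ≤ 2 * (1 + |k1 z| + |k2 z|) / 2 * (|E z| + |F z|) := by
  nlinarith [mul_nonneg (abs_nonneg (k1 z)) (abs_nonneg (E z)),
    mul_nonneg (abs_nonneg (k1 z)) (abs_nonneg (F z)),
    mul_nonneg (abs_nonneg (k2 z)) (abs_nonneg (E z)),
    mul_nonneg (abs_nonneg (k2 z)) (abs_nonneg (F z)),
    abs_nonneg (E z), abs_nonneg (F z)]

lemma ptwG (k1 k2 E F : ℝ → ℝ) (z : ℝ) :
    |k1 z * E z - k2 z * F z| ≤ 2 * (1 + |k1 z| + |k2 z|) / 2 * (|E z| + |F z|) := by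
  have h1 : |k1 z * E z - k2 z * F z| ≤ |k1 z| * |E z| + |k2 z| * |F z| := by
    calc |k1 z * E z - k2 z * F z| ≤ |k1 z * E z| + |k2 z * F z| := habs' _ _
      _ = _ := by rw [abs_mul, abs_mul]
  nlinarith [mul_nonneg (abs_nonneg (k1 z)) (abs_nonneg (F z)),
    mul_nonneg (abs_nonneg (k2 z)) (abs_nonneg (E z)),
    abs_nonneg (E z), abs_nonneg (F z)]

lemma uniq {c d u : ℝ} (hcu : c ≤ u) (hud : u ≤ d) {k1 k2 W1 W2 : ℝ → ℝ}
    (hk1 : IntegrableOn k1 (Icc c d)) (hk2 : IntegrableOn k2 (Icc c d))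
    (hW1c : ContinuousOn W1 (Icc c d)) (hW2c : ContinuousOn W2 (Icc c d))
    (e1 : ∀ y ∈ Icc c d, W1 y = ∫ z in u..y, W2 z)
    (e2 : ∀ y ∈ Icc c d, W2 y = ∫ z in u..y, (k1 z * W1 z - k2 z * W2 z)) :
    ∀ y ∈ Icc c d, W1 y = 0 ∧ W2 y = 0 := by
  have hu : u ∈ Icc c d := ⟨hcu, hud⟩
  set G : ℝ → ℝ := fun z => k1 z * W1 z - k2 z * W2 z with hG_def
  set h : ℝ → ℝ := fun z => 2 * (1 + |k1 z| + |k2 z|) with hh_def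
  set N : ℝ → ℝ := fun z => |W1 z| + |W2 z| with hN_def
  have hh : IntegrableOn h (Icc c d) := by
    have hconst : IntegrableOn (fun _ : ℝ => (1:ℝ)) (Icc c d) :=
      integrableOn_const measure_Icc_lt_top.ne
    have b2 := (hconst.add hk1.norm).add hk2.norm
    have b3 := b2.const_mul 2
    refine MeasureTheory.IntegrableOn.congr_fun b3 ?_ measurableSet_Icc
    intro z _
    simp [hh_def, Pi.add_apply, Real.norm_eq_abs]
  have hh0 : ∀ z, 0 ≤ h z := fun z => by rw [hh_def]; positivity
  have hNc : ContinuousOn N (Icc c d) := hW1c.abs.add hW2c.abs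
  have hN0 : ∀ z, 0 ≤ N z := fun z => by rw [hN_def]; positivity
  have hGII : ∀ p q, p ∈ Icc c d → q ∈ Icc c d → IntervalIntegrable G volume p q :=
    fun p q hp hq => (mul_int' hk1 hW1c hp hq).sub (mul_int' hk2 hW2c hp hq)
  have hhalfII : ∀ p q, p ∈ Icc c d → q ∈ Icc c d →
      IntervalIntegrable (fun z => h z / 2 * N z) volume p q :=
    fun p q hp hq => mul_int' (hh.div_const 2) hNc hp hq
  have right : ∀ y ∈ Icc u d, N y = 0 := by
    refine gron_zero hud (hh.mono_set (Icc_subset_Icc hcu le_rfl))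
      (fun z _ => hh0 z) (hNc.mono (Icc_subset_Icc hcu le_rfl))
      (fun z _ => hN0 z) ?_
    intro y hy
    have hyd : y ∈ Icc c d := ⟨hcu.trans hy.1, hy.2⟩
    have i1 : IntervalIntegrable (fun z => |W2 z|) volume u y :=
      ((hW2c.abs).mono (by rw [uIcc_of_le hy.1]; exact Icc_subset_Icc hcu hy.2)).intervalIntegrable
    have i2 := hhalfII u y hu hyd
    have i3 := (hGII u y hu hyd).abs
    have b1 : |W1 y| ≤ ∫ z in u..y, h z / 2 * N z := by
      rw [e1 y hyd]
      refine (abs_integral_le_integral_abs hy.1).trans ?_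
      exact integral_mono_on hy.1 i1 i2 (fun z _ => ptwF k1 k2 W1 W2 z)
    have b2 : |W2 y| ≤ ∫ z in u..y, h z / 2 * N z := by
      rw [e2 y hyd]
      refine (abs_integral_le_integral_abs hy.1).trans ?_
      exact integral_mono_on hy.1 i3 i2 (fun z _ => ptwG k1 k2 W1 W2 z)
    have hsum : (∫ z in u..y, h z / 2 * N z) + (∫ z in u..y, h z / 2 * N z)
        = ∫ z in u..y, h z * N z := by
      rw [← integral_add i2 i2]; apply integral_congr; intro z _; ring
    show |W1 y| + |W2 y| ≤ ∫ z in u..y, h z * N z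
    linarith
  have left : ∀ y ∈ Icc c u, N y = 0 := by
    have hD : (0:ℝ) ≤ u - c := by linarith
    have hmap : ∀ τ ∈ Icc (0:ℝ) (u - c), u - τ ∈ Icc c u := by
      intro τ hτ
      exact ⟨by linarith [hτ.2], by linarith [hτ.1]⟩
    have hhtint : IntegrableOn (fun τ => h (u - τ)) (Icc 0 (u - c)) := by
      have h1 : IntervalIntegrable h volume c u :=
        ((hh.mono_set (Icc_subset_Icc le_rfl hud)).mono_set
          (by rw [uIcc_of_le hcu])).intervalIntegrable
      have h2 := h1.comp_sub_left u
      simp only [sub_self] at h2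
      exact (intervalIntegrable_iff_integrableOn_Icc_of_le hD).1 h2.symm
    have hNtc : ContinuousOn (fun τ => N (u - τ)) (Icc 0 (u - c)) := by
      have := (hNc.mono (Icc_subset_Icc le_rfl hud)).comp
        ((continuous_const.sub continuous_id).continuousOn
          : ContinuousOn (fun τ : ℝ => u - τ) (Icc 0 (u - c))) hmap
      exact this
    have key : ∀ τ ∈ Icc (0:ℝ) (u - c),
        N (u - τ) ≤ ∫ s in (0:ℝ)..τ, h (u - s) * N (u - s) := by
      intro τ hτ
      have hyc : u - τ ∈ Icc c u := hmap τ hτ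
      have hyd : u - τ ∈ Icc c d := ⟨hyc.1, hyc.2.trans hud⟩
      have hyu : u - τ ≤ u := hyc.2
      have i2 : IntervalIntegrable (fun z => h z / 2 * N z) volume (u - τ) u :=
        hhalfII (u - τ) u hyd hu
      have i1 : IntervalIntegrable (fun z => |W2 z|) volume (u - τ) u :=
        ((hW2c.abs).mono (by rw [uIcc_of_le hyu]; exact Icc_subset_Icc hyd.1 hud)).intervalIntegrable
      have i3 := ((hGII u (u - τ) hu hyd).symm).abs
      have b1 : |W1 (u - τ)| ≤ ∫ z in (u - τ)..u, h z / 2 * N z := by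
        rw [e1 (u - τ) hyd, integral_symm (u - τ) u, abs_neg]
        refine (abs_integral_le_integral_abs hyu).trans ?_
        exact integral_mono_on hyu i1 i2 (fun z _ => ptwF k1 k2 W1 W2 z)
      have b2 : |W2 (u - τ)| ≤ ∫ z in (u - τ)..u, h z / 2 * N z := by
        rw [e2 (u - τ) hyd, integral_symm (u - τ) u, abs_neg]
        refine (abs_integral_le_integral_abs hyu).trans ?_
        exact integral_mono_on hyu i3 i2 (fun z _ => ptwG k1 k2 W1 W2 z)
      have hsum : (∫ z in (u - τ)..u, h z / 2 * N z) + (∫ z in (u - τ)..u, h z / 2 * N z)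
          = ∫ z in (u - τ)..u, h z * N z := by
        rw [← integral_add i2 i2]; apply integral_congr; intro z _; ring
      have ht1 := integral_comp_sub_left (a := 0) (b := τ) (fun z => h z * N z) u
      simp only [sub_zero] at ht1
      rw [ht1]
      show |W1 (u - τ)| + |W2 (u - τ)| ≤ ∫ z in (u - τ)..u, h z * N z
      linarith
    have z0 := gron_zero hD hhtint (fun z _ => hh0 _) hNtc (fun z _ => hN0 _) key
    intro y hy
    have hz := z0 (u - y) ⟨by linarith [hy.2], by linarith [hy.1]⟩
    simpa [sub_sub_cancel] using hz
  intro y hy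
  have hNy : |W1 y| + |W2 y| = 0 := by
    rcases le_total y u with h'|h'
    · exact left y ⟨hy.1, h'⟩
    · exact right y ⟨h', hy.2⟩
  constructor
  · exact abs_eq_zero.1 (le_antisymm (by linarith [abs_nonneg (W2 y)]) (abs_nonneg _))
  · exact abs_eq_zero.1 (le_antisymm (by linarith [abs_nonneg (W1 y)]) (abs_nonneg _))

lemma reprSol {c d u : ℝ} (hcu : c ≤ u) (hud : u ≤ d) {k1 k2 E F E' F' C' D' : ℝ → ℝ}
    (hk1 : IntegrableOn k1 (Icc c d)) (hk2 : IntegrableOn k2 (Icc c d))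
    (hEc : ContinuousOn E (Icc c d)) (hFc : ContinuousOn F (Icc c d))
    (hE'c : ContinuousOn E' (Icc c d)) (hF'c : ContinuousOn F' (Icc c d))
    (hC'c : ContinuousOn C' (Icc c d)) (hD'c : ContinuousOn D' (Icc c d))
    (hE : ∀ y ∈ Icc c d, E y = E u + ∫ z in u..y, F z)
    (hF : ∀ y ∈ Icc c d, F y = F u + ∫ z in u..y, (k1 z * E z - k2 z * F z))
    (hE' : ∀ y ∈ Icc c d, E' y = 1 + ∫ z in u..y, F' z)
    (hF' : ∀ y ∈ Icc c d, F' y = ∫ z in u..y, (k1 z * E' z - k2 z * F' z))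
    (hC' : ∀ y ∈ Icc c d, C' y = ∫ z in u..y, D' z)
    (hD' : ∀ y ∈ Icc c d, D' y = 1 + ∫ z in u..y, (k1 z * C' z - k2 z * D' z)) :
    ∀ y ∈ Icc c d, E y = E' y * E u + C' y * F u ∧ F y = F' y * E u + D' y * F u := by
  have hu : u ∈ Icc c d := ⟨hcu, hud⟩
  have contII : ∀ (P : ℝ → ℝ), ContinuousOn P (Icc c d) → ∀ y ∈ Icc c d,
      IntervalIntegrable P volume u y := fun P hP y hy =>
    (hP.mono (uIcc_subset_Icc hu hy)).intervalIntegrable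
  set W1 : ℝ → ℝ := fun y => E y - (E' y * E u + C' y * F u) with hW1_def
  set W2 : ℝ → ℝ := fun y => F y - (F' y * E u + D' y * F u) with hW2_def
  have hW1c : ContinuousOn W1 (Icc c d) :=
    hEc.sub ((hE'c.mul continuousOn_const).add (hC'c.mul continuousOn_const))
  have hW2c : ContinuousOn W2 (Icc c d) :=
    hFc.sub ((hF'c.mul continuousOn_const).add (hD'c.mul continuousOn_const))
  have e1 : ∀ y ∈ Icc c d, W1 y = ∫ z in u..y, W2 z := by
    intro y hy
    have i1 := contII F hFc y hy
    have i2 := contII F' hF'c y hy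
    have i3 := contII D' hD'c y hy
    have hsplit : (∫ z in u..y, W2 z)
        = (∫ z in u..y, F z) - ((∫ z in u..y, F' z) * E u + (∫ z in u..y, D' z) * F u) := by
      rw [show (∫ z in u..y, W2 z)
          = ∫ z in u..y, (F z - (F' z * E u + D' z * F u)) from rfl,
        integral_sub i1 ((i2.mul_const _).add (i3.mul_const _)),
        integral_add (i2.mul_const _) (i3.mul_const _),
        intervalIntegral.integral_mul_const, intervalIntegral.integral_mul_const]
    show E y - (E' y * E u + C' y * F u) = _
    rw [hsplit, hE y hy, hE' y hy, hC' y hy]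
    ring
  have e2 : ∀ y ∈ Icc c d, W2 y = ∫ z in u..y, (k1 z * W1 z - k2 z * W2 z) := by
    intro y hy
    have g1 : IntervalIntegrable (fun z => k1 z * E z - k2 z * F z) volume u y :=
      (mul_int' hk1 hEc hu hy).sub (mul_int' hk2 hFc hu hy)
    have g2 : IntervalIntegrable (fun z => k1 z * E' z - k2 z * F' z) volume u y :=
      (mul_int' hk1 hE'c hu hy).sub (mul_int' hk2 hF'c hu hy)
    have g3 : IntervalIntegrable (fun z => k1 z * C' z - k2 z * D' z) volume u y :=
      (mul_int' hk1 hC'c hu hy).sub (mul_int' hk2 hD'c hu hy)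
    have hcongr : (∫ z in u..y, (k1 z * W1 z - k2 z * W2 z))
        = ∫ z in u..y, ((k1 z * E z - k2 z * F z)
            - ((k1 z * E' z - k2 z * F' z) * E u + (k1 z * C' z - k2 z * D' z) * F u)) := by
      apply integral_congr
      intro z _
      show k1 z * (E z - (E' z * E u + C' z * F u))
          - k2 z * (F z - (F' z * E u + D' z * F u)) = _
      ring
    rw [hcongr, integral_sub g1 ((g2.mul_const _).add (g3.mul_const _)),
      integral_add (g2.mul_const _) (g3.mul_const _), intervalIntegral.integral_mul_const, intervalIntegral.integral_mul_const]
    show F y - (F' y * E u + D' y * F u) = _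
    rw [hF y hy, hF' y hy, hD' y hy]
    ring
  have hz := uniq hcu hud hk1 hk2 hW1c hW2c e1 e2
  intro y hy
  obtain ⟨z1, z2⟩ := hz y hy
  constructor
  · have : E y - (E' y * E u + C' y * F u) = 0 := z1
    linarith
  · have : F y - (F' y * E u + D' y * F u) = 0 := z2
    linarith

lemma refl_int {k : ℝ → ℝ} {c x : ℝ} (hcx : c ≤ x) (hk : IntegrableOn k (Icc c x)) :
    IntegrableOn (fun τ => k (x - τ)) (Icc 0 (x - c)) := by
  have h1 : IntervalIntegrable k volume c x :=
    (hk.mono_set (by rw [uIcc_of_le hcx])).intervalIntegrable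
  have h2 := h1.comp_sub_left x
  simp only [sub_self] at h2
  exact (intervalIntegrable_iff_integrableOn_Icc_of_le (by linarith)).1 h2.symm

lemma refl_int_back {k : ℝ → ℝ} {c x : ℝ} (hcx : c ≤ x)
    (hk : IntegrableOn k (Icc 0 (x - c))) :
    IntegrableOn (fun y => k (x - y)) (Icc c x) := by
  have h1 : IntervalIntegrable k volume 0 (x - c) :=
    (hk.mono_set (by rw [uIcc_of_le (by linarith : (0:ℝ) ≤ x - c)])).intervalIntegrable
  have h2 := h1.comp_sub_left x
  simp only [sub_zero, sub_sub_cancel] at h2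
  exact (intervalIntegrable_iff_integrableOn_Icc_of_le hcx).1 h2.symm

lemma bootstrap_left {x c e0 f0 : ℝ} (hcx : c ≤ x) {k1 k2 E F : ℝ → ℝ}
    (hk1 : IntegrableOn k1 (Icc c x)) (hk2 : IntegrableOn k2 (Icc c x))
    (hE : ∀ y ∈ Icc c x, E y = e0 + ∫ z in x..y, F z)
    (hF : ∀ y ∈ Icc c x, F y = f0 + ∫ z in x..y, (k1 z * E z - k2 z * F z)) :
    ContinuousOn E (Icc c x) ∧ ContinuousOn F (Icc c x) ∧
      IntegrableOn (fun z => k1 z * E z - k2 z * F z) (Icc c x) := by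
  have hD : (0:ℝ) ≤ x - c := by linarith
  have hmap : ∀ τ ∈ Icc (0:ℝ) (x - c), x - τ ∈ Icc c x := by
    intro τ hτ; exact ⟨by linarith [hτ.2], by linarith [hτ.1]⟩
  have hmap' : ∀ y ∈ Icc c x, x - y ∈ Icc (0:ℝ) (x - c) := by
    intro y hy; exact ⟨by linarith [hy.2], by linarith [hy.1]⟩
  have hEt : ∀ τ ∈ Icc (0:ℝ) (x - c),
      E (x - τ) = e0 + ∫ s in (0:ℝ)..τ, (-F (x - s)) := by
    intro τ hτ
    rw [hE (x - τ) (hmap τ hτ)]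
    congr 1
    have h1 := integral_comp_sub_left (a := (0:ℝ)) (b := τ) F x
    simp only [sub_zero] at h1
    rw [intervalIntegral.integral_neg, h1]
    exact integral_symm _ _
  have hFt : ∀ τ ∈ Icc (0:ℝ) (x - c),
      (-F (x - τ)) = -f0 + ∫ s in (0:ℝ)..τ,
        ((fun s => k1 (x - s)) s * E (x - s) - (fun s => -k2 (x - s)) s * (-F (x - s))) := by
    intro τ hτ
    have hcongr : (∫ s in (0:ℝ)..τ,
        ((fun s => k1 (x - s)) s * E (x - s) - (fun s => -k2 (x - s)) s * (-F (x - s))))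
        = ∫ s in (0:ℝ)..τ, (fun z => k1 z * E z - k2 z * F z) (x - s) := by
      apply integral_congr; intro s _; show k1 (x-s) * E (x-s) - -k2 (x-s) * -F (x-s) = _; ring
    rw [hcongr]
    have h1 := integral_comp_sub_left (a := (0:ℝ)) (b := τ)
      (fun z => k1 z * E z - k2 z * F z) x
    simp only [sub_zero] at h1
    rw [h1, hF (x - τ) (hmap τ hτ)]
    rw [integral_symm (x - τ) x]
    ring
  obtain ⟨hEtc, hFtc, hGtint⟩ := bootstrap_right hD (refl_int hcx hk1)
    ((refl_int hcx hk2).neg) hEt hFt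
  have hcmap : ContinuousOn (fun y : ℝ => x - y) (Icc c x) :=
    (continuous_const.sub continuous_id).continuousOn
  have hEc : ContinuousOn E (Icc c x) := by
    have := hEtc.comp hcmap hmap'
    refine this.congr ?_
    intro y _
    simp [Function.comp, sub_sub_cancel]
  have hFc : ContinuousOn F (Icc c x) := by
    have := (hFtc.comp hcmap hmap').neg
    refine this.congr ?_
    intro y _
    simp [Function.comp, sub_sub_cancel]
  refine ⟨hEc, hFc, ?_⟩
  have hback := refl_int_back hcx hGtint
  refine hback.congr_fun ?_ measurableSet_Icc
  intro y _
  simp only [Pi.neg_apply, sub_sub_cancel]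
  ring


lemma glueIcc {f : ℝ → ℝ} {a x b : ℝ} (hax : a ≤ x) (hxb : x ≤ b)
    (h1 : ContinuousOn f (Icc a x)) (h2 : ContinuousOn f (Icc x b)) :
    ContinuousOn f (Icc a b) := by
  intro y hy
  rcases lt_trichotomy y x with h' | h' | h'
  · exact (h1 y ⟨hy.1, h'.le⟩).mono_of_mem_nhdsWithin
      (mem_nhdsWithin.2 ⟨Iio x, isOpen_Iio, h', fun z hz => ⟨hz.2.1, hz.1.le⟩⟩)
  · subst h'
    have hl := h1 y ⟨hy.1, le_rfl⟩
    have hr := h2 y ⟨le_rfl, hy.2⟩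
    have hu := hl.union hr
    rwa [Icc_union_Icc_eq_Icc hy.1 hy.2] at hu
  · exact (h2 y ⟨h'.le, hy.2⟩).mono_of_mem_nhdsWithin
      (mem_nhdsWithin.2 ⟨Ioi x, isOpen_Ioi, h', fun z hz => ⟨hz.1.le, hz.2.2⟩⟩)

end S16

open S16

/-- Fusion of intervals: if [a,b] and [a',b'] overlap (a < a' < b < b') and the
two-point boundary-value solutions v^{[a,b]}, v^{[a',b']} are strictly positive
on the respective open intervals, then v^{[a,b']} > max(v^{[a,b]}, v^{[a',b']})
on (a,b'); in particular v^{[a,b']} > 0 on (a,b'). -/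
theorem stmt_16
    (I : Set ℝ) (hI : IsOpen I) (hIconn : I.OrdConnected)
    (α r σ : ℝ → ℝ)
    (hmα : Measurable α) (hmr : Measurable r) (hmσ : Measurable σ)
    (hσpos : ∀ x ∈ I, 0 < σ x)
    (hint1 : MeasureTheory.LocallyIntegrableOn (fun z => 1 / (σ z) ^ 2) I)
    (hint2 : MeasureTheory.LocallyIntegrableOn (fun z => α z / (σ z) ^ 2) I)
    (hint3 : MeasureTheory.LocallyIntegrableOn (fun z => r z / (σ z) ^ 2) I)
    (φ11 φ12 φ21 φ22 : ℝ → ℝ → ℝ)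
    (hφ11 : ∀ x ∈ I, ∀ y ∈ I, φ11 x y = 1 + ∫ z in x..y, φ21 x z)
    (hφ12 : ∀ x ∈ I, ∀ y ∈ I, φ12 x y = ∫ z in x..y, φ22 x z)
    (hφ21 : ∀ x ∈ I, ∀ y ∈ I, φ21 x y =
      ∫ z in x..y, (2 * r z / (σ z) ^ 2 * φ11 x z - 2 * α z / (σ z) ^ 2 * φ21 x z))
    (hφ22 : ∀ x ∈ I, ∀ y ∈ I, φ22 x y = 1 +
      ∫ z in x..y, (2 * r z / (σ z) ^ 2 * φ12 x z - 2 * α z / (σ z) ^ 2 * φ22 x z))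
    (Prof : ℝ → ℝ) (hmP : Measurable Prof)
    (hPint : MeasureTheory.LocallyIntegrableOn (fun z => Prof z / (σ z) ^ 2) I)
    (hφpos : ∀ x ∈ I, ∀ y ∈ I, x < y → 0 < φ12 x y)
    (vab : ℝ → ℝ → ℝ → ℝ)
    (hvab : ∀ p q x : ℝ, vab p q x =
      (∫ z in p..q, 2 * Prof z / (σ z) ^ 2 * φ12 z q) / φ12 p q * φ12 p x
        - ∫ z in p..x, 2 * Prof z / (σ z) ^ 2 * φ12 z x)
    (a a' b b' : ℝ) (ha : a ∈ I) (ha' : a' ∈ I) (hb : b ∈ I) (hb' : b' ∈ I)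
    (h1 : a < a') (h2 : a' < b) (h3 : b < b')
    (hpos1 : ∀ x ∈ Set.Ioo a b, 0 < vab a b x)
    (hpos2 : ∀ x ∈ Set.Ioo a' b', 0 < vab a' b' x) :
    ∀ x ∈ Set.Ioo a b',
      max (vab a b x) (vab a' b' x) < vab a b' x ∧ 0 < vab a b' x := by
  have hab' : a ≤ b' := by linarith
  have hJI : Set.Icc a b' ⊆ I := hIconn.out ha hb'
  have haJ : a ∈ Set.Icc a b' := ⟨le_rfl, hab'⟩
  have ha'J : a' ∈ Set.Icc a b' := ⟨h1.le, by linarith⟩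
  have hbJ : b ∈ Set.Icc a b' := ⟨by linarith, h3.le⟩
  have hb'J : b' ∈ Set.Icc a b' := ⟨hab', le_rfl⟩
  have hk1J : IntegrableOn (fun z => 2 * r z / σ z ^ 2) (Icc a b') := by
    have h0 := (hint3.integrableOn_compact_subset hJI isCompact_Icc).const_mul 2
    refine MeasureTheory.IntegrableOn.congr_fun h0 (fun z _ => ?_) measurableSet_Icc
    show 2 * (r z / σ z ^ 2) = 2 * r z / σ z ^ 2
    ring
  have hk2J : IntegrableOn (fun z => 2 * α z / σ z ^ 2) (Icc a b') := by
    have h0 := (hint2.integrableOn_compact_subset hJI isCompact_Icc).const_mul 2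
    refine MeasureTheory.IntegrableOn.congr_fun h0 (fun z _ => ?_) measurableSet_Icc
    show 2 * (α z / σ z ^ 2) = 2 * α z / σ z ^ 2
    ring
  have hgJ : IntegrableOn (fun z => 2 * Prof z / σ z ^ 2) (Icc a b') := by
    have h0 := (hPint.integrableOn_compact_subset hJI isCompact_Icc).const_mul 2
    refine MeasureTheory.IntegrableOn.congr_fun h0 (fun z _ => ?_) measurableSet_Icc
    show 2 * (Prof z / σ z ^ 2) = 2 * Prof z / σ z ^ 2
    ring
  -- regularity of φ in the second variable
  have regAll : ∀ x ∈ Icc a b', ContinuousOn (φ11 x) (Icc a b') ∧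
      ContinuousOn (φ21 x) (Icc a b') ∧ ContinuousOn (φ12 x) (Icc a b') ∧
      ContinuousOn (φ22 x) (Icc a b') := by
    intro x hx
    have hxI := hJI hx
    have hsubr : Icc x b' ⊆ Icc a b' := Icc_subset_Icc hx.1 le_rfl
    have hsubl : Icc a x ⊆ Icc a b' := Icc_subset_Icc le_rfl hx.2
    have br1 := bootstrap_right (e0 := 1) (f0 := 0) hx.2 (hk1J.mono_set hsubr)
      (hk2J.mono_set hsubr)
      (fun y hy => hφ11 x hxI y (hJI (hsubr hy)))
      (fun y hy => by rw [zero_add]; exact hφ21 x hxI y (hJI (hsubr hy)))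
    have bl1 := bootstrap_left (e0 := 1) (f0 := 0) hx.1 (hk1J.mono_set hsubl)
      (hk2J.mono_set hsubl)
      (fun y hy => hφ11 x hxI y (hJI (hsubl hy)))
      (fun y hy => by rw [zero_add]; exact hφ21 x hxI y (hJI (hsubl hy)))
    have br2 := bootstrap_right (e0 := 0) (f0 := 1) hx.2 (hk1J.mono_set hsubr)
      (hk2J.mono_set hsubr)
      (fun y hy => by rw [zero_add]; exact hφ12 x hxI y (hJI (hsubr hy)))
      (fun y hy => hφ22 x hxI y (hJI (hsubr hy)))
    have bl2 := bootstrap_left (e0 := 0) (f0 := 1) hx.1 (hk1J.mono_set hsubl)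
      (hk2J.mono_set hsubl)
      (fun y hy => by rw [zero_add]; exact hφ12 x hxI y (hJI (hsubl hy)))
      (fun y hy => hφ22 x hxI y (hJI (hsubl hy)))
    exact ⟨glueIcc hx.1 hx.2 bl1.1 br1.1, glueIcc hx.1 hx.2 bl1.2.1 br1.2.1,
      glueIcc hx.1 hx.2 bl2.1 br2.1, glueIcc hx.1 hx.2 bl2.2.1 br2.2.1⟩
  -- diagonal values
  have diag : ∀ x ∈ Icc a b', φ11 x x = 1 ∧ φ21 x x = 0 ∧ φ12 x x = 0 ∧ φ22 x x = 1 := by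
    intro x hx
    have hxI := hJI hx
    refine ⟨?_, ?_, ?_, ?_⟩
    · rw [hφ11 x hxI x hxI, integral_same, add_zero]
    · rw [hφ21 x hxI x hxI, integral_same]
    · rw [hφ12 x hxI x hxI, integral_same]
    · rw [hφ22 x hxI x hxI, integral_same, add_zero]
  have IIc : ∀ (f : ℝ → ℝ), ContinuousOn f (Icc a b') → ∀ p ∈ Icc a b', ∀ q ∈ Icc a b',
      IntervalIntegrable f volume p q := fun f hf p hp q hq =>
    (hf.mono (uIcc_subset_Icc hp hq)).intervalIntegrable
  -- cocycle property
  have cocy : ∀ x ∈ Icc a b', ∀ u ∈ Icc a b', ∀ y ∈ Icc a b',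
      (φ11 x y = φ11 u y * φ11 x u + φ12 u y * φ21 x u ∧
       φ21 x y = φ21 u y * φ11 x u + φ22 u y * φ21 x u) ∧
      (φ12 x y = φ11 u y * φ12 x u + φ12 u y * φ22 x u ∧
       φ22 x y = φ21 u y * φ12 x u + φ22 u y * φ22 x u) := by
    intro x hx u hu y hy
    obtain ⟨cx11, cx21, cx12, cx22⟩ := regAll x hx
    obtain ⟨cu11, cu21, cu12, cu22⟩ := regAll u hu
    have hG1 : ∀ p ∈ Icc a b', ∀ q ∈ Icc a b', IntervalIntegrable
        (fun z => 2 * r z / σ z ^ 2 * φ11 x z - 2 * α z / σ z ^ 2 * φ21 x z) volume p q :=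
      fun p hp q hq => (mul_int' hk1J cx11 hp hq).sub (mul_int' hk2J cx21 hp hq)
    have hG2 : ∀ p ∈ Icc a b', ∀ q ∈ Icc a b', IntervalIntegrable
        (fun z => 2 * r z / σ z ^ 2 * φ12 x z - 2 * α z / σ z ^ 2 * φ22 x z) volume p q :=
      fun p hp q hq => (mul_int' hk1J cx12 hp hq).sub (mul_int' hk2J cx22 hp hq)
    have hE1 : ∀ w ∈ Icc a b', φ11 x w = φ11 x u + ∫ z in u..w, φ21 x z := by
      intro w hw
      rw [hφ11 x (hJI hx) w (hJI hw), hφ11 x (hJI hx) u (hJI hu),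
        ← integral_add_adjacent_intervals (IIc _ cx21 x hx u hu) (IIc _ cx21 u hu w hw)]
      ring
    have hF1 : ∀ w ∈ Icc a b', φ21 x w = φ21 x u +
        ∫ z in u..w, (2 * r z / σ z ^ 2 * φ11 x z - 2 * α z / σ z ^ 2 * φ21 x z) := by
      intro w hw
      rw [hφ21 x (hJI hx) w (hJI hw), hφ21 x (hJI hx) u (hJI hu),
        ← integral_add_adjacent_intervals (hG1 x hx u hu) (hG1 u hu w hw)]
    have hE2 : ∀ w ∈ Icc a b', φ12 x w = φ12 x u + ∫ z in u..w, φ22 x z := by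
      intro w hw
      rw [hφ12 x (hJI hx) w (hJI hw), hφ12 x (hJI hx) u (hJI hu),
        ← integral_add_adjacent_intervals (IIc _ cx22 x hx u hu) (IIc _ cx22 u hu w hw)]
    have hF2 : ∀ w ∈ Icc a b', φ22 x w = φ22 x u +
        ∫ z in u..w, (2 * r z / σ z ^ 2 * φ12 x z - 2 * α z / σ z ^ 2 * φ22 x z) := by
      intro w hw
      rw [hφ22 x (hJI hx) w (hJI hw), hφ22 x (hJI hx) u (hJI hu),
        ← integral_add_adjacent_intervals (hG2 x hx u hu) (hG2 u hu w hw)]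
      ring
    have hE' : ∀ w ∈ Icc a b', φ11 u w = 1 + ∫ z in u..w, φ21 u z :=
      fun w hw => hφ11 u (hJI hu) w (hJI hw)
    have hF' : ∀ w ∈ Icc a b', φ21 u w =
        ∫ z in u..w, (2 * r z / σ z ^ 2 * φ11 u z - 2 * α z / σ z ^ 2 * φ21 u z) :=
      fun w hw => hφ21 u (hJI hu) w (hJI hw)
    have hC' : ∀ w ∈ Icc a b', φ12 u w = ∫ z in u..w, φ22 u z :=
      fun w hw => hφ12 u (hJI hu) w (hJI hw)
    have hD' : ∀ w ∈ Icc a b', φ22 u w = 1 +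
        ∫ z in u..w, (2 * r z / σ z ^ 2 * φ12 u z - 2 * α z / σ z ^ 2 * φ22 u z) :=
      fun w hw => hφ22 u (hJI hu) w (hJI hw)
    exact ⟨reprSol hu.1 hu.2 hk1J hk2J cx11 cx21 cu11 cu21 cu12 cu22
        hE1 hF1 hE' hF' hC' hD' y hy,
      reprSol hu.1 hu.2 hk1J hk2J cx12 cx22 cu11 cu21 cu12 cu22
        hE2 hF2 hE' hF' hC' hD' y hy⟩
  -- determinant facts
  have detinv : ∀ x ∈ Icc a b', ∀ y ∈ Icc a b',
      (φ11 y x * φ22 y x - φ12 y x * φ21 y x) *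
      (φ11 x y * φ22 x y - φ12 x y * φ21 x y) = 1 := by
    intro x hx y hy
    obtain ⟨⟨i1, i2⟩, ⟨i3, i4⟩⟩ := cocy x hx y hy x hx
    obtain ⟨d1, d2, d3, d4⟩ := diag x hx
    rw [d1] at i1; rw [d2] at i2; rw [d3] at i3; rw [d4] at i4
    linear_combination (-(φ21 y x * φ12 x y + φ22 y x * φ22 x y)) * i1
      + (φ21 y x * φ11 x y + φ22 y x * φ21 x y) * i3 - i4
  have detne : ∀ x ∈ Icc a b', ∀ y ∈ Icc a b',
      φ11 x y * φ22 x y - φ12 x y * φ21 x y ≠ 0 := by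
    intro x hx y hy h0
    have hd := detinv x hx y hy
    rw [h0, mul_zero] at hd
    exact zero_ne_one hd
  have detpos : ∀ x ∈ Icc a b', ∀ y ∈ Icc a b',
      0 < φ11 x y * φ22 x y - φ12 x y * φ21 x y := by
    intro x hx y hy
    rcases lt_or_ge 0 (φ11 x y * φ22 x y - φ12 x y * φ21 x y) with h | h
    · exact h
    exfalso
    have hlt : φ11 x y * φ22 x y - φ12 x y * φ21 x y < 0 :=
      lt_of_le_of_ne h (detne x hx y hy)
    obtain ⟨c1, c2, c3, c4⟩ := regAll x hx
    have hdc : ContinuousOn (fun w => φ11 x w * φ22 x w - φ12 x w * φ21 x w) (Icc a b') :=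
      (c1.mul c4).sub (c3.mul c2)
    have hsub : uIcc x y ⊆ Icc a b' := uIcc_subset_Icc hx hy
    have hdx : φ11 x x * φ22 x x - φ12 x x * φ21 x x = 1 := by
      obtain ⟨d1, d2, d3, d4⟩ := diag x hx
      rw [d1, d2, d3, d4]; ring
    have hmem : (0:ℝ) ∈ uIcc ((fun w => φ11 x w * φ22 x w - φ12 x w * φ21 x w) x)
        ((fun w => φ11 x w * φ22 x w - φ12 x w * φ21 x w) y) := by
      simp only
      rw [hdx]
      exact Set.mem_uIcc.2 (Or.inr ⟨hlt.le, zero_le_one⟩)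
    obtain ⟨z, hz, hz0⟩ := intermediate_value_uIcc (hdc.mono hsub) hmem
    exact detne x hx z (hsub hz) hz0
  -- continuity in first variable
  have inv12 : ∀ z ∈ Icc a b', ∀ y ∈ Icc a b',
      φ12 z y * (φ11 a z * φ22 a z - φ12 a z * φ21 a z)
        = φ12 a y * φ11 a z - φ11 a y * φ12 a z := by
    intro z hz y hy
    have c1 := ((cocy a haJ z hz y hy).1).1
    have c3 := ((cocy a haJ z hz y hy).2).1
    linear_combination (φ12 a z) * c1 - (φ11 a z) * c3
  have inv22 : ∀ z ∈ Icc a b', ∀ y ∈ Icc a b',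
      φ22 z y * (φ11 a z * φ22 a z - φ12 a z * φ21 a z)
        = φ22 a y * φ11 a z - φ21 a y * φ12 a z := by
    intro z hz y hy
    have c2 := ((cocy a haJ z hz y hy).1).2
    have c4 := ((cocy a haJ z hz y hy).2).2
    linear_combination (φ12 a z) * c2 - (φ11 a z) * c4
  obtain ⟨ca11, ca21, ca12, ca22⟩ := regAll a haJ
  have contz12 : ∀ y ∈ Icc a b', ContinuousOn (fun z => φ12 z y) (Icc a b') := by
    intro y hy
    have hc : ContinuousOn (fun z => (φ12 a y * φ11 a z - φ11 a y * φ12 a z)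
        / (φ11 a z * φ22 a z - φ12 a z * φ21 a z)) (Icc a b') :=
      ((continuousOn_const.mul ca11).sub (continuousOn_const.mul ca12)).div
        ((ca11.mul ca22).sub (ca12.mul ca21)) (fun z hz => detne a haJ z hz)
    refine hc.congr (fun z hz => ?_)
    rw [eq_div_iff (detne a haJ z hz)]
    exact inv12 z hz y hy
  have contz22 : ∀ y ∈ Icc a b', ContinuousOn (fun z => φ22 z y) (Icc a b') := by
    intro y hy
    have hc : ContinuousOn (fun z => (φ22 a y * φ11 a z - φ21 a y * φ12 a z)
        / (φ11 a z * φ22 a z - φ12 a z * φ21 a z)) (Icc a b') :=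
      ((continuousOn_const.mul ca11).sub (continuousOn_const.mul ca12)).div
        ((ca11.mul ca22).sub (ca12.mul ca21)) (fun z hz => detne a haJ z hz)
    refine hc.congr (fun z hz => ?_)
    rw [eq_div_iff (detne a haJ z hz)]
    exact inv22 z hz y hy
  have gII12 : ∀ y ∈ Icc a b', ∀ p ∈ Icc a b', ∀ q ∈ Icc a b',
      IntervalIntegrable (fun z => 2 * Prof z / σ z ^ 2 * φ12 z y) volume p q :=
    fun y hy p hp q hq => mul_int' hgJ (contz12 y hy) hp hq
  have gII22 : ∀ y ∈ Icc a b', ∀ p ∈ Icc a b', ∀ q ∈ Icc a b',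
      IntervalIntegrable (fun z => 2 * Prof z / σ z ^ 2 * φ22 z y) volume p q :=
    fun y hy p hp q hq => mul_int' hgJ (contz22 y hy) hp hq
  -- boundary values
  have vzero : ∀ p ∈ Icc a b', ∀ q ∈ Icc a b', p < q → vab p q q = 0 ∧ vab p q p = 0 := by
    intro p hp q hq hpq
    have hposq := hφpos p (hJI hp) q (hJI hq) hpq
    constructor
    · rw [hvab p q q, div_mul_cancel₀ _ (ne_of_gt hposq)]
      exact sub_self _
    · rw [hvab p q p, (diag p hp).2.2.1, intervalIntegral.integral_same]
      ring
  -- main constants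
  set Cb' : ℝ := (∫ z in a..b', 2 * Prof z / σ z ^ 2 * φ12 z b') / φ12 a b' with hCb'
  set Cb : ℝ := (∫ z in a..b, 2 * Prof z / σ z ^ 2 * φ12 z b) / φ12 a b with hCb
  set Ca : ℝ := (∫ z in a'..b', 2 * Prof z / σ z ^ 2 * φ12 z b') / φ12 a' b' with hCa
  set m1 : ℝ := ∫ z in a..a', 2 * Prof z / σ z ^ 2 * φ12 z a' with hm1
  set m2 : ℝ := ∫ z in a..a', 2 * Prof z / σ z ^ 2 * φ22 z a' with hm2
  have hstep1 : ∀ x : ℝ, vab a b' x - vab a b x = (Cb' - Cb) * φ12 a x := by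
    intro x
    rw [hvab a b' x, hvab a b x, hCb', hCb]
    ring
  have hstep2 : ∀ x ∈ Icc a b', vab a b' x - vab a' b' x
      = (Cb' * φ12 a a' - m1) * φ11 a' x + (Cb' * φ22 a a' - Ca - m2) * φ12 a' x := by
    intro x hx
    have hsplit : (∫ z in a..x, 2 * Prof z / σ z ^ 2 * φ12 z x)
        = (∫ z in a..a', 2 * Prof z / σ z ^ 2 * φ12 z x)
          + ∫ z in a'..x, 2 * Prof z / σ z ^ 2 * φ12 z x :=
      (integral_add_adjacent_intervals (gII12 x hx a haJ a' ha'J)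
        (gII12 x hx a' ha'J x hx)).symm
    have hcc := ((cocy a haJ a' ha'J x hx).2).1
    have hintc : (∫ z in a..a', 2 * Prof z / σ z ^ 2 * φ12 z x)
        = m1 * φ11 a' x + m2 * φ12 a' x := by
      have hcong : EqOn (fun z => 2 * Prof z / σ z ^ 2 * φ12 z x)
          (fun z => (2 * Prof z / σ z ^ 2 * φ12 z a') * φ11 a' x
            + (2 * Prof z / σ z ^ 2 * φ22 z a') * φ12 a' x) (uIcc a a') := by
        intro z hz
        have hzJ : z ∈ Icc a b' := by
          rw [uIcc_of_le h1.le] at hz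
          exact ⟨hz.1, le_trans hz.2 (by linarith)⟩
        have hzc := ((cocy z hzJ a' ha'J x hx).2).1
        show 2 * Prof z / σ z ^ 2 * φ12 z x = _
        rw [hzc]; ring
      rw [integral_congr hcong,
        integral_add ((gII12 a' ha'J a haJ a' ha'J).mul_const _)
          ((gII22 a' ha'J a haJ a' ha'J).mul_const _),
        intervalIntegral.integral_mul_const, intervalIntegral.integral_mul_const, hm1, hm2]
    rw [hvab a b' x, hvab a' b' x, hsplit, hintc, hcc, hCb', hCa, hm1, hm2]
    ring
  -- zero boundary values
  have v0ab' := vzero a haJ b' hb'J (by linarith)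
  have v0a'b' := vzero a' ha'J b' hb'J (by linarith)
  have v0ab := vzero a haJ b hbJ (by linarith)
  have hq' : (0:ℝ) < φ12 a' b' := hφpos a' ha' b' hb' (by linarith)
  have hPab : (0:ℝ) < φ12 a b := hφpos a ha b hb (by linarith)
  have hRaa' : (0:ℝ) < φ12 a a' := hφpos a ha a' ha' h1
  have eq0 : (Cb' * φ12 a a' - m1) * φ11 a' b' + (Cb' * φ22 a a' - Ca - m2) * φ12 a' b' = 0 := by
    have hs := hstep2 b' hb'J
    rw [v0ab'.1, v0a'b'.1] at hs
    linarith
  set c2 : ℝ := (Cb' * φ12 a a' - m1) / φ12 a' b' with hc2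
  set ψ : ℝ → ℝ := fun t => φ12 a' b' * φ11 a' t - φ11 a' b' * φ12 a' t with hψ
  have hpsi : ∀ x ∈ Icc a b', vab a b' x - vab a' b' x = c2 * ψ x := by
    intro x hx
    rw [hstep2 x hx]
    have hunf : c2 * ψ x = (Cb' * φ12 a a' - m1) / φ12 a' b'
        * (φ12 a' b' * φ11 a' x - φ11 a' b' * φ12 a' x) := rfl
    rw [hunf]
    field_simp
    linear_combination (φ12 a' x) * eq0
  have hψa' : ψ a' = φ12 a' b' := by
    obtain ⟨d1, d2, d3, d4⟩ := diag a' ha'J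
    show φ12 a' b' * φ11 a' a' - φ11 a' b' * φ12 a' a' = φ12 a' b'
    rw [d1, d3]; ring
  have hψpos : ∀ x ∈ Icc a b', x < b' → 0 < ψ x := by
    intro x hx hxb
    have cI := ((cocy a' ha'J x hx b' hb'J).1).1
    have cIII := ((cocy a' ha'J x hx b' hb'J).2).1
    have hform : ψ x = φ12 x b' * (φ11 a' x * φ22 a' x - φ12 a' x * φ21 a' x) := by
      show φ12 a' b' * φ11 a' x - φ11 a' b' * φ12 a' x = _
      linear_combination (φ11 a' x) * cIII - (φ12 a' x) * cI
    rw [hform]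
    exact mul_pos (hφpos x (hJI hx) b' hb' hxb) (detpos a' ha'J x hx)
  have p1pos := hpos1 a' ⟨h1, h2⟩
  have p2pos := hpos2 b ⟨h2, h3⟩
  have eqb : (Cb' - Cb) * φ12 a b - c2 * ψ b = vab a' b' b := by
    have e1 := hstep1 b
    have e2 := hpsi b hbJ
    rw [v0ab.1] at e1
    linarith
  have eqa' : c2 * ψ a' - (Cb' - Cb) * φ12 a a' = vab a b a' := by
    have e1 := hstep1 a'
    have e2 := hpsi a' ha'J
    rw [v0a'b'.2] at e2
    linarith
  have hDid : φ12 a b * ψ a' - φ12 a a' * ψ b = φ12 a' b * φ12 a b' := by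
    have cc1 := ((cocy a haJ a' ha'J b hbJ).2).1
    have cc2 := ((cocy a haJ a' ha'J b' hb'J).2).1
    rw [hψa']
    show φ12 a b * φ12 a' b'
        - φ12 a a' * (φ12 a' b' * φ11 a' b - φ11 a' b' * φ12 a' b) = _
    linear_combination (φ12 a' b') * cc1 - (φ12 a' b) * cc2
  have hDpos : 0 < φ12 a' b * φ12 a b' :=
    mul_pos (hφpos a' ha' b hb h2) (hφpos a ha b' hb' (by linarith))
  have hψb : 0 < ψ b := hψpos b hbJ h3
  have hψa'pos : 0 < ψ a' := by rw [hψa']; exact hq'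
  have hDD : (Cb' - Cb) * (φ12 a' b * φ12 a b')
      = vab a' b' b * ψ a' + vab a b a' * ψ b := by
    linear_combination (ψ a') * eqb + (ψ b) * eqa' - (Cb' - Cb) * hDid
  have hcD : c2 * (φ12 a' b * φ12 a b')
      = vab a b a' * φ12 a b + vab a' b' b * φ12 a a' := by
    linear_combination (φ12 a b) * eqa' + (φ12 a a') * eqb - c2 * hDid
  have hΔpos : 0 < Cb' - Cb := by
    have hnum : 0 < vab a' b' b * ψ a' + vab a b a' * ψ b :=
      add_pos (mul_pos p2pos hψa'pos) (mul_pos p1pos hψb)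
    rw [← hDD] at hnum
    rcases mul_pos_iff.1 hnum with ⟨hh, _⟩ | ⟨_, hh⟩
    · exact hh
    · linarith
  have hcpos : 0 < c2 := by
    have hnum : 0 < vab a b a' * φ12 a b + vab a' b' b * φ12 a a' :=
      add_pos (mul_pos p1pos hPab) (mul_pos p2pos hRaa')
    rw [← hcD] at hnum
    rcases mul_pos_iff.1 hnum with ⟨hh, _⟩ | ⟨_, hh⟩
    · exact hh
    · linarith
  intro x hx
  have hxJ : x ∈ Icc a b' := ⟨hx.1.le, hx.2.le⟩
  have d1 := hstep1 x
  have d2 := hpsi x hxJ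
  have hφax : 0 < φ12 a x := hφpos a ha x (hJI hxJ) hx.1
  have hψx : 0 < ψ x := hψpos x hxJ hx.2
  have g1 : vab a b x < vab a b' x := by
    have hp := mul_pos hΔpos hφax
    linarith [d1]
  have g2 : vab a' b' x < vab a b' x := by
    have hp := mul_pos hcpos hψx
    linarith [d2]
  refine ⟨max_lt g1 g2, ?_⟩
  rcases lt_or_ge x b with h' | h'
  · exact lt_trans (hpos1 x ⟨hx.1, h'⟩) g1
  · exact lt_trans (hpos2 x ⟨lt_of_lt_of_le h2 h', hx.2⟩) g2
end
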